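/- arXiv:1501.07762 — 9 statements merged into one kernel-verified Lean document; each statement's English description precedes it below -/
import Mathlib

section
/- Let X = A *_C B be the amalgamated free product of groups A and B over a common subgroup C. Then every element of finite order in X is conjugate in X to an element of the image of A or to an element of the image of B. -/
/-- The two-element family of groups `A` (at `true`) and `B` (at `false`),
used to express the amalgamated free product `A *_C B` as a pushout. -/
def AmalgamFam (A B : Type) : Bool → Type
  | true => A
  | false => B

instance AmalgamFam.group (A B : Type) [Group A] [Group B] :
    (i : Bool) → Group (AmalgamFam A B i)
  | true => inferInstanceAs (Group A)
  | false => inferInstanceAs (Group B)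

/-- The pair of homomorphisms `ιA : C →* A`, `ιB : C →* B` as a family. -/
def amalgamMaps {A B C : Type} [Group A] [Group B] [Group C]
    (ιA : C →* A) (ιB : C →* B) : (i : Bool) → C →* AmalgamFam A B i
  | true => ιA
  | false => ιB

/-- The amalgamated free product `A *_C B`, i.e. the pushout of `ιA` and `ιB`. -/
def Amalgam {A B C : Type} [Group A] [Group B] [Group C]
    (ιA : C →* A) (ιB : C →* B) : Type :=
  Monoid.PushoutI (amalgamMaps ιA ιB)

instance {A B C : Type} [Group A] [Group B] [Group C] (ιA : C →* A) (ιB : C →* B) :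
    Group (Amalgam ιA ιB) :=
  inferInstanceAs (Group (Monoid.PushoutI _))

/-- The canonical homomorphism `A →* A *_C B`. -/
def Amalgam.inA {A B C : Type} [Group A] [Group B] [Group C]
    (ιA : C →* A) (ιB : C →* B) : A →* Amalgam ιA ιB :=
  Monoid.PushoutI.of (φ := amalgamMaps ιA ιB) true

/-- The canonical homomorphism `B →* A *_C B`. -/
def Amalgam.inB {A B C : Type} [Group A] [Group B] [Group C]
    (ιA : C →* A) (ιB : C →* B) : B →* Amalgam ιA ιB :=
  Monoid.PushoutI.of (φ := amalgamMaps ιA ιB) false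

/-- The canonical homomorphism `C →* A *_C B`. -/
def Amalgam.inC {A B C : Type} [Group A] [Group B] [Group C]
    (ιA : C →* A) (ιB : C →* B) : C →* Amalgam ιA ιB :=
  (Amalgam.inA ιA ιB).comp ιA


namespace AmalgamTorsionAux
open Monoid Function

variable {ι : Type*} {G : ι → Type*} {H : Type*} [∀ i, Group (G i)] [Group H]
  {φ : ∀ i, H →* G i}


variable {ι : Type*} {G : ι → Type*} {H : Type*} [∀ i, Group (G i)] [Group H]
  {φ : ∀ i, H →* G i}

theorem mem_toList_replaceHead {i j : ι} (x : G i) (hx : x ≠ 1) (w : CoprodI.NeWord G i j) :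
    ∀ l ∈ (CoprodI.NeWord.replaceHead x hx w).toList, l = ⟨i, x⟩ ∨ l ∈ w.toList := by
  induction w with
  | singleton y hy =>
    intro l hl
    simp only [CoprodI.NeWord.replaceHead, CoprodI.NeWord.toList, List.mem_singleton] at hl
    exact Or.inl hl
  | append w₁ hne w₂ ih₁ ih₂ =>
    intro l hl
    simp only [CoprodI.NeWord.replaceHead, CoprodI.NeWord.toList, List.mem_append] at hl ⊢
    rcases hl with hl | hl
    · rcases ih₁ x hx l hl with h | h
      · exact Or.inl h
      · exact Or.inr (Or.inl h)
    · exact Or.inr (Or.inr hl)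

/-- `n+1`-fold power of a nonempty word with distinct end indices. -/
def powNeWord {i j : ι} (hji : j ≠ i) (w : CoprodI.NeWord G i j) : ℕ → CoprodI.NeWord G i j
  | 0 => w
  | n+1 => CoprodI.NeWord.append w hji (powNeWord hji w n)

theorem powNeWord_prod {i j : ι} (hji : j ≠ i) (w : CoprodI.NeWord G i j) (n : ℕ) :
    (powNeWord hji w n).prod = w.prod ^ (n + 1) := by
  induction n with
  | zero => simp [powNeWord]
  | succ n ih => rw [powNeWord, CoprodI.NeWord.append_prod, ih, ← pow_succ']

theorem powNeWord_toList_subset {i j : ι} (hji : j ≠ i) (w : CoprodI.NeWord G i j) (n : ℕ) :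
    ∀ l ∈ (powNeWord hji w n).toList, l ∈ w.toList := by
  induction n with
  | zero => exact fun l hl => hl
  | succ n ih =>
    intro l hl
    simp only [powNeWord, CoprodI.NeWord.toList, List.mem_append] at hl
    exact hl.elim id (ih l)

theorem not_isOfFinOrder_pushout (hφ : ∀ i, Injective (φ i)) {i j : ι} (hij : i ≠ j)
    (w : CoprodI.NeWord G i j) (hred : ∀ l ∈ w.toList, l.2 ∉ (φ l.1).range) :
    ¬ IsOfFinOrder (PushoutI.ofCoprodI (φ := φ) w.prod) := by
  intro hfin
  obtain ⟨n, hn, h1⟩ := hfin.exists_pow_eq_one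
  obtain ⟨m, rfl⟩ : ∃ m, n = m + 1 := ⟨n - 1, (Nat.succ_pred_eq_of_pos hn).symm⟩
  set u := powNeWord hij.symm w m with hu
  have hredu : PushoutI.Reduced φ u.toWord := by
    intro l hl
    exact hred l (powNeWord_toList_subset hij.symm w m l hl)
  have hmem : PushoutI.ofCoprodI (φ := φ) u.toWord.prod ∈ (PushoutI.base φ).range := by
    have : u.toWord.prod = w.prod ^ (m + 1) := powNeWord_prod hij.symm w m
    rw [this, map_pow, h1]
    exact one_mem _
  have := hredu.eq_empty_of_mem_range hφ hmem
  have h2 : u.toWord.toList = [] := by rw [this]; rfl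
  exact u.toList_ne_nil h2



variable {ι : Type*} {G : ι → Type*} {H : Type*} [∀ i, Group (G i)] [Group H]
  {φ : ∀ i, H →* G i}

theorem small_case [Nonempty ι] (h : H) (w : CoprodI.Word G) (hlen : w.toList.length ≤ 1) :
    ∃ i : ι, PushoutI.base φ h * PushoutI.ofCoprodI (φ := φ) w.prod ∈
      (PushoutI.of (φ := φ) i).range := by
  match hl : w.toList with
  | [] =>
    have hp : w.prod = 1 := by simp [CoprodI.Word.prod, hl]
    refine ⟨Classical.arbitrary ι, ?_⟩
    rw [hp, map_one, mul_one, ← PushoutI.of_apply_eq_base φ (Classical.arbitrary ι) h]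
    exact ⟨_, rfl⟩
  | [⟨i, g⟩] =>
    have hp : w.prod = CoprodI.of g := by simp [CoprodI.Word.prod, hl]
    refine ⟨i, ?_⟩
    rw [hp, PushoutI.ofCoprodI_of, ← PushoutI.of_apply_eq_base φ i h, ← map_mul]
    exact ⟨_, rfl⟩
  | l₁ :: l₂ :: t => simp [hl] at hlen

theorem conj_isOfFinOrder {K : Type*} [Group K] {x : K} (c : K) (hx : IsOfFinOrder x) :
    IsOfFinOrder (c * x * c⁻¹) := by
  have := (MulAut.conj c).toMonoidHom.isOfFinOrder hx
  simpa [MulAut.conj] using this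

theorem main_aux [Nonempty ι] (hφ : ∀ i, Injective (φ i)) :
    ∀ (n : ℕ) (h : H) (w : CoprodI.Word G),
    (∀ l ∈ w.toList, l.2 ∉ (φ l.1).range) → w.toList.length ≤ n →
    IsOfFinOrder (PushoutI.base φ h * PushoutI.ofCoprodI (φ := φ) w.prod) →
    ∃ (g : PushoutI φ) (i : ι),
      g * (PushoutI.base φ h * PushoutI.ofCoprodI (φ := φ) w.prod) * g⁻¹ ∈
        (PushoutI.of (φ := φ) i).range := by
  intro n
  induction n with
  | zero =>
    intro h w hred hlen _
    obtain ⟨i, hi⟩ := small_case h w (hlen.trans (by norm_num))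
    exact ⟨1, i, by simpa using hi⟩
  | succ n ih =>
    intro h w hred hlen hfin
    by_cases hsmall : w.toList.length ≤ 1
    · obtain ⟨i, hi⟩ := small_case h w hsmall
      exact ⟨1, i, by simpa using hi⟩
    rcases hl : w.toList with _ | ⟨⟨i, g⟩, t⟩
    · rw [hl] at hsmall; simp at hsmall
    have ht : t ≠ [] := by
      intro he
      rw [hl, he] at hsmall
      simp at hsmall
    rcases hlst : t.getLast ht with ⟨j, g'⟩
    have hchain : List.Chain' (fun l l' : (Σ k, G k) => l.1 ≠ l'.1) (⟨i, g⟩ :: t) := by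
      rw [← hl]; exact w.chain_ne
    have hne1 : ∀ l ∈ (⟨i, g⟩ : Σ k, G k) :: t, Sigma.snd l ≠ 1 := by
      intro l hm; exact w.ne_one l (by rw [hl]; exact hm)
    have hred' : ∀ l ∈ (⟨i, g⟩ : Σ k, G k) :: t, Sigma.snd l ∉ (φ l.1).range := by
      intro l hm; exact hred l (by rw [hl]; exact hm)
    have hlt : t.length ≤ n := by
      have := hlen; rw [hl] at this; simpa using this
    by_cases hij : i = j
    · -- first and last index equal: conjugate to something shorter
      subst hij
      have ht' : t = t.dropLast ++ [⟨i, g'⟩] := by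
        conv_lhs => rw [← List.dropLast_append_getLast ht, hlst]
      -- the word u = t and v = t.dropLast
      let u : CoprodI.Word G := ⟨t, fun l hm => hne1 l (List.mem_cons_of_mem _ hm), hchain.tail⟩
      let v : CoprodI.Word G := ⟨t.dropLast,
        fun l hm => hne1 l (List.mem_cons_of_mem _ ((List.dropLast_sublist t).subset hm)),
        hchain.tail.prefix (List.dropLast_prefix t)⟩
      have hbound : ∀ x ∈ t.dropLast.getLast?, x.1 ≠ i := by
        have h2 : List.Chain' (fun l l' : (Σ k, G k) => l.1 ≠ l'.1)
            (t.dropLast ++ [⟨i, g'⟩]) := by rw [← ht']; exact hchain.tail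
        intro x hx
        exact (List.isChain_append.1 h2).2.2 x hx ⟨i, g'⟩ rfl
      have hwp : w.prod = CoprodI.of g * u.prod := by
        rw [CoprodI.Word.prod, CoprodI.Word.prod, hl]; simp [u]
      have hup : u.prod = v.prod * CoprodI.of g' := by
        rw [CoprodI.Word.prod, CoprodI.Word.prod,
          show u.toList = v.toList ++ [⟨i, g'⟩] from ht']
        simp
      set a := g' * (φ i h * g) with ha_def
      set c := PushoutI.base φ h * PushoutI.of (φ := φ) i g with hc_def
      set x := PushoutI.base φ h * PushoutI.ofCoprodI (φ := φ) w.prod with hx_def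
      have hxc : x = c * PushoutI.ofCoprodI (φ := φ) u.prod := by
        rw [hx_def, hc_def, hwp, map_mul, PushoutI.ofCoprodI_of, mul_assoc]
      have hy : c⁻¹ * x * c
          = PushoutI.ofCoprodI (φ := φ) v.prod * PushoutI.of (φ := φ) i a := by
        rw [hxc, inv_mul_cancel_left, hup, map_mul, PushoutI.ofCoprodI_of, mul_assoc]
        congr 1
        rw [hc_def, show PushoutI.base φ h = PushoutI.of (φ := φ) i (φ i h) from
          (PushoutI.of_apply_eq_base φ i h).symm, ← map_mul, ← map_mul]
      have hfin_y : IsOfFinOrder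
          (PushoutI.ofCoprodI (φ := φ) v.prod * PushoutI.of (φ := φ) i a) := by
        rw [← hy]
        have := conj_isOfFinOrder c⁻¹ hfin
        simpa using this
      by_cases ha : a ∈ (φ i).range
      · obtain ⟨h', hh'⟩ := ha
        have hofa : PushoutI.of (φ := φ) i a = PushoutI.base φ h' := by
          rw [← hh', PushoutI.of_apply_eq_base]
        have hz : PushoutI.base φ h' * PushoutI.ofCoprodI (φ := φ) v.prod
            = (PushoutI.base φ h') *
              (PushoutI.ofCoprodI (φ := φ) v.prod * PushoutI.of (φ := φ) i a) *
              (PushoutI.base φ h')⁻¹ := by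
          rw [hofa]; group
        obtain ⟨g₂, i₂, hg₂⟩ := ih h' v
          (fun l hm => hred' l (List.mem_cons_of_mem _ ((List.dropLast_sublist t).subset hm)))
          (by
            have : v.toList.length = t.dropLast.length := rfl
            rw [this, List.length_dropLast]; omega)
          (by rw [hz]; exact conj_isOfFinOrder _ hfin_y)
        refine ⟨g₂ * PushoutI.base φ h' * c⁻¹, i₂, ?_⟩
        have key : (g₂ * PushoutI.base φ h' * c⁻¹) * x * (g₂ * PushoutI.base φ h' * c⁻¹)⁻¹
            = g₂ * (PushoutI.base φ h' * (c⁻¹ * x * c) * (PushoutI.base φ h')⁻¹) * g₂⁻¹ := by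
          group
        rw [key, hy, ← hz]
        exact hg₂
      · have hane : a ≠ 1 := fun he => ha (he ▸ ⟨1, map_one _⟩)
        let v' : CoprodI.Word G := ⟨v.toList ++ [⟨i, a⟩],
          by
            intro l hm
            rcases List.mem_append.1 hm with hm | hm
            · exact v.ne_one l hm
            · rw [List.mem_singleton] at hm; subst hm; exact hane,
          List.isChain_append.2 ⟨v.chain_ne, List.isChain_singleton _,
            by
              intro x hx y hy'
              simp only [List.head?_cons, Option.mem_some_iff] at hy'
              subst hy'
              exact hbound x hx⟩⟩
        have hv'p : v'.prod = v.prod * CoprodI.of a := by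
          rw [CoprodI.Word.prod, CoprodI.Word.prod,
            show v'.toList = v.toList ++ [⟨i, a⟩] from rfl]
          simp
        have hy2 : PushoutI.base φ (1 : H) * PushoutI.ofCoprodI (φ := φ) v'.prod
            = PushoutI.ofCoprodI (φ := φ) v.prod * PushoutI.of (φ := φ) i a := by
          rw [map_one, one_mul, hv'p, map_mul, PushoutI.ofCoprodI_of]
        obtain ⟨g₂, i₂, hg₂⟩ := ih 1 v'
          (by
            intro l hm
            rcases List.mem_append.1 hm with hm | hm
            · exact hred' l (List.mem_cons_of_mem _ ((List.dropLast_sublist t).subset hm))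
            · rw [List.mem_singleton] at hm; subst hm; exact ha)
          (by
            have : v'.toList.length = t.dropLast.length + 1 := by
              simp [v', v]
            rw [this, List.length_dropLast]; omega)
          (by rw [hy2]; exact hfin_y)
        rw [hy2] at hg₂
        refine ⟨g₂ * c⁻¹, i₂, ?_⟩
        have key : (g₂ * c⁻¹) * x * (g₂ * c⁻¹)⁻¹ = g₂ * (c⁻¹ * x * c) * g₂⁻¹ := by group
        rw [key, hy]
        exact hg₂
    · -- first and last index different: infinite order, contradiction
      exfalso
      have hwne : w ≠ CoprodI.Word.empty := by
        intro he; rw [he] at hl; simp [CoprodI.Word.empty] at hl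
      obtain ⟨i', j', w', hw'⟩ := CoprodI.NeWord.of_word w hwne
      have hlist : w'.toList = w.toList := congrArg CoprodI.Word.toList hw'
      have hhead : (⟨i', w'.head⟩ : Σ k, G k) = ⟨i, g⟩ := by
        have := w'.toList_head?
        rw [hlist, hl, List.head?_cons] at this
        exact (Option.some.inj this).symm
      obtain ⟨rfl, hg⟩ : i' = i ∧ HEq w'.head g := by
        injection hhead with h1 h2
        exact ⟨h1, h2⟩
      have hg : w'.head = g := eq_of_heq hg
      have hlast : (⟨j', w'.last⟩ : Σ k, G k) = ⟨j, g'⟩ := by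
        have h2 := w'.toList_getLast?
        rw [hlist, hl, List.getLast?_eq_getLast (List.cons_ne_nil _ _),
          List.getLast_cons ht, hlst] at h2
        exact (Option.some.inj h2).symm
      obtain ⟨rfl, -⟩ : j' = j ∧ HEq w'.last g' := by
        injection hlast with h1 h2
        exact ⟨h1, h2⟩
      have hgr : g ∉ (φ i').range := hred' ⟨i', g⟩ List.mem_cons_self
      have hne0 : φ i' h * w'.head ≠ 1 := by
        rw [hg]
        intro he
        exact hgr ⟨h⁻¹, by rw [map_inv]; exact inv_eq_of_mul_eq_one_right he⟩
      have hprodeq : w'.prod = w.prod := congrArg CoprodI.Word.prod hw'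
      refine not_isOfFinOrder_pushout hφ hij (w'.mulHead (φ i' h) hne0) ?_ ?_
      · intro l hl'
        rcases mem_toList_replaceHead (φ i' h * w'.head) hne0 w' l hl' with rfl | hmem
        · rw [hg]
          rintro ⟨cc, hcc⟩
          exact hgr ⟨h⁻¹ * cc, by rw [map_mul, map_inv, hcc]; group⟩
        · exact hred l (hlist ▸ hmem)
      · rw [CoprodI.NeWord.mulHead_prod, map_mul, PushoutI.ofCoprodI_of,
          PushoutI.of_apply_eq_base, hprodeq]
        exact hfin


theorem exists_conj [Nonempty ι] (hφ : ∀ i, Injective (φ i))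
    (x : PushoutI φ) (hx : IsOfFinOrder x) :
    ∃ (g : PushoutI φ) (i : ι), g * x * g⁻¹ ∈ (PushoutI.of (φ := φ) i).range := by
  classical
  obtain ⟨d⟩ := Monoid.PushoutI.NormalWord.transversal_nonempty φ hφ
  set w := PushoutI.NormalWord.equiv (d := d) x with hwdef
  have hxw : w.prod = x := (Monoid.PushoutI.NormalWord.equiv (d := d)).symm_apply_apply x
  have hred : ∀ l ∈ w.toWord.toList, Sigma.snd l ∉ (φ l.1).range := by
    intro l hl hr
    have hset : l.2 ∈ d.set l.1 := w.normalized l.1 l.2 (by rw [Sigma.eta]; exact hl)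
    have hne : l.2 ≠ 1 := w.ne_one l hl
    have huniq := (d.compl l.1).existsUnique l.2
    have h1 : ((⟨⟨l.2, hr⟩, ⟨1, d.one_mem l.1⟩⟩ :
        ((φ l.1).range : Set (G l.1)) × (d.set l.1))) =
        ⟨⟨1, Subgroup.one_mem _⟩, ⟨l.2, hset⟩⟩ :=
      huniq.unique (by simp) (by simp)
    have : (1 : G l.1) = l.2 := congrArg (fun p => (p.2 : G l.1)) h1
    exact hne this.symm
  have hprod : w.prod = PushoutI.base φ w.head * PushoutI.ofCoprodI (φ := φ) w.toWord.prod := rfl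
  obtain ⟨g, i, hg⟩ := main_aux hφ w.toWord.toList.length w.head w.toWord hred le_rfl
    (by rw [← hprod, hxw]; exact hx)
  refine ⟨g, i, ?_⟩
  rw [← hxw, hprod]
  exact hg


end AmalgamTorsionAux

/-- In the amalgamated free product `X = A *_C B`, every element of finite order
is conjugate in `X` to an element of the image of `A` or to an element of the
image of `B`. -/

theorem amalgam_isOfFinOrder_conj_mem_factor
    {A B C : Type} [Group A] [Group B] [Group C]
    (ιA : C →* A) (ιB : C →* B)
    (hιA : Function.Injective ιA) (hιB : Function.Injective ιB)
    (x : Amalgam ιA ιB) (hx : IsOfFinOrder x) :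
    ∃ g : Amalgam ιA ιB,
      g * x * g⁻¹ ∈ (Amalgam.inA ιA ιB).range ∨
      g * x * g⁻¹ ∈ (Amalgam.inB ιA ιB).range := by
  have hφ : ∀ i : Bool, Function.Injective ⇑(amalgamMaps ιA ιB i) := by
    intro i
    cases i
    · exact hιB
    · exact hιA
  obtain ⟨g, i, hg⟩ := AmalgamTorsionAux.exists_conj hφ x hx
  cases i
  · exact ⟨g, Or.inr hg⟩
  · exact ⟨g, Or.inl hg⟩
end

section
/- Every proper normal subgroup N of X is torsion-free, i.e. contains no element of finite order other than the identity; equivalently, if a normal subgroup N of X contains an element of order p or an element of order q, then N = X. -/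
open Monoid Monoid.PushoutI

namespace AmalgamAux

variable {ι : Type*} {G : ι → Type*} [∀ i, Group (G i)] {H : Type*} [Group H]
  (φ : ∀ i, H →* G i)

/-- product of a list of letters in the pushout -/
def prodL (L : List (Σ i, G i)) : PushoutI φ :=
  (L.map fun p => of (φ := φ) p.1 p.2).prod

@[simp] lemma prodL_nil : prodL φ [] = 1 := rfl

@[simp] lemma prodL_cons (a : Σ i, G i) (L : List (Σ i, G i)) :
    prodL φ (a :: L) = of a.1 a.2 * prodL φ L := by
  simp [prodL]

lemma prodL_append (L₁ L₂ : List (Σ i, G i)) :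
    prodL φ (L₁ ++ L₂) = prodL φ L₁ * prodL φ L₂ := by
  simp [prodL]

lemma exists_list [Nonempty ι] (x : PushoutI φ) : ∃ L, prodL φ L = x := by
  induction x using PushoutI.induction_on with
  | of i g => exact ⟨[⟨i, g⟩], by simp⟩
  | base h =>
      refine ⟨[⟨Classical.arbitrary ι, φ _ h⟩], ?_⟩
      simp [of_apply_eq_base]
  | mul x y hx hy =>
      obtain ⟨L₁, rfl⟩ := hx
      obtain ⟨L₂, rfl⟩ := hy
      exact ⟨L₁ ++ L₂, prodL_append φ L₁ L₂⟩

/-- A normalized list: no letter lies in the image of the base group, and adjacent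
letters have distinct indices. -/
def Norm (L : List (Σ i, G i)) : Prop :=
  (∀ l ∈ L, l.2 ∉ (φ l.1).range) ∧ L.Chain' (fun a b => a.1 ≠ b.1)

lemma consNorm : ∀ (n : ℕ) (M : List (Σ i, G i)), M.length ≤ n →
    (M.length ≤ 1 ∨ Norm φ M) → ∀ a : (Σ i, G i),
    ∃ L', prodL φ L' = of a.1 a.2 * prodL φ M ∧ L'.length ≤ M.length + 1 ∧
      (L'.length ≤ 1 ∨ Norm φ L') := by
  intro n
  induction n with
  | zero =>
      intro M hlen _ a
      have hM : M = [] := List.eq_nil_of_length_eq_zero (Nat.le_zero.mp hlen)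
      subst hM
      exact ⟨[a], by simp, by simp, Or.inl (by simp)⟩
  | succ n ih =>
      intro M hlen hD a
      match M, hD with
      | [], _ => exact ⟨[a], by simp, by simp, Or.inl (by simp)⟩
      | ⟨j, b⟩ :: T, hD =>
        obtain ⟨i, g⟩ := a
        by_cases hg : g ∈ (φ i).range
        · obtain ⟨h, rfl⟩ := hg
          refine ⟨⟨j, φ j h * b⟩ :: T, ?_, by simp, ?_⟩
          · rw [prodL_cons, prodL_cons, ← mul_assoc, map_mul,
              of_apply_eq_base φ i h, of_apply_eq_base φ j h]
          · rcases hD with hD | hD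
            · left; simpa using hD
            · right
              obtain ⟨hr, hc⟩ := hD
              refine ⟨?_, ?_⟩
              · intro l hl
                rcases List.mem_cons.mp hl with rfl | hl
                · intro ⟨y, hy⟩
                  refine hr ⟨j, b⟩ List.mem_cons_self ?_
                  exact ⟨h⁻¹ * y, by rw [map_mul, map_inv, hy]; group⟩
                · exact hr l (List.mem_cons_of_mem _ hl)
              · unfold List.Chain' at hc ⊢
                rw [List.isChain_cons] at hc ⊢
                exact ⟨hc.1, hc.2⟩
        · by_cases hij : i = j
          · subst hij
            have hT : T.length ≤ 1 ∨ Norm φ T := by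
              rcases hD with hD | hD
              · left; simp only [List.length_cons] at hD; omega
              · right
                exact ⟨fun l hl => hD.1 l (List.mem_cons_of_mem _ hl), hD.2.tail⟩
            have hTn : T.length ≤ n := by
              simp only [List.length_cons] at hlen; omega
            obtain ⟨L', h1, h2, h3⟩ := ih T hTn hT ⟨i, g * b⟩
            refine ⟨L', ?_, ?_, h3⟩
            · rw [h1]; simp [mul_assoc]
            · simpa using Nat.le_succ_of_le h2
          · by_cases hb : b ∈ (φ j).range
            · have hT : T = [] := by
                rcases hD with hD | hD
                · simpa using hD
                · exact absurd hb (hD.1 ⟨j, b⟩ List.mem_cons_self)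
              subst hT
              obtain ⟨h, rfl⟩ := hb
              refine ⟨[⟨i, g * φ i h⟩], ?_, by simp, Or.inl (by simp)⟩
              simp only [prodL_cons, prodL_nil, mul_one, map_mul]
              rw [of_apply_eq_base φ i h, of_apply_eq_base φ j h]
            · refine ⟨⟨i, g⟩ :: ⟨j, b⟩ :: T, rfl, by simp, Or.inr ?_⟩
              have hc : (⟨j, b⟩ :: T : List (Σ i, G i)).Chain' (fun a b => a.1 ≠ b.1) := by
                rcases hD with hD | hD
                · have : T = [] := by simpa using hD
                  subst this; exact List.isChain_singleton _
                · exact hD.2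
              refine ⟨?_, hc.cons ?_⟩
              · intro l hl
                rcases List.mem_cons.mp hl with rfl | hl
                · exact hg
                rcases List.mem_cons.mp hl with rfl | hl
                · exact hb
                · rcases hD with hD | hD
                  · simp at hD
                    simp [hD] at hl
                  · exact hD.1 l (List.mem_cons_of_mem _ hl)
              · intro y hy
                have hyy : (⟨j, b⟩ : Σ i, G i) = y := by simpa using hy
                rw [← hyy]
                exact hij

lemma normalize (L : List (Σ i, G i)) :
    ∃ L', prodL φ L' = prodL φ L ∧ L'.length ≤ L.length ∧
      (L'.length ≤ 1 ∨ Norm φ L') := by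
  induction L with
  | nil => exact ⟨[], rfl, le_rfl, Or.inl (by simp)⟩
  | cons a L ih =>
      obtain ⟨M, h1, h2, h3⟩ := ih
      obtain ⟨L', g1, g2, g3⟩ := consNorm φ M.length M le_rfl h3 a
      exact ⟨L', by rw [g1, h1, prodL_cons], by simpa using le_trans g2 (by omega), g3⟩

/-- powers of a list -/
def Lpow (L : List (Σ i, G i)) : ℕ → List (Σ i, G i)
  | 0 => []
  | (k+1) => L ++ Lpow L k

lemma prodL_Lpow (L : List (Σ i, G i)) (k : ℕ) :
    prodL φ (Lpow L k) = (prodL φ L) ^ k := by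
  induction k with
  | zero => simp [Lpow]
  | succ k ih => rw [Lpow, prodL_append, ih, pow_succ']

lemma length_Lpow (L : List (Σ i, G i)) (k : ℕ) :
    (Lpow L k).length = k * L.length := by
  induction k with
  | zero => simp [Lpow]
  | succ k ih => simp [Lpow, ih]; ring

lemma mem_Lpow {L : List (Σ i, G i)} {k : ℕ} {l : Σ i, G i}
    (hl : l ∈ Lpow L k) : l ∈ L := by
  induction k with
  | zero => simp [Lpow] at hl
  | succ k ih =>
      rcases List.mem_append.mp hl with h | h
      · exact h
      · exact ih h

lemma head?_Lpow {L : List (Σ i, G i)} (hL : L ≠ []) (k : ℕ) :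
    (Lpow L (k+1)).head? = L.head? := by
  obtain ⟨a, L, rfl⟩ := List.exists_cons_of_ne_nil hL
  simp [Lpow]

lemma chain_Lpow {L : List (Σ i, G i)}
    (hc : L.Chain' (fun a b => a.1 ≠ b.1))
    (hlast : ∀ x ∈ L.getLast?, ∀ y ∈ L.head?, x.1 ≠ y.1) (k : ℕ) :
    (Lpow L k).Chain' (fun a b => a.1 ≠ b.1) := by
  induction k with
  | zero => simp [Lpow]; exact List.isChain_nil
  | succ k ih =>
      rw [Lpow]; unfold List.Chain'; rw [List.isChain_append]
      refine ⟨hc, ih, ?_⟩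
      intro x hx y hy
      rcases k with _ | k
      · simp [Lpow] at hy
      · by_cases hL : L = []
        · subst hL; simp at hx
        · rw [head?_Lpow hL] at hy
          exact hlast x hx y hy

lemma ofCoprodI_prodL (L : List (Σ i, G i)) :
    ofCoprodI ((L.map fun l => CoprodI.of l.2).prod) = prodL φ L := by
  induction L with
  | nil => simp [prodL]
  | cons a L ih => simp [prodL, ih, List.prod_cons]

theorem conj_of_finOrder [Nonempty ι] (hφ : ∀ i, Function.Injective (φ i))
    (x : PushoutI φ) (hx : IsOfFinOrder x) :
    ∃ (g : PushoutI φ) (i : ι) (a : G i), g * x * g⁻¹ = of i a := by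
  obtain ⟨L, rfl⟩ := exists_list φ x
  suffices H : ∀ (n : ℕ) (L : List (Σ i, G i)), L.length ≤ n →
      IsOfFinOrder (prodL φ L) →
      ∃ (g : PushoutI φ) (i : ι) (a : G i), g * prodL φ L * g⁻¹ = of i a from
    H L.length L le_rfl hx
  clear hx L
  intro n
  induction n using Nat.strong_induction_on with
  | _ n ih =>
    intro L hlen hfin
    obtain ⟨L', hprod, hlen', hD⟩ := normalize φ L
    rw [← hprod] at hfin ⊢
    rcases hD with hshort | hNorm
    · -- length ≤ 1
      match L', hshort with
      | [], _ => exact ⟨1, Classical.arbitrary ι, 1, by simp⟩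
      | [a], _ => exact ⟨1, a.1, a.2, by simp⟩
    · -- length ≥ 2 handled below; length ≤ 1 also possible here, treat uniformly
      match L' with
      | [] => exact ⟨1, Classical.arbitrary ι, 1, by simp⟩
      | [a] => exact ⟨1, a.1, a.2, by simp⟩
      | ⟨i, g⟩ :: t :: T' =>
        set T : List (Σ i, G i) := t :: T' with hT
        have hTne : T ≠ [] := by simp [hT]
        by_cases he : (T.getLast hTne).1 = i
        · -- cyclic reduction
          rcases hTd : T.getLast hTne with ⟨j, bb⟩
          rw [hTd] at he
          have he2 : i = j := he.symm
          subst he2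
          have hTsplit : T.dropLast ++ [⟨i, bb⟩] = T := by
            rw [← hTd]; exact List.dropLast_append_getLast hTne
          set c : PushoutI φ := of i g with hc
          set L'' : List (Σ i, G i) := T.dropLast ++ [⟨i, bb * g⟩] with hL''
          have key : prodL φ L'' = c⁻¹ * prodL φ (⟨i, g⟩ :: T) * c⁻¹⁻¹ := by
            rw [inv_inv]
            rw [prodL_cons, ← hTsplit, prodL_append, prodL_append]
            simp only [prodL_cons, prodL_nil, mul_one, map_mul, hc]
            group
          have hfin'' : IsOfFinOrder (prodL φ L'') := by
            rw [isOfFinOrder_iff_pow_eq_one] at hfin ⊢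
            obtain ⟨m, hm0, hm1⟩ := hfin
            refine ⟨m, hm0, ?_⟩
            rw [key, conj_pow, hm1, mul_one, mul_inv_cancel]
          have hlen'' : L''.length < n := by
            have h1 : L''.length = T.length := by
              have := congrArg List.length hTsplit
              simp only [List.length_append, List.length_cons, List.length_nil] at this ⊢
              simp [hL'', List.length_append]
              omega
            have h2 : (⟨i, g⟩ :: T : List (Σ i, G i)).length ≤ n :=
              le_trans hlen' hlen
            simp only [List.length_cons] at h2
            omega
          obtain ⟨g', i', a', hga⟩ := ih L''.length hlen'' L'' le_rfl hfin''
          refine ⟨g' * c⁻¹, i', a', ?_⟩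
          rw [← hga, key]
          group
        · -- cyclically reduced: infinite order, contradiction
          exfalso
          obtain ⟨m, hm0, hm1⟩ := isOfFinOrder_iff_pow_eq_one.mp hfin
          set L0 : List (Σ i, G i) := ⟨i, g⟩ :: T with hL0
          have hL0ne : L0 ≠ [] := by simp [hL0]
          have hNR : ∀ l ∈ L0, l.2 ∉ (φ l.1).range := hNorm.1
          have hlast : ∀ x ∈ L0.getLast?, ∀ y ∈ L0.head?, x.1 ≠ y.1 := by
            intro x hx y hy
            have hgl : L0.getLast? = some (T.getLast hTne) := by
              rw [List.getLast?_eq_getLast hL0ne]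
              exact congrArg some (by simp only [hL0]; exact List.getLast_cons hTne)
            rw [hgl] at hx
            have hx' : x = T.getLast hTne := by
              have := hx
              simp only [Option.mem_def, Option.some.injEq] at this
              exact this.symm
            have hy' : y = ⟨i, g⟩ := by
              have := hy
              simp only [hL0, List.head?_cons, Option.mem_def, Option.some.injEq] at this
              exact this.symm
            subst hx'; subst hy'
            exact he
          have hchain : (Lpow L0 m).Chain' (fun a b => a.1 ≠ b.1) :=
            chain_Lpow hNorm.2 hlast m
          have hne1 : ∀ l ∈ Lpow L0 m, l.2 ≠ 1 := by
            intro l hl h1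
            exact hNR l (mem_Lpow hl) ⟨1, by rw [map_one, h1]⟩
          set w : CoprodI.Word G := ⟨Lpow L0 m, hne1, hchain⟩ with hw
          have hred : Reduced φ w := fun l hl => hNR l (mem_Lpow hl)
          have hwprod : ofCoprodI w.prod = (prodL φ L0) ^ m := by
            rw [← prodL_Lpow]
            exact ofCoprodI_prodL φ _
          have hmem : ofCoprodI w.prod ∈ (base φ).range := by
            rw [hwprod, hm1]
            exact ⟨1, map_one _⟩
          have hempty := hred.eq_empty_of_mem_range hφ hmem
          have hlen0 : (Lpow L0 m).length = 0 := by
            have := congrArg (fun w : CoprodI.Word G => w.toList.length) hempty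
            simpa [hw, CoprodI.Word.empty] using this
          rw [length_Lpow] at hlen0
          have : L0.length = 0 ∨ m = 0 := by
            rcases Nat.mul_eq_zero.mp hlen0 with h | h
            · right; exact h
            · left; exact h
          rcases this with h | h
          · simp [hL0] at h
          · omega

lemma eq_top_of_of_mem {ι : Type*} [Nonempty ι] {G : ι → Type*} [∀ i, Group (G i)]
    {H : Type*} [Group H] {φ : ∀ i, H →* G i}
    (N : Subgroup (Monoid.PushoutI φ)) (h1 : ∀ (i : ι) (g : G i), of i g ∈ N) : N = ⊤ := by
  rw [eq_top_iff]
  intro x hx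
  clear hx
  induction x using Monoid.PushoutI.induction_on with
  | of i g => exact h1 i g
  | base h =>
      rw [← of_apply_eq_base φ (Classical.arbitrary ι) h]
      exact h1 _ _
  | mul u v hu hv => exact mul_mem hu hv

end AmalgamAux


namespace AmalgamAux2

open Subgroup

lemma exists_ne_one_central {G : Type*} [Group G] [Finite G] {q : ℕ} (hq : q.Prime)
    {Q M : Subgroup G} (hQ : IsPGroup q Q) (hMn : M.Normal)
    (hMQ : M ⊓ Q ≠ ⊥) :
    ∃ w : G, w ≠ 1 ∧ w ∈ M ⊓ Q ∧ w ∈ Subgroup.centralizer (Q : Set G) := by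
  haveI : Fact q.Prime := ⟨hq⟩
  letI : SMul Q ↥(M ⊓ Q) := ⟨fun g x => ⟨(g : G) * x * (g : G)⁻¹,
    Subgroup.mem_inf.mpr ⟨hMn.conj_mem _ (Subgroup.mem_inf.mp x.2).1 _,
      mul_mem (mul_mem g.2 (Subgroup.mem_inf.mp x.2).2) (inv_mem g.2)⟩⟩⟩
  letI : MulAction Q ↥(M ⊓ Q) :=
    { one_smul := fun x => by
        apply Subtype.ext
        show ((1 : Q) : G) * x * ((1 : Q) : G)⁻¹ = x
        simp
      mul_smul := fun g h x => by
        apply Subtype.ext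
        show ((g * h : Q) : G) * x * ((g * h : Q) : G)⁻¹ =
          (g : G) * ((h : G) * x * (h : G)⁻¹) * (g : G)⁻¹
        simp [mul_assoc] }
  have hdvd : q ∣ Nat.card ↥(M ⊓ Q) := by
    obtain ⟨k, hk⟩ := IsPGroup.iff_card.mp (hQ.to_inf_right (H := M))
    rcases Nat.eq_zero_or_pos k with rfl | hk0
    · exact absurd (Subgroup.eq_bot_of_card_le _ (by rw [hk, pow_zero])) hMQ
    · rw [hk]
      exact dvd_pow_self q hk0.ne'
  have h1fix : (⟨1, one_mem _⟩ : ↥(M ⊓ Q)) ∈ MulAction.fixedPoints Q ↥(M ⊓ Q) := by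
    rw [MulAction.mem_fixedPoints]
    intro g
    apply Subtype.ext
    show (g : G) * 1 * (g : G)⁻¹ = 1
    simp
  obtain ⟨b, hbfix, hbne⟩ :=
    hQ.exists_fixed_point_of_prime_dvd_card_of_fixed_point ↥(M ⊓ Q) hdvd h1fix
  refine ⟨(b : G), ?_, b.2, ?_⟩
  · intro h
    exact hbne (Subtype.ext h.symm)
  · rw [Subgroup.mem_centralizer_iff]
    intro h hh
    have := (MulAction.mem_fixedPoints.mp hbfix) ⟨h, hh⟩
    have h2 : h * (b : G) * h⁻¹ = (b : G) := congrArg Subtype.val this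
    calc h * (b : G) = h * (b : G) * h⁻¹ * h := by group
    _ = (b : G) * h := by rw [h2]

lemma eq_of_le_prime {G : Type*} [Group G] [Finite G] {q : ℕ} (hq : q.Prime)
    {D E : Subgroup G} (hle : D ≤ E) (hE : Nat.card E = q) (hD : D ≠ ⊥) : D = E := by
  apply Subgroup.eq_of_le_of_card_ge hle
  have hdvd : Nat.card D ∣ q := hE ▸ Subgroup.card_dvd_of_le hle
  rcases (Nat.Prime.eq_one_or_self_of_dvd hq _ hdvd) with h | h
  · exact absurd (Subgroup.eq_bot_of_card_le _ (le_of_eq h)) hD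
  · rw [hE, h]

lemma side_ZQ_le {A C : Type*} [Group A] [Group C] [Finite A] {p q : ℕ}
    (hp : p.Prime) (hq : q.Prime) (hpq : p ≠ q)
    (Q : Sylow q A) (hQnormal : (Q : Subgroup A).Normal)
    (hQnonab : ¬ IsMulCommutative (Q : Subgroup A))
    (ZQ : Subgroup A)
    (hZQ : ZQ = (Q : Subgroup A) ⊓ Subgroup.centralizer ((Q : Subgroup A) : Set A))
    (hZQcard : Nat.card ZQ = q)
    (hCcard : Nat.card C = p * q)
    (ιA : C →* A) (hιA : Function.Injective ιA)
    (hAfact : ∀ a : A, ∃ u ∈ (Q : Subgroup A), ∃ c : C, a = u * ιA c)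
    (SpA : Subgroup A) (hSpA_card : Nat.card SpA = p)
    (hSpA_norm : Subgroup.normalizer (SpA : Set A) = ιA.range)
    (M : Subgroup A) (hM : M.Normal) (hMbot : M ≠ ⊥) : ZQ ≤ M := by
  haveI : Fact p.Prime := ⟨hp⟩
  haveI : Fact q.Prime := ⟨hq⟩
  by_cases hMQ : M ⊓ (Q : Subgroup A) = ⊥
  · exfalso
    -- the quotient map composed with ιA is surjective
    have hsurj : Function.Surjective ((QuotientGroup.mk' (Q : Subgroup A)).comp ιA) := by
      intro x
      induction x using QuotientGroup.induction_on with
      | H a =>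
        obtain ⟨u, hu, c, rfl⟩ := hAfact a
        refine ⟨c, ?_⟩
        show QuotientGroup.mk (ιA c) = QuotientGroup.mk (u * ιA c)
        rw [QuotientGroup.eq]
        have := hQnormal.conj_mem u hu (ιA c)⁻¹
        simpa [mul_assoc] using this
    have hidx_card : (Q : Subgroup A).index ∣ p * q := by
      have h := Subgroup.card_dvd_of_surjective _ hsurj
      rw [hCcard] at h
      rw [Subgroup.index_eq_card]
      exact h
    -- Q is nontrivial
    obtain ⟨e, hQe⟩ := IsPGroup.iff_card.mp Q.2
    have hQcard_ne1 : Nat.card ↥(Q : Subgroup A) ≠ 1 := by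
      intro h1
      apply hQnonab
      haveI : Subsingleton ↥(Q : Subgroup A) := Nat.card_eq_one_iff_unique.mp h1 |>.1
      exact ⟨⟨fun a b => Subsingleton.elim _ _⟩⟩
    have he1 : 1 ≤ e := by
      rcases Nat.eq_zero_or_pos e with rfl | h
      · rw [pow_zero] at hQe; exact absurd hQe hQcard_ne1
      · exact h
    have hqQ : q ∣ Nat.card ↥(Q : Subgroup A) := by
      rw [hQe]; exact dvd_pow_self q (by omega)
    have hqidx : ¬ q ∣ (Q : Subgroup A).index := by
      intro hdvd
      have hcop := Sylow.card_coprime_index Q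
      have : q ∣ Nat.gcd (Nat.card ↥(Q : Subgroup A)) ((Q : Subgroup A).index) :=
        Nat.dvd_gcd hqQ hdvd
      rw [hcop] at this
      exact hq.one_lt.ne' (Nat.dvd_one.mp this)
    -- p divides the index
    have hcop_pq : Nat.Coprime p (q ^ e) := by
      apply Nat.Coprime.pow_right
      exact (Nat.coprime_primes hp hq).mpr hpq
    have hSpAQ : SpA ⊓ (Q : Subgroup A) = ⊥ := by
      apply inf_eq_bot_of_coprime
      rw [hSpA_card, hQe]
      exact hcop_pq
    have card_dvd_index_of_inf_bot : ∀ (D : Subgroup A), D ⊓ (Q : Subgroup A) = ⊥ →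
        Nat.card D ∣ (Q : Subgroup A).index := by
      intro D hD
      have hker : ((QuotientGroup.mk' (Q : Subgroup A)).comp D.subtype).ker = ⊥ := by
        ext x
        simp only [MonoidHom.mem_ker, MonoidHom.comp_apply, Subgroup.coe_subtype,
          Subgroup.mem_bot]
        rw [QuotientGroup.mk'_apply, QuotientGroup.eq_one_iff]
        constructor
        · intro hx
          have : (x : A) ∈ D ⊓ (Q : Subgroup A) := Subgroup.mem_inf.mpr ⟨x.2, hx⟩
          rw [hD] at this
          exact Subtype.ext (by simpa using this)
        · rintro rfl
          simpa using one_mem (Q : Subgroup A)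
      have hinj := (MonoidHom.ker_eq_bot_iff _).mp hker
      have := Subgroup.card_dvd_of_injective _ hinj
      rwa [Subgroup.index_eq_card]
    have hpidx : p ∣ (Q : Subgroup A).index := by
      have := card_dvd_index_of_inf_bot SpA hSpAQ
      rwa [hSpA_card] at this
    have hidxp : (Q : Subgroup A).index = p := by
      have hcop : Nat.Coprime ((Q : Subgroup A).index) q :=
        Nat.Coprime.symm ((Nat.Prime.coprime_iff_not_dvd hq).mpr hqidx)
      have h1 : (Q : Subgroup A).index ∣ p :=
        Nat.Coprime.dvd_of_dvd_mul_right hcop hidx_card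
      exact Nat.dvd_antisymm h1 hpidx
    -- M has order p and is a normal Sylow p-subgroup
    have hMdvd : Nat.card M ∣ p := by
      have := card_dvd_index_of_inf_bot M hMQ
      rwa [hidxp] at this
    have hMcard : Nat.card M = p := by
      rcases hp.eq_one_or_self_of_dvd _ hMdvd with h | h
      · exact absurd (Subgroup.eq_bot_of_card_le _ (le_of_eq h)) hMbot
      · exact h
    have hcardA : Nat.card A = q ^ e * p := by
      rw [← Subgroup.card_mul_index (Q : Subgroup A), hQe, hidxp]
    have hfact : (Nat.card A).factorization p = 1 := by
      rw [hcardA, Nat.factorization_mul (pow_ne_zero _ hq.pos.ne') hp.pos.ne',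
        hq.factorization_pow, hp.factorization]
      simp [Finsupp.single_apply, hpq, Ne.symm hpq]
    have hMsy : Nat.card M = p ^ (Nat.card A).factorization p := by
      rw [hfact, pow_one, hMcard]
    have hSsy : Nat.card SpA = p ^ (Nat.card A).factorization p := by
      rw [hfact, pow_one, hSpA_card]
    let MS : Sylow p A := Sylow.ofCard M hMsy
    let SS : Sylow p A := Sylow.ofCard SpA hSsy
    haveI : Unique (Sylow p A) := Sylow.unique_of_normal MS hM
    have hMS : SS = MS := Subsingleton.elim _ _
    have hSpAM : SpA = M := congrArg (fun (P : Sylow p A) => (P : Subgroup A)) hMS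
    have hSpAnormal : SpA.Normal := hSpAM ▸ hM
    have htop : ιA.range = ⊤ := by
      rw [← hSpA_norm]
      exact Subgroup.normalizer_eq_top_iff.mpr hSpAnormal
    have hcardrange : Nat.card ιA.range = p * q := by
      rw [← hCcard]
      exact (Nat.card_congr (MonoidHom.ofInjective hιA).toEquiv).symm
    have hcardA2 : Nat.card A = p * q := by
      rw [← hcardrange, htop, Subgroup.card_top]
    have hQq : Nat.card ↥(Q : Subgroup A) = q := by
      have h1 : q ^ e * p = p * q := by rw [← hcardA, hcardA2]
      have h2 : p * q ^ e = p * q := by rw [← h1]; ring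
      have := Nat.eq_of_mul_eq_mul_left hp.pos h2
      rw [hQe, this]
    apply hQnonab
    haveI : IsCyclic ↥(Q : Subgroup A) := isCyclic_of_prime_card hQq
    letI := IsCyclic.commGroup (α := ↥(Q : Subgroup A))
    exact ⟨⟨fun a b => mul_comm a b⟩⟩
  · obtain ⟨w, hw1, hwMQ, hwc⟩ :=
      exists_ne_one_central hq Q.2 hM hMQ
    have hwZQ : w ∈ M ⊓ ZQ := by
      rw [hZQ]
      exact Subgroup.mem_inf.mpr ⟨(Subgroup.mem_inf.mp hwMQ).1,
        Subgroup.mem_inf.mpr ⟨(Subgroup.mem_inf.mp hwMQ).2, hwc⟩⟩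
    have heq : M ⊓ ZQ = ZQ := by
      apply eq_of_le_prime hq inf_le_right hZQcard
      rw [Subgroup.ne_bot_iff_exists_ne_one]
      exact ⟨⟨w, hwZQ⟩, by simpa using hw1⟩
    rw [← heq]
    exact inf_le_left

end AmalgamAux2


/-- Every proper normal subgroup `N` of `X = A *_C B` is torsion-free; equivalently,
if a normal subgroup `N` of `X` contains an element of order `p` or an element of
order `q`, then `N = X`. -/
theorem amalgam_proper_normal_subgroup_torsionFree
    (p q : ℕ) (hp : p.Prime) (hq : q.Prime) (hpodd : Odd p) (hqodd : Odd q)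
    (hpq : p ≠ q)
    {A B C : Type} [Group A] [Group B] [Group C] [Finite A] [Finite B]
    -- `Q` is a nonabelian normal Sylow `q`-subgroup of `A`,
    -- `P` is a nonabelian normal Sylow `p`-subgroup of `B`
    (Q : Sylow q A) (P : Sylow p B)
    (hQnormal : (Q : Subgroup A).Normal) (hPnormal : (P : Subgroup B).Normal)
    (hQnonab : ¬ IsMulCommutative (Q : Subgroup A))
    (hPnonab : ¬ IsMulCommutative (P : Subgroup B))
    -- `ZQ = Z(Q)` has order `q` and `ZP = Z(P)` has order `p`
    (ZQ : Subgroup A)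
    (hZQ : ZQ = (Q : Subgroup A) ⊓ Subgroup.centralizer ((Q : Subgroup A) : Set A))
    (hZQcard : Nat.card ZQ = q)
    (ZP : Subgroup B)
    (hZP : ZP = (P : Subgroup B) ⊓ Subgroup.centralizer ((P : Subgroup B) : Set B))
    (hZPcard : Nat.card ZP = p)
    -- `C` is cyclic of order `p * q`, embedded in `A` and `B`
    (hC : IsCyclic C) (hCcard : Nat.card C = p * q)
    (ιA : C →* A) (ιB : C →* B)
    (hιA : Function.Injective ιA) (hιB : Function.Injective ιB)
    -- `ιA(C)` is self-normalizing in `A`, contains `Z(Q)` as its unique subgroup of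
    -- order `q`, and `A = Q * ιA(C)`
    (hCA_selfnorm : Subgroup.normalizer (ιA.range : Set A) = ιA.range)
    (hZQle : ZQ ≤ ιA.range)
    (hZQuniq : ∀ D : Subgroup A, D ≤ ιA.range → Nat.card D = q → D = ZQ)
    (hAfact : ∀ a : A, ∃ u ∈ (Q : Subgroup A), ∃ c : C, a = u * ιA c)
    -- `ιB(C)` is self-normalizing in `B`, contains `Z(P)` as its unique subgroup of
    -- order `p`, and `B = P * ιB(C)`
    (hCB_selfnorm : Subgroup.normalizer (ιB.range : Set B) = ιB.range)
    (hZPle : ZP ≤ ιB.range)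
    (hZPuniq : ∀ D : Subgroup B, D ≤ ιB.range → Nat.card D = p → D = ZP)
    (hBfact : ∀ b : B, ∃ u ∈ (P : Subgroup B), ∃ c : C, b = u * ιB c)
    -- `SpA` is the unique subgroup of order `p` of `ιA(C)`, and
    -- `SqB` is the unique subgroup of order `q` of `ιB(C)`
    (SpA : Subgroup A) (hSpA_le : SpA ≤ ιA.range) (hSpA_card : Nat.card SpA = p)
    (hSpA_uniq : ∀ D : Subgroup A, D ≤ ιA.range → Nat.card D = p → D = SpA)
    (SqB : Subgroup B) (hSqB_le : SqB ≤ ιB.range) (hSqB_card : Nat.card SqB = q)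
    (hSqB_uniq : ∀ D : Subgroup B, D ≤ ιB.range → Nat.card D = q → D = SqB)
    -- the normalizer conditions `N_B(S_q) = ιB(C)` and `N_A(S_p) = ιA(C)`
    (hSqB_norm : Subgroup.normalizer (SqB : Set B) = ιB.range)
    (hSpA_norm : Subgroup.normalizer (SpA : Set A) = ιA.range)
    -- the commutator conditions `[Q, S_p] = Q` and `[P, S_q] = P`
    (hQcommutator : ⁅(Q : Subgroup A), SpA⁆ = (Q : Subgroup A))
    (hPcommutator : ⁅(P : Subgroup B), SqB⁆ = (P : Subgroup B))
    :
    (∀ N : Subgroup (Amalgam ιA ιB), N.Normal → N ≠ ⊤ →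
      ∀ x ∈ N, IsOfFinOrder x → x = 1) ∧
    (∀ N : Subgroup (Amalgam ιA ιB), N.Normal →
      (∃ x ∈ N, orderOf x = p ∨ orderOf x = q) → N = ⊤) := by

  classical
  have hφinj : ∀ i, Function.Injective ⇑(amalgamMaps ιA ιB i) := by
    intro i
    cases i
    · exact hιB
    · exact hιA
  haveI : Finite C := Nat.finite_of_card_ne_zero (by
    rw [hCcard]; exact Nat.mul_ne_zero hp.pos.ne' hq.pos.ne')
  have hcomm : ∀ c : C, Amalgam.inA ιA ιB (ιA c) = Amalgam.inB ιA ιB (ιB c) := by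
    intro c
    exact (Monoid.PushoutI.of_apply_eq_base (amalgamMaps ιA ιB) true c).trans
      (Monoid.PushoutI.of_apply_eq_base (amalgamMaps ιA ιB) false c).symm
  set SqC : Subgroup C := ZQ.comap ιA with hSqC
  set SpC : Subgroup C := SpA.comap ιA with hSpC
  have hmapA_Sq : Subgroup.map ιA SqC = ZQ := by
    rw [hSqC, Subgroup.map_comap_eq, inf_eq_right.mpr hZQle]
  have hmapA_Sp : Subgroup.map ιA SpC = SpA := by
    rw [hSpC, Subgroup.map_comap_eq, inf_eq_right.mpr hSpA_le]
  have hcard_mapA : ∀ S : Subgroup C, Nat.card (Subgroup.map ιA S) = Nat.card S := fun S =>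
    (Nat.card_congr (Subgroup.equivMapOfInjective S ιA hιA).toEquiv).symm
  have hcard_mapB : ∀ S : Subgroup C, Nat.card (Subgroup.map ιB S) = Nat.card S := fun S =>
    (Nat.card_congr (Subgroup.equivMapOfInjective S ιB hιB).toEquiv).symm
  have hSqCcard : Nat.card SqC = q := by rw [← hcard_mapA, hmapA_Sq, hZQcard]
  have hSpCcard : Nat.card SpC = p := by rw [← hcard_mapA, hmapA_Sp, hSpA_card]
  have hmapB_Sq : Subgroup.map ιB SqC = SqB :=
    hSqB_uniq _ (Subgroup.map_le_range ιB SqC) (by rw [hcard_mapB, hSqCcard])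
  have hmapB_Sp : Subgroup.map ιB SpC = ZP :=
    hZPuniq _ (Subgroup.map_le_range ιB SpC) (by rw [hcard_mapB, hSpCcard])
  have hCsup : SqC ⊔ SpC = (⊤ : Subgroup C) := by
    have h1 : q ∣ Nat.card (SqC ⊔ SpC : Subgroup C) :=
      hSqCcard ▸ Subgroup.card_dvd_of_le le_sup_left
    have h2 : p ∣ Nat.card (SqC ⊔ SpC : Subgroup C) :=
      hSpCcard ▸ Subgroup.card_dvd_of_le le_sup_right
    have h3 : p * q ∣ Nat.card (SqC ⊔ SpC : Subgroup C) :=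
      Nat.Coprime.mul_dvd_of_dvd_of_dvd ((Nat.coprime_primes hp hq).mpr hpq) h2 h1
    have h4 : Nat.card (SqC ⊔ SpC : Subgroup C) ∣ p * q :=
      hCcard ▸ Subgroup.card_subgroup_dvd_card _
    exact Subgroup.eq_top_of_card_eq _ (by rw [Nat.dvd_antisymm h4 h3, hCcard])
  have hZQQ : ZQ ≤ (Q : Subgroup A) := by rw [hZQ]; exact inf_le_left
  have hZPP : ZP ≤ (P : Subgroup B) := by rw [hZP]; exact inf_le_left
  have key : ∀ N : Subgroup (Amalgam ιA ιB), N.Normal →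
      (∃ x ∈ N, IsOfFinOrder x ∧ x ≠ 1) → N = ⊤ := by
    rintro N hN ⟨x, hxN, hxfin, hxne⟩
    set MA : Subgroup A := N.comap (Amalgam.inA ιA ιB) with hMA
    set MB : Subgroup B := N.comap (Amalgam.inB ιA ιB) with hMB
    have hMAnormal : MA.Normal := hN.comap _
    have hMBnormal : MB.Normal := hN.comap _
    have transfAB : ∀ S : Subgroup C, Subgroup.map ιA S ≤ MA → Subgroup.map ιB S ≤ MB := by
      intro S hS y hy
      obtain ⟨c, hc, rfl⟩ := hy
      have h1 : ιA c ∈ MA := hS ⟨c, hc, rfl⟩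
      rw [hMA, Subgroup.mem_comap] at h1
      rw [hMB, Subgroup.mem_comap, ← hcomm c]
      exact h1
    have transfBA : ∀ S : Subgroup C, Subgroup.map ιB S ≤ MB → Subgroup.map ιA S ≤ MA := by
      intro S hS y hy
      obtain ⟨c, hc, rfl⟩ := hy
      have h1 : ιB c ∈ MB := hS ⟨c, hc, rfl⟩
      rw [hMB, Subgroup.mem_comap] at h1
      rw [hMA, Subgroup.mem_comap, hcomm c]
      exact h1
    have stepA : ZQ ≤ MA → SqB ≤ MB ∧ (P : Subgroup B) ≤ MB ∧ ZP ≤ MB := by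
      intro h
      have h1 : SqB ≤ MB := by
        rw [← hmapB_Sq]
        exact transfAB _ (by rw [hmapA_Sq]; exact h)
      have h2 : (P : Subgroup B) ≤ MB := by
        rw [← hPcommutator, Subgroup.commutator_le]
        intro g hg s hs
        rw [commutatorElement_def]
        exact mul_mem (hMBnormal.conj_mem s (h1 hs) g) (inv_mem (h1 hs))
      exact ⟨h1, h2, le_trans hZPP h2⟩
    have stepB : ZP ≤ MB → SpA ≤ MA ∧ (Q : Subgroup A) ≤ MA ∧ ZQ ≤ MA := by
      intro h
      have h1 : SpA ≤ MA := by
        rw [← hmapA_Sp]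
        exact transfBA _ (by rw [hmapB_Sp]; exact h)
      have h2 : (Q : Subgroup A) ≤ MA := by
        rw [← hQcommutator, Subgroup.commutator_le]
        intro g hg s hs
        rw [commutatorElement_def]
        exact mul_mem (hMAnormal.conj_mem s (h1 hs) g) (inv_mem (h1 hs))
      exact ⟨h1, h2, le_trans hZQQ h2⟩
    have full : ZQ ≤ MA → MA = ⊤ ∧ MB = ⊤ := by
      intro h
      obtain ⟨hSqBm, hPm, hZPm⟩ := stepA h
      obtain ⟨hSpAm, hQm, _⟩ := stepB hZPm
      constructor
      · rw [eq_top_iff]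
        intro a _
        obtain ⟨u, hu, c, rfl⟩ := hAfact a
        have hrange : ιA.range ≤ MA := by
          rw [MonoidHom.range_eq_map, ← hCsup, Subgroup.map_sup]
          exact sup_le (by rw [hmapA_Sq]; exact h) (by rw [hmapA_Sp]; exact hSpAm)
        exact mul_mem (hQm hu) (hrange ⟨c, rfl⟩)
      · rw [eq_top_iff]
        intro b _
        obtain ⟨u, hu, c, rfl⟩ := hBfact b
        have hrange : ιB.range ≤ MB := by
          rw [MonoidHom.range_eq_map, ← hCsup, Subgroup.map_sup]
          exact sup_le (by rw [hmapB_Sq]; exact hSqBm) (by rw [hmapB_Sp]; exact hZPm)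
        exact mul_mem (hPm hu) (hrange ⟨c, rfl⟩)
    have fullB : ZP ≤ MB → MA = ⊤ ∧ MB = ⊤ := fun h => full (stepB h).2.2
    obtain ⟨g0, i, a, hconj0⟩ :=
      AmalgamAux.conj_of_finOrder (φ := amalgamMaps ιA ιB) hφinj x hxfin
    have hconj : ∃ g : Amalgam ιA ιB,
        g * x * g⁻¹ = Monoid.PushoutI.of (φ := amalgamMaps ιA ιB) i a := ⟨g0, hconj0⟩
    clear hconj0
    obtain ⟨g, hconj⟩ := hconj
    have haN : Monoid.PushoutI.of (φ := amalgamMaps ιA ιB) i a ∈ N := by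
      rw [← hconj]
      exact hN.conj_mem x hxN g
    have hane : a ≠ 1 := by
      rintro rfl
      apply hxne
      have h1 : g * x * g⁻¹ = 1 := by rw [hconj, map_one]; rfl
      have h2 : x = g⁻¹ * (g * x * g⁻¹) * g := by group
      rw [h2, h1]
      group
    have htops : MA = ⊤ ∧ MB = ⊤ := by
      cases i with
      | true =>
          apply full
          apply AmalgamAux2.side_ZQ_le hp hq hpq Q hQnormal hQnonab ZQ hZQ hZQcard hCcard
            ιA hιA hAfact SpA hSpA_card hSpA_norm MA hMAnormal
          rw [Subgroup.ne_bot_iff_exists_ne_one]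
          refine ⟨⟨a, ?_⟩, ?_⟩
          · change Amalgam.inA ιA ιB a ∈ N
            exact haN
          · exact fun h => hane (congrArg Subtype.val h)
      | false =>
          apply fullB
          apply AmalgamAux2.side_ZQ_le hq hp (Ne.symm hpq) P hPnormal hPnonab ZP hZP hZPcard
            (by rw [hCcard, Nat.mul_comm]) ιB hιB hBfact SqB hSqB_card hSqB_norm MB hMBnormal
          rw [Subgroup.ne_bot_iff_exists_ne_one]
          refine ⟨⟨a, ?_⟩, ?_⟩
          · change Amalgam.inB ιA ιB a ∈ N
            exact haN
          · exact fun h => hane (congrArg Subtype.val h)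
    apply AmalgamAux.eq_top_of_of_mem N
    intro i g
    cases i with
    | true =>
        have : g ∈ MA := htops.1.symm ▸ Subgroup.mem_top g
        change Amalgam.inA ιA ιB g ∈ N at this
        exact this
    | false =>
        have : g ∈ MB := htops.2.symm ▸ Subgroup.mem_top g
        change Amalgam.inB ιA ιB g ∈ N at this
        exact this
  constructor
  · intro N hN hNne x hxN hxfin
    by_contra hxne
    exact hNne (key N hN ⟨x, hxN, hxfin, hxne⟩)
  · rintro N hN ⟨x, hxN, hord⟩
    apply key N hN
    refine ⟨x, hxN, ?_, ?_⟩
    · by_contra h0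
      rw [← orderOf_eq_zero_iff] at h0
      rcases hord with h | h
      · rw [h0] at h; exact hp.pos.ne' h.symm
      · rw [h0] at h; exact hq.pos.ne' h.symm
    · rintro rfl
      rw [orderOf_one] at hord
      rcases hord with h | h
      · exact hp.one_lt.ne' h.symm
      · exact hq.one_lt.ne' h.symm
end

section
/- X is a perfect group: the commutator subgroup [X, X] equals X. -/
/-- `X = A *_C B` is a perfect group: the commutator subgroup `[X, X]` equals `X`. -/
theorem amalgam_perfect
    (p q : ℕ) (hp : p.Prime) (hq : q.Prime) (hpodd : Odd p) (hqodd : Odd q)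
    (hpq : p ≠ q)
    {A B C : Type} [Group A] [Group B] [Group C] [Finite A] [Finite B]
    -- `Q` is a nonabelian normal Sylow `q`-subgroup of `A`,
    -- `P` is a nonabelian normal Sylow `p`-subgroup of `B`
    (Q : Sylow q A) (P : Sylow p B)
    (hQnormal : (Q : Subgroup A).Normal) (hPnormal : (P : Subgroup B).Normal)
    (hQnonab : ¬ IsMulCommutative (Q : Subgroup A))
    (hPnonab : ¬ IsMulCommutative (P : Subgroup B))
    -- `ZQ = Z(Q)` has order `q` and `ZP = Z(P)` has order `p`
    (ZQ : Subgroup A)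
    (hZQ : ZQ = (Q : Subgroup A) ⊓ Subgroup.centralizer ((Q : Subgroup A) : Set A))
    (hZQcard : Nat.card ZQ = q)
    (ZP : Subgroup B)
    (hZP : ZP = (P : Subgroup B) ⊓ Subgroup.centralizer ((P : Subgroup B) : Set B))
    (hZPcard : Nat.card ZP = p)
    -- `C` is cyclic of order `p * q`, embedded in `A` and `B`
    (hC : IsCyclic C) (hCcard : Nat.card C = p * q)
    (ιA : C →* A) (ιB : C →* B)
    (hιA : Function.Injective ιA) (hιB : Function.Injective ιB)
    -- `ιA(C)` is self-normalizing in `A`, contains `Z(Q)` as its unique subgroup of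
    -- order `q`, and `A = Q * ιA(C)`
    (hCA_selfnorm : Subgroup.normalizer (ιA.range : Set A) = ιA.range)
    (hZQle : ZQ ≤ ιA.range)
    (hZQuniq : ∀ D : Subgroup A, D ≤ ιA.range → Nat.card D = q → D = ZQ)
    (hAfact : ∀ a : A, ∃ u ∈ (Q : Subgroup A), ∃ c : C, a = u * ιA c)
    -- `ιB(C)` is self-normalizing in `B`, contains `Z(P)` as its unique subgroup of
    -- order `p`, and `B = P * ιB(C)`
    (hCB_selfnorm : Subgroup.normalizer (ιB.range : Set B) = ιB.range)
    (hZPle : ZP ≤ ιB.range)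
    (hZPuniq : ∀ D : Subgroup B, D ≤ ιB.range → Nat.card D = p → D = ZP)
    (hBfact : ∀ b : B, ∃ u ∈ (P : Subgroup B), ∃ c : C, b = u * ιB c)
    -- `SpA` is the unique subgroup of order `p` of `ιA(C)`, and
    -- `SqB` is the unique subgroup of order `q` of `ιB(C)`
    (SpA : Subgroup A) (hSpA_le : SpA ≤ ιA.range) (hSpA_card : Nat.card SpA = p)
    (hSpA_uniq : ∀ D : Subgroup A, D ≤ ιA.range → Nat.card D = p → D = SpA)
    (SqB : Subgroup B) (hSqB_le : SqB ≤ ιB.range) (hSqB_card : Nat.card SqB = q)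
    (hSqB_uniq : ∀ D : Subgroup B, D ≤ ιB.range → Nat.card D = q → D = SqB)
    -- the normalizer conditions `N_B(S_q) = ιB(C)` and `N_A(S_p) = ιA(C)`
    (hSqB_norm : Subgroup.normalizer (SqB : Set B) = ιB.range)
    (hSpA_norm : Subgroup.normalizer (SpA : Set A) = ιA.range)
    -- the commutator conditions `[Q, S_p] = Q` and `[P, S_q] = P`
    (hQcommutator : ⁅(Q : Subgroup A), SpA⁆ = (Q : Subgroup A))
    (hPcommutator : ⁅(P : Subgroup B), SqB⁆ = (P : Subgroup B))
    :
    commutator (Amalgam ιA ιB) = ⊤ := by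
    classical
  -- Notation
  set X := Amalgam ιA ιB with hX
  set inA := Amalgam.inA ιA ιB with hinA
  set inB := Amalgam.inB ιA ιB with hinB
  have hC_fin : Finite C := Finite.of_injective ιA hιA
  -- images of Q and P land in the commutator subgroup
  have hQmap : Subgroup.map inA (Q : Subgroup A) ≤ commutator X := by
    rw [commutator_def, ← hQcommutator, Subgroup.map_commutator]
    exact Subgroup.commutator_mono le_top le_top
  have hPmap : Subgroup.map inB (P : Subgroup B) ≤ commutator X := by
    rw [commutator_def, ← hPcommutator, Subgroup.map_commutator]
    exact Subgroup.commutator_mono le_top le_top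
  have hQin : ∀ u ∈ (Q : Subgroup A), inA u ∈ commutator X := fun u hu =>
    hQmap ⟨u, hu, rfl⟩
  have hPin : ∀ u ∈ (P : Subgroup B), inB u ∈ commutator X := fun u hu =>
    hPmap ⟨u, hu, rfl⟩
  -- the pushout relation: inA ∘ ιA = inB ∘ ιB
  have hrel : ∀ c : C, inA (ιA c) = inB (ιB c) := by
    intro c
    have h1 := DFunLike.congr_fun
      (Monoid.PushoutI.of_comp_eq_base (φ := amalgamMaps ιA ιB) true) c
    have h2 := DFunLike.congr_fun
      (Monoid.PushoutI.of_comp_eq_base (φ := amalgamMaps ιA ιB) false) c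
    exact h1.trans h2.symm
  -- generator of C
  obtain ⟨g, hg⟩ := hC.exists_generator
  have hgtop : Subgroup.zpowers g = ⊤ := by
    rw [Subgroup.eq_top_iff']; exact hg
  have hordg : orderOf g = p * q := by
    rw [← Nat.card_zpowers, hgtop, Subgroup.card_top, hCcard]
  have hp0 : p ≠ 0 := hp.ne_zero
  have hq0 : q ≠ 0 := hq.ne_zero
  -- the subgroup of C of order q maps into ZQ ≤ Q
  have hZQ_leQ : ZQ ≤ (Q : Subgroup A) := by rw [hZQ]; exact inf_le_left
  have hZP_leP : ZP ≤ (P : Subgroup B) := by rw [hZP]; exact inf_le_left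
  have hordgp : orderOf (g ^ p) = q := by
    rw [orderOf_pow, hordg]
    have h1 : Nat.gcd (p * q) p = p := Nat.gcd_eq_right ⟨q, rfl⟩
    rw [h1]
    exact Nat.mul_div_cancel_left q (Nat.pos_of_ne_zero hp0)
  have hordgq : orderOf (g ^ q) = p := by
    rw [orderOf_pow, hordg]
    have h1 : Nat.gcd (p * q) q = q := Nat.gcd_eq_right ⟨p, mul_comm p q⟩
    rw [h1, mul_comm]
    exact Nat.mul_div_cancel_left p (Nat.pos_of_ne_zero hq0)
  have hcard_map : ∀ (x : C), Nat.card (Subgroup.map ιA (Subgroup.zpowers x))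
      = orderOf x := by
    intro x
    rw [← Nat.card_zpowers (a := x)]
    exact (Nat.card_congr ((Subgroup.zpowers x).equivMapOfInjective ιA hιA).toEquiv).symm
  have hcard_mapB : ∀ (x : C), Nat.card (Subgroup.map ιB (Subgroup.zpowers x))
      = orderOf x := by
    intro x
    rw [← Nat.card_zpowers (a := x)]
    exact (Nat.card_congr ((Subgroup.zpowers x).equivMapOfInjective ιB hιB).toEquiv).symm
  have hmapA : Subgroup.map ιA (Subgroup.zpowers (g ^ p)) = ZQ := by
    apply hZQuniq
    · rintro a ⟨c, _, rfl⟩; exact ⟨c, rfl⟩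
    · rw [hcard_map, hordgp]
  have hmapB : Subgroup.map ιB (Subgroup.zpowers (g ^ q)) = ZP := by
    apply hZPuniq
    · rintro a ⟨c, _, rfl⟩; exact ⟨c, rfl⟩
    · rw [hcard_mapB, hordgq]
  -- every element of the image of C lies in the commutator subgroup
  have hgp_in : ∀ k : ℤ, inA (ιA ((g ^ p) ^ k)) ∈ commutator X := by
    intro k
    apply hQin
    apply hZQ_leQ
    rw [← hmapA]
    exact ⟨(g ^ p) ^ k, Subgroup.zpow_mem _ (Subgroup.mem_zpowers _) k, rfl⟩
  have hgq_in : ∀ k : ℤ, inA (ιA ((g ^ q) ^ k)) ∈ commutator X := by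
    intro k
    rw [hrel]
    apply hPin
    apply hZP_leP
    rw [← hmapB]
    exact ⟨(g ^ q) ^ k, Subgroup.zpow_mem _ (Subgroup.mem_zpowers _) k, rfl⟩
  have hCin : ∀ c : C, inA (ιA c) ∈ commutator X := by
    intro c
    obtain ⟨n, hn⟩ := Subgroup.mem_zpowers_iff.mp (hg c)
    have hcop : Nat.Coprime p q := (Nat.coprime_primes hp hq).mpr hpq
    have hbez : (1 : ℤ) = p * Nat.gcdA p q + q * Nat.gcdB p q := by
      have := Nat.gcd_eq_gcd_ab p q
      rwa [hcop.gcd_eq_one, Nat.cast_one] at this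
    have : g ^ n = ((g ^ p) ^ (Nat.gcdA p q * n)) * ((g ^ q) ^ (Nat.gcdB p q * n)) := by
      rw [← zpow_natCast g p, ← zpow_natCast g q, ← zpow_mul, ← zpow_mul,
        ← zpow_add]
      congr 1
      have : (p : ℤ) * (Nat.gcdA p q * n) + q * (Nat.gcdB p q * n)
          = (p * Nat.gcdA p q + q * Nat.gcdB p q) * n := by ring
      rw [this, ← hbez, one_mul]
    rw [← hn, this, map_mul, map_mul]
    exact mul_mem (hgp_in _) (hgq_in _)
  -- hence images of A and B lie in the commutator subgroup
  have hAin : ∀ a : A, inA a ∈ commutator X := by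
    intro a
    obtain ⟨u, hu, c, rfl⟩ := hAfact a
    rw [map_mul]
    exact mul_mem (hQin u hu) (hCin c)
  have hBin : ∀ b : B, inB b ∈ commutator X := by
    intro b
    obtain ⟨u, hu, c, rfl⟩ := hBfact b
    rw [map_mul]
    exact mul_mem (hPin u hu) (hrel c ▸ hCin c)
  -- conclude by the induction principle for pushouts
  rw [eq_top_iff]
  intro x hx
  clear hx
  induction x using Monoid.PushoutI.induction_on with
  | of i a =>
    cases i with
    | true => exact hAin a
    | false => exact hBin a
  | base c =>
    have := hCin c
    rwa [show inA (ιA c) = Monoid.PushoutI.base (amalgamMaps ιA ιB) c from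
      DFunLike.congr_fun (Monoid.PushoutI.of_comp_eq_base (φ := amalgamMaps ιA ιB) true) c]
      at this
  | mul x y hx hy => exact mul_mem hx hy
end

section
/- For every x ∈ X that does not lie in (the image of) A, the intersection A ∩ xAx⁻¹ contains no element of order q; symmetrically, for every y ∈ X not lying in B, the intersection B ∩ yBy⁻¹ contains no element of order p. -/
open Function

namespace AmalgamAux

variable {ι : Type*} {G : ι → Type*} {H : Type*} [∀ i, Group (G i)] [Group H]
  {φ : ∀ i, H →* G i}

open Monoid Monoid.PushoutI

/-- product of a raw letter list in the coproduct -/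
def lp (l : List (Σ i, G i)) : Monoid.CoprodI G :=
  (l.map fun p => Monoid.CoprodI.of p.2).prod

theorem lp_nil : lp ([] : List (Σ i, G i)) = 1 := rfl

theorem lp_cons (i : ι) (g : G i) (t : List (Σ i, G i)) :
    lp (⟨i, g⟩ :: t) = Monoid.CoprodI.of g * lp t := by
  simp [lp]

theorem mem_range_of_of_mem (hφ : ∀ i, Injective (φ i)) {i j : ι} (hij : i ≠ j) {b : G j}
    (h : PushoutI.of (φ := φ) j b ∈ (PushoutI.of (φ := φ) i).range) : b ∈ (φ j).range := by
  have h2 : PushoutI.of (φ := φ) j b ∈ (PushoutI.base φ).range := by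
    rw [← PushoutI.inf_of_range_eq_base_range hφ hij]
    exact ⟨h, ⟨b, rfl⟩⟩
  obtain ⟨c, hc⟩ := h2
  rw [← PushoutI.of_apply_eq_base (φ := φ) j c] at hc
  exact ⟨c, PushoutI.of_injective hφ j hc⟩

/-- A reduced word whose image in the pushout lies in the range of one of the
canonical maps `of k` has length at most one. -/
theorem reduced_length_le_one (hφ : ∀ i, Injective (φ i)) {w : Monoid.CoprodI.Word G}
    (hw : PushoutI.Reduced φ w) {k : ι}
    (h : PushoutI.ofCoprodI (φ := φ) w.prod ∈ (PushoutI.of (φ := φ) k).range) :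
    w.toList.length ≤ 1 := by
  obtain ⟨a, ha⟩ := h
  by_cases har : a ∈ (φ k).range
  · obtain ⟨c, rfl⟩ := har
    have hb : PushoutI.ofCoprodI (φ := φ) w.prod ∈ (PushoutI.base φ).range :=
      ⟨c, by rw [← ha, PushoutI.of_apply_eq_base]⟩
    have := hw.eq_empty_of_mem_range hφ hb
    simp [this]
  · have ha1 : a ≠ 1 := fun h1 => har (h1 ▸ one_mem _)
    obtain ⟨l, hne, hch⟩ := w
    match l, hne, hch, hw, ha with
    | [], _, _, _, _ => simp
    | ⟨i₁, g₁⟩ :: t, hne, hch, hw, ha =>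
      by_cases hik : i₁ = k
      · subst hik
        -- merge case
        have hg₁r : g₁ ∉ (φ i₁).range := hw ⟨i₁, g₁⟩ List.mem_cons_self
        have ha' : PushoutI.of (φ := φ) i₁ a =
            PushoutI.ofCoprodI (φ := φ) (lp (⟨i₁, g₁⟩ :: t)) := ha
        rw [lp_cons, map_mul, PushoutI.ofCoprodI_of] at ha'
        have hPt : PushoutI.ofCoprodI (φ := φ) (lp t) =
            PushoutI.of (φ := φ) i₁ (g₁⁻¹ * a) := by
          rw [map_mul, ha', ← mul_assoc, map_inv, inv_mul_cancel, one_mul]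
        have htred : PushoutI.Reduced φ
            (⟨t, fun x hx => hne x (List.mem_cons_of_mem _ hx), hch.tail⟩ :
              Monoid.CoprodI.Word G) :=
          fun x hx => hw x (List.mem_cons_of_mem _ hx)
        by_cases hbr : g₁⁻¹ * a ∈ (φ i₁).range
        · -- tail word is in base range, hence empty; total length 1
          obtain ⟨c, hc⟩ := hbr
          have hb : PushoutI.ofCoprodI (φ := φ) (lp t) ∈ (PushoutI.base φ).range := by
            refine ⟨c, ?_⟩
            rw [hPt, ← hc, PushoutI.of_apply_eq_base]
          have := htred.eq_empty_of_mem_range hφ hb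
          have ht : t = [] := congrArg Monoid.CoprodI.Word.toList this
          simp [ht]
        · -- build the word ⟨i₁, a⁻¹ * g₁⟩ :: t, whose product is 1
          have hb1 : a⁻¹ * g₁ ≠ 1 := by
            intro h1
            apply hbr
            have hg : g₁ = a := by
              have := congrArg (fun z => a * z) h1
              simpa [← mul_assoc] using this
            rw [hg, inv_mul_cancel]
            exact ⟨1, map_one _⟩
          have hWred : PushoutI.Reduced φ
              (⟨⟨i₁, a⁻¹ * g₁⟩ :: t, by
                rintro x hx
                rcases List.mem_cons.1 hx with rfl | hx
                · exact hb1
                · exact hne x (List.mem_cons_of_mem _ hx), by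
                rcases t with _ | ⟨y, t'⟩
                · simp
                · exact List.IsChain.cons_cons (List.isChain_cons_cons.1 hch).1 hch.tail⟩ :
                Monoid.CoprodI.Word G) := by
            rintro x hx
            rcases List.mem_cons.1 hx with rfl | hx
            · intro hr
              apply hbr
              have h2 : g₁⁻¹ * a = (a⁻¹ * g₁)⁻¹ := by group
              rw [h2]
              exact inv_mem hr
            · exact hw x (List.mem_cons_of_mem _ hx)
          have hWprod : PushoutI.ofCoprodI (φ := φ) (lp (⟨i₁, a⁻¹ * g₁⟩ :: t)) = 1 := by
            rw [lp_cons, map_mul, PushoutI.ofCoprodI_of, hPt, ← map_mul]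
            have h3 : a⁻¹ * g₁ * (g₁⁻¹ * a) = 1 := by group
            rw [h3, map_one]
          have := hWred.eq_empty_of_mem_range hφ (hWprod ▸ one_mem _)
          have h4 : (⟨i₁, a⁻¹ * g₁⟩ : Σ i, G i) :: t = [] :=
            congrArg Monoid.CoprodI.Word.toList this
          simp at h4
      · -- prepend ⟨k, a⁻¹⟩
        have hWred : PushoutI.Reduced φ
            (⟨⟨k, a⁻¹⟩ :: ⟨i₁, g₁⟩ :: t, by
              rintro x hx
              rcases List.mem_cons.1 hx with rfl | hx
              · simpa using ha1
              · exact hne x hx, List.IsChain.cons_cons (fun h1 => hik h1.symm) hch⟩ :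
              Monoid.CoprodI.Word G) := by
          rintro x hx
          rcases List.mem_cons.1 hx with rfl | hx
          · exact fun hr => har (by simpa using inv_mem hr)
          · exact hw x hx
        have hWprod : PushoutI.ofCoprodI (φ := φ) (lp (⟨k, a⁻¹⟩ :: ⟨i₁, g₁⟩ :: t)) = 1 := by
          rw [lp_cons, map_mul, PushoutI.ofCoprodI_of]
          have : PushoutI.ofCoprodI (φ := φ) (lp (⟨i₁, g₁⟩ :: t)) =
              PushoutI.of (φ := φ) k a := ha.symm
          rw [this, map_inv, inv_mul_cancel]
        have := hWred.eq_empty_of_mem_range hφ (hWprod ▸ one_mem _)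
        have h4 : (⟨k, a⁻¹⟩ : Σ i, G i) :: ⟨i₁, g₁⟩ :: t = [] :=
          congrArg Monoid.CoprodI.Word.toList this
        simp at h4

/-- If `a ∈ G m` is not in the range of `φ m`, and `w` is a reduced word not starting
with index `m` (and nonempty if `m = i`), then `(prod w)⁻¹ * of m a * prod w` is not
in the range of `of i`. -/
theorem conj_not_in_range (hφ : ∀ i, Injective (φ i)) {i m : ι}
    (w : Monoid.CoprodI.Word G) (hred : PushoutI.Reduced φ w)
    (hfst : w.fstIdx ≠ some m) {a : G m} (ha : a ∉ (φ m).range)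
    (hside : m ≠ i ∨ w.toList ≠ [])
    (hconj : (PushoutI.ofCoprodI (φ := φ) w.prod)⁻¹ * PushoutI.of (φ := φ) m a *
        PushoutI.ofCoprodI (φ := φ) w.prod ∈ (PushoutI.of (φ := φ) i).range) : False := by
  have ha1 : a ≠ 1 := fun h1 => ha (h1 ▸ one_mem _)
  obtain ⟨l, hne, hch⟩ := w
  rcases l with _ | ⟨x, t⟩
  · -- empty word: of m a ∈ range of i with m ≠ i
    rcases hside with hmi | hemp
    · have h1 : PushoutI.of (φ := φ) m a ∈ (PushoutI.of (φ := φ) i).range := by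
        have h0 : PushoutI.ofCoprodI (φ := φ)
            (⟨[], hne, hch⟩ : Monoid.CoprodI.Word G).prod = 1 := by
          rw [show (⟨[], hne, hch⟩ : Monoid.CoprodI.Word G).prod = 1 from rfl, map_one]
        rw [h0] at hconj
        simpa using hconj
      exact ha (mem_range_of_of_mem hφ (Ne.symm hmi) h1)
    · exact hemp rfl
  · -- nonempty: build the palindrome word
    set l := x :: t with hl
    have hx1 : x.1 ≠ m := by
      intro h1
      apply hfst
      simp [Monoid.CoprodI.Word.fstIdx, hl, h1]
    -- the palindrome list
    set L : List (Σ i, G i) :=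
      (l.map fun p => ⟨p.1, p.2⁻¹⟩).reverse ++ ⟨m, a⟩ :: l with hL
    have hLne : ∀ y ∈ L, y.snd ≠ (1 : G y.fst) := by
      intro y hy
      rcases List.mem_append.1 hy with hy | hy
      · rw [List.mem_reverse] at hy
        obtain ⟨p, hp, rfl⟩ := List.mem_map.1 hy
        simpa using hne p hp
      · rcases List.mem_cons.1 hy with rfl | hy
        · exact ha1
        · exact hne y hy
    have hmapfst : ∀ p : Σ i, G i, (⟨p.1, p.2⁻¹⟩ : Σ i, G i).fst = p.fst := fun _ => rfl
    have hLch : L.IsChain fun p p' => p.fst ≠ p'.fst := by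
      rw [List.isChain_append]
      refine ⟨?_, ?_, ?_⟩
      · rw [List.isChain_reverse, List.isChain_map]
        exact List.IsChain.imp (fun p q h => by exact fun h2 => h h2.symm) hch
      · exact List.IsChain.cons_cons (fun h => hx1 h.symm) hch
      · intro y hy z hz
        rw [List.getLast?_reverse] at hy
        rw [hl] at hy
        simp only [List.map_cons, List.head?_cons, Option.mem_def, Option.some.injEq] at hy
        subst hy
        simp only [List.head?_cons, Option.mem_def, Option.some.injEq] at hz
        subst hz
        exact hx1
    have hWred : PushoutI.Reduced φ
        (⟨L, hLne, hLch⟩ : Monoid.CoprodI.Word G) := by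
      intro y hy
      rcases List.mem_append.1 hy with hy | hy
      · rw [List.mem_reverse] at hy
        obtain ⟨p, hp, rfl⟩ := List.mem_map.1 hy
        exact fun hr => hred p hp (by simpa using inv_mem hr)
      · rcases List.mem_cons.1 hy with rfl | hy
        · exact ha
        · exact hred y hy
    -- the product of the palindrome
    have hrev : ((l.map fun p => (⟨p.1, p.2⁻¹⟩ : Σ i, G i)).reverse.map
          fun p => Monoid.CoprodI.of p.2).prod =
        ((l.map fun p => Monoid.CoprodI.of p.2).prod)⁻¹ := by
      rw [List.map_reverse, List.map_map, List.prod_inv_reverse, List.map_map]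
      congr 2
    have hLprod : lp L = (lp l)⁻¹ * (Monoid.CoprodI.of a * lp l) := by
      rw [hL]
      show ((((l.map fun p => (⟨p.1, p.2⁻¹⟩ : Σ i, G i)).reverse) ++
          ⟨m, a⟩ :: l).map fun p => Monoid.CoprodI.of p.2).prod = _
      rw [List.map_append, List.prod_append, hrev, List.map_cons, List.prod_cons]
      rfl
    have hmem : PushoutI.ofCoprodI (φ := φ)
        ((⟨L, hLne, hLch⟩ : Monoid.CoprodI.Word G).prod) ∈
        (PushoutI.of (φ := φ) i).range := by
      have : PushoutI.ofCoprodI (φ := φ) (lp L) =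
          (PushoutI.ofCoprodI (φ := φ) (lp l))⁻¹ * PushoutI.of (φ := φ) m a *
            PushoutI.ofCoprodI (φ := φ) (lp l) := by
        rw [hLprod, map_mul, map_inv, map_mul, PushoutI.ofCoprodI_of, mul_assoc]
      exact this ▸ hconj
    have hlen := reduced_length_le_one hφ hWred hmem
    have hlen' : L.length ≤ 1 := hlen
    rw [hL] at hlen'
    simp [hl] at hlen'
    omega

theorem orderOf_conj'' {Γ : Type*} [Group Γ] (a g : Γ) :
    orderOf (g⁻¹ * a * g) = orderOf a := by
  have h : g⁻¹ * a * g = (MulAut.conj g⁻¹) a := by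
    simp [MulAut.conj_apply]
  rw [h]
  exact orderOf_injective (MulAut.conj g⁻¹).toMonoidHom (MulAut.conj g⁻¹).injective a

/-- Step across a letter of index `j`. -/
theorem stepJ (hφ : ∀ i, Injective (φ i)) {i j : ι} (hij : i ≠ j)
    (w : Monoid.CoprodI.Word G) (hred : PushoutI.Reduced φ w)
    (hfst : w.fstIdx = some j) (c : H)
    (hGBc : ∀ g : G j, g ∉ (φ j).range → g⁻¹ * (φ j c) * g ∉ (φ j).range)
    (hconj : (PushoutI.ofCoprodI (φ := φ) w.prod)⁻¹ * PushoutI.of (φ := φ) j (φ j c) *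
        PushoutI.ofCoprodI (φ := φ) w.prod ∈ (PushoutI.of (φ := φ) i).range) : False := by
  obtain ⟨l, hne, hch⟩ := w
  rcases l with _ | ⟨⟨j', g₂⟩, t⟩
  · simp [Monoid.CoprodI.Word.fstIdx] at hfst
  · have hj' : j' = j := by
      simpa [Monoid.CoprodI.Word.fstIdx] using hfst
    subst hj'
    have hg₂ : g₂ ∉ (φ j').range := hred ⟨j', g₂⟩ List.mem_cons_self
    have hb₁ : g₂⁻¹ * (φ j' c) * g₂ ∉ (φ j').range := hGBc g₂ hg₂
    have htfst : (⟨t, fun y hy => hne y (List.mem_cons_of_mem _ hy), hch.tail⟩ :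
        Monoid.CoprodI.Word G).fstIdx ≠ some j' := by
      rw [Monoid.CoprodI.Word.fstIdx_ne_iff]
      intro y hy
      rcases t with _ | ⟨z, t'⟩
      · simp at hy
      · simp only [List.head?_cons, Option.mem_def, Option.some.injEq] at hy
        subst hy
        exact fun h2 => ((List.isChain_cons_cons.1 hch).1 h2)
    have htred : PushoutI.Reduced φ
        (⟨t, fun y hy => hne y (List.mem_cons_of_mem _ hy), hch.tail⟩ :
          Monoid.CoprodI.Word G) :=
      fun y hy => hred y (List.mem_cons_of_mem _ hy)
    have hconj' : (PushoutI.ofCoprodI (φ := φ) (lp t))⁻¹ *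
        PushoutI.of (φ := φ) j' (g₂⁻¹ * (φ j' c) * g₂) *
        PushoutI.ofCoprodI (φ := φ) (lp t) ∈ (PushoutI.of (φ := φ) i).range := by
      have h1 : PushoutI.ofCoprodI (φ := φ) (lp (⟨j', g₂⟩ :: t)) =
          PushoutI.of (φ := φ) j' g₂ * PushoutI.ofCoprodI (φ := φ) (lp t) := by
        rw [lp_cons, map_mul, PushoutI.ofCoprodI_of]
      have h2 := hconj
      rw [show ((⟨⟨j', g₂⟩ :: t, hne, hch⟩ : Monoid.CoprodI.Word G)).prod =
        lp (⟨j', g₂⟩ :: t) from rfl, h1] at h2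
      have h3 : (PushoutI.of (φ := φ) j' g₂ * PushoutI.ofCoprodI (φ := φ) (lp t))⁻¹ *
          PushoutI.of (φ := φ) j' (φ j' c) *
          (PushoutI.of (φ := φ) j' g₂ * PushoutI.ofCoprodI (φ := φ) (lp t)) =
          (PushoutI.ofCoprodI (φ := φ) (lp t))⁻¹ *
          PushoutI.of (φ := φ) j' (g₂⁻¹ * (φ j' c) * g₂) *
          PushoutI.ofCoprodI (φ := φ) (lp t) := by
        rw [map_mul, map_mul, map_inv]
        group
      rw [h3] at h2
      exact h2
    exact conj_not_in_range hφ _ htred htfst hb₁ (Or.inl (Ne.symm hij)) hconj'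

/-- The core ping-pong argument, word version. -/
theorem core_word (hφ : ∀ i, Injective (φ i)) {i j : ι} (hij : i ≠ j)
    (hall : ∀ k : ι, k = i ∨ k = j) {r : ℕ}
    (hGB : ∀ a : G j, a ∈ (φ j).range → orderOf a = r →
      ∀ g : G j, g ∉ (φ j).range → g⁻¹ * a * g ∉ (φ j).range)
    (w : Monoid.CoprodI.Word G) (hred : PushoutI.Reduced φ w)
    (hP : PushoutI.ofCoprodI (φ := φ) w.prod ∉ (PushoutI.of (φ := φ) i).range)
    (a₀ : G i) (hord₀ : orderOf a₀ = r)
    (hc : (PushoutI.ofCoprodI (φ := φ) w.prod)⁻¹ * PushoutI.of (φ := φ) i a₀ *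
        PushoutI.ofCoprodI (φ := φ) w.prod ∈ (PushoutI.of (φ := φ) i).range) : False := by
  obtain ⟨l, hne, hch⟩ := w
  rcases l with _ | ⟨⟨i₁, g₁⟩, t⟩
  · apply hP
    show PushoutI.ofCoprodI (φ := φ) (lp []) ∈ _
    rw [lp_nil, map_one]
    exact one_mem _
  · by_cases hi₁ : i₁ = i
    · subst hi₁
      rcases t with _ | ⟨⟨i₂, g₂⟩, t'⟩
      · -- single letter of index i₁ : contradicts hP
        apply hP
        show PushoutI.ofCoprodI (φ := φ) (lp [⟨i₁, g₁⟩]) ∈ _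
        rw [lp_cons, lp_nil, mul_one, PushoutI.ofCoprodI_of]
        exact ⟨g₁, rfl⟩
      · have hi₂ : i₂ ≠ i₁ := fun h2 => ((List.isChain_cons_cons.1 hch).1 h2.symm)
        have hi₂j : i₂ = j := (hall i₂).resolve_left hi₂
        -- transport the conjugation across the first letter
        set a₁ := g₁⁻¹ * a₀ * g₁ with ha₁def
        have hord₁ : orderOf a₁ = r := by rw [ha₁def, orderOf_conj'', hord₀]
        have hwt_ne : ∀ y ∈ (⟨i₂, g₂⟩ :: t' : List (Σ i, G i)), y.snd ≠ (1 : G y.fst) :=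
          fun y hy => hne y (List.mem_cons_of_mem _ hy)
        have hwt_ch : (⟨i₂, g₂⟩ :: t' : List (Σ i, G i)).Chain'
            (fun p p' => p.fst ≠ p'.fst) := hch.tail
        have hwtred : PushoutI.Reduced φ
            (⟨⟨i₂, g₂⟩ :: t', hwt_ne, hwt_ch⟩ : Monoid.CoprodI.Word G) :=
          fun y hy => hred y (List.mem_cons_of_mem _ hy)
        have hc1 : (PushoutI.ofCoprodI (φ := φ) (lp (⟨i₂, g₂⟩ :: t')))⁻¹ *
            PushoutI.of (φ := φ) i₁ a₁ *
            PushoutI.ofCoprodI (φ := φ) (lp (⟨i₂, g₂⟩ :: t')) ∈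
            (PushoutI.of (φ := φ) i₁).range := by
          have h2 := hc
          rw [show ((⟨⟨i₁, g₁⟩ :: ⟨i₂, g₂⟩ :: t', hne, hch⟩ :
              Monoid.CoprodI.Word G)).prod = lp (⟨i₁, g₁⟩ :: ⟨i₂, g₂⟩ :: t') from rfl,
            lp_cons, map_mul, PushoutI.ofCoprodI_of] at h2
          have h3 : (PushoutI.of (φ := φ) i₁ g₁ *
              PushoutI.ofCoprodI (φ := φ) (lp (⟨i₂, g₂⟩ :: t')))⁻¹ *
              PushoutI.of (φ := φ) i₁ a₀ *
              (PushoutI.of (φ := φ) i₁ g₁ *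
                PushoutI.ofCoprodI (φ := φ) (lp (⟨i₂, g₂⟩ :: t'))) =
              (PushoutI.ofCoprodI (φ := φ) (lp (⟨i₂, g₂⟩ :: t')))⁻¹ *
              PushoutI.of (φ := φ) i₁ a₁ *
              PushoutI.ofCoprodI (φ := φ) (lp (⟨i₂, g₂⟩ :: t')) := by
            rw [ha₁def, map_mul, map_mul, map_inv]
            group
          rw [h3] at h2
          exact h2
        by_cases ha₁r : a₁ ∈ (φ i₁).range
        · obtain ⟨c, hcφ⟩ := ha₁r
          have hordc : orderOf (φ j c) = r := by
            rw [orderOf_injective (φ j) (hφ j) c,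
              ← orderOf_injective (φ i₁) (hφ i₁) c, hcφ, hord₁]
          have hGBc : ∀ g : G j, g ∉ (φ j).range → g⁻¹ * (φ j c) * g ∉ (φ j).range :=
            fun g hg => hGB (φ j c) ⟨c, rfl⟩ hordc g hg
          have hfst2 : (⟨⟨i₂, g₂⟩ :: t', hwt_ne, hwt_ch⟩ :
              Monoid.CoprodI.Word G).fstIdx = some j := by
            simp [Monoid.CoprodI.Word.fstIdx, hi₂j]
          apply stepJ hφ hij _ hwtred hfst2 c hGBc
          have h4 : PushoutI.of (φ := φ) j (φ j c) = PushoutI.of (φ := φ) i₁ a₁ := by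
            rw [PushoutI.of_apply_eq_base (φ := φ) j c, ← hcφ,
              PushoutI.of_apply_eq_base (φ := φ) i₁ c]
          rw [show ((⟨⟨i₂, g₂⟩ :: t', hwt_ne, hwt_ch⟩ :
            Monoid.CoprodI.Word G)).prod = lp (⟨i₂, g₂⟩ :: t') from rfl, h4]
          exact hc1
        · refine conj_not_in_range hφ
            (⟨⟨i₂, g₂⟩ :: t', hwt_ne, hwt_ch⟩ : Monoid.CoprodI.Word G) hwtred ?_ ha₁r
            (Or.inr (by simp)) hc1
          simp [Monoid.CoprodI.Word.fstIdx]
          exact fun h2 => hi₂ h2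
    · -- first letter has index j
      have hi₁j : i₁ = j := (hall i₁).resolve_left hi₁
      by_cases ha₀r : a₀ ∈ (φ i).range
      · obtain ⟨c, hcφ⟩ := ha₀r
        have hordc : orderOf (φ j c) = r := by
          rw [orderOf_injective (φ j) (hφ j) c,
            ← orderOf_injective (φ i) (hφ i) c, hcφ, hord₀]
        have hGBc : ∀ g : G j, g ∉ (φ j).range → g⁻¹ * (φ j c) * g ∉ (φ j).range :=
          fun g hg => hGB (φ j c) ⟨c, rfl⟩ hordc g hg
        have hfst2 : (⟨⟨i₁, g₁⟩ :: t, hne, hch⟩ :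
            Monoid.CoprodI.Word G).fstIdx = some j := by
          simp [Monoid.CoprodI.Word.fstIdx, hi₁j]
        apply stepJ hφ hij _ hred hfst2 c hGBc
        have h4 : PushoutI.of (φ := φ) j (φ j c) = PushoutI.of (φ := φ) i a₀ := by
          rw [PushoutI.of_apply_eq_base (φ := φ) j c, ← hcφ,
            PushoutI.of_apply_eq_base (φ := φ) i c]
        rw [h4]
        exact hc
      · refine conj_not_in_range hφ
          (⟨⟨i₁, g₁⟩ :: t, hne, hch⟩ : Monoid.CoprodI.Word G) hred ?_ ha₀r
          (Or.inr (by simp)) hc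
        simp [Monoid.CoprodI.Word.fstIdx]
        exact fun h2 => hi₁ h2

/-- The core ping-pong lemma: if `x ∉ (of i).range` and `a : G i` has order `r`,
then `x⁻¹ * of i a * x ∉ (of i).range`, given the group-theoretic hypothesis on `G j`. -/
theorem core (hφ : ∀ i, Injective (φ i)) {i j : ι} (hij : i ≠ j)
    (hall : ∀ k : ι, k = i ∨ k = j) {r : ℕ}
    (hGB : ∀ a : G j, a ∈ (φ j).range → orderOf a = r →
      ∀ g : G j, g ∉ (φ j).range → g⁻¹ * a * g ∉ (φ j).range)
    (x : Monoid.PushoutI φ) (hx : x ∉ (PushoutI.of (φ := φ) i).range)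
    (a : G i) (hord : orderOf a = r)
    (hconj : x⁻¹ * PushoutI.of (φ := φ) i a * x ∈ (PushoutI.of (φ := φ) i).range) :
    False := by
  classical
  obtain ⟨d⟩ := Monoid.PushoutI.NormalWord.transversal_nonempty φ hφ
  set n : PushoutI.NormalWord d := x • PushoutI.NormalWord.empty with hn
  have hprod : n.prod = x := by
    rw [hn, PushoutI.NormalWord.prod_smul, PushoutI.NormalWord.prod_empty, mul_one]
  have hxw : x = PushoutI.base φ n.head * PushoutI.ofCoprodI (φ := φ) n.toWord.prod := by
    rw [← hprod]; rfl
  -- the word of the normal form is reduced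
  have hset : ∀ (k : ι) (g : G k), g ∈ d.set k → g ≠ 1 → g ∉ (φ k).range := by
    intro k g hg h1 hr
    apply h1
    have h2 := (d.compl k).1 (a₁ := (⟨⟨g, hr⟩, ⟨1, d.one_mem k⟩⟩ :
        ((φ k).range : Set (G k)) × (d.set k)))
      (a₂ := (⟨⟨1, one_mem _⟩, ⟨g, hg⟩⟩ : ((φ k).range : Set (G k)) × (d.set k)))
      (by simp)
    exact congrArg (fun p => (p.1 : G k)) h2
  have hred : PushoutI.Reduced φ n.toWord := by
    intro p hp
    have h1 : p.2 ≠ 1 := n.toWord.ne_one p hp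
    have h2 : p.2 ∈ d.set p.1 := n.normalized p.1 p.2 (by
      cases p; exact hp)
    exact hset p.1 p.2 h2 h1
  set P := PushoutI.ofCoprodI (φ := φ) n.toWord.prod with hPdef
  have hP : P ∉ (PushoutI.of (φ := φ) i).range := by
    rintro ⟨u, hu⟩
    apply hx
    refine ⟨φ i n.head * u, ?_⟩
    rw [map_mul, hu, PushoutI.of_apply_eq_base (φ := φ) i n.head, ← hxw]
  set a₀ := (φ i n.head)⁻¹ * a * (φ i n.head) with ha₀def
  have hord₀ : orderOf a₀ = r := by rw [ha₀def, orderOf_conj'', hord]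
  have hc₀ : P⁻¹ * PushoutI.of (φ := φ) i a₀ * P ∈ (PushoutI.of (φ := φ) i).range := by
    have h3 : x⁻¹ * PushoutI.of (φ := φ) i a * x =
        P⁻¹ * PushoutI.of (φ := φ) i a₀ * P := by
      rw [hxw, ← PushoutI.of_apply_eq_base (φ := φ) i n.head, ha₀def,
        map_mul, map_mul, map_inv]
      group
    rw [← h3]
    exact hconj
  exact core_word hφ hij hall hGB n.toWord hred hP a₀ hord₀ hc₀

/-- Concrete group theory: conjugating an element of order `r` lying in `R` by an
element outside `R = normalizer S` moves it out of `R`, when `S` is the unique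
subgroup of `R` of cardinality `r`. -/
theorem conj_step {Γ : Type*} [Group Γ] {R S : Subgroup Γ} {r : ℕ}
    (huniq : ∀ D : Subgroup Γ, D ≤ R → Nat.card D = r → D = S)
    (hnorm : Subgroup.normalizer (S : Set Γ) = R)
    {a : Γ} (haR : a ∈ R) (hord : orderOf a = r)
    {g : Γ} (hg : g ∉ R) : g⁻¹ * a * g ∉ R := by
  intro hmem
  have h1 : Subgroup.zpowers a = S :=
    huniq _ (Subgroup.zpowers_le.2 haR) (by rw [Nat.card_zpowers, hord])
  have hord2 : orderOf (g⁻¹ * a * g) = r := by rw [orderOf_conj'', hord]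
  have h2 : Subgroup.zpowers (g⁻¹ * a * g) = S :=
    huniq _ (Subgroup.zpowers_le.2 hmem) (by rw [Nat.card_zpowers, hord2])
  apply hg
  rw [← hnorm]
  refine inv_mem_iff.1 (Subgroup.mem_normalizer_iff.2 fun h => ?_)
  have h5 : ∀ k : ℤ, (g⁻¹ * a * g) ^ k = g⁻¹ * a ^ k * g := by
    intro k
    have h6 : (g⁻¹ * a * g⁻¹⁻¹) ^ k = g⁻¹ * a ^ k * g⁻¹⁻¹ := conj_zpow
    rwa [inv_inv] at h6
  constructor
  · intro hh
    have hh2 : h ∈ Subgroup.zpowers a := h1 ▸ hh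
    obtain ⟨k, rfl⟩ := Subgroup.mem_zpowers_iff.1 hh2
    have h6 : g⁻¹ * a ^ k * g ∈ Subgroup.zpowers (g⁻¹ * a * g) :=
      Subgroup.mem_zpowers_iff.2 ⟨k, h5 k⟩
    rw [h2] at h6
    simpa [inv_inv] using h6
  · intro hh
    have hh2 : g⁻¹ * h * g ∈ Subgroup.zpowers (g⁻¹ * a * g) := by
      rw [h2]
      simpa [inv_inv] using hh
    obtain ⟨k, hk⟩ := Subgroup.mem_zpowers_iff.1 hh2
    rw [h5 k] at hk
    have h7 : a ^ k = h := mul_left_cancel (mul_right_cancel hk)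
    rw [← h1]
    exact h7 ▸ Subgroup.mem_zpowers_iff.2 ⟨k, rfl⟩

end AmalgamAux

/-- For every `x ∈ X` not lying in (the image of) `A`, the intersection `A ∩ xAx⁻¹`
contains no element of order `q`; symmetrically, for every `y ∈ X` not lying in `B`,
the intersection `B ∩ yBy⁻¹` contains no element of order `p`. -/
theorem amalgam_conjugate_intersection
    (p q : ℕ) (hp : p.Prime) (hq : q.Prime) (hpodd : Odd p) (hqodd : Odd q)
    (hpq : p ≠ q)
    {A B C : Type} [Group A] [Group B] [Group C] [Finite A] [Finite B]
    -- `Q` is a nonabelian normal Sylow `q`-subgroup of `A`,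
    -- `P` is a nonabelian normal Sylow `p`-subgroup of `B`
    (Q : Sylow q A) (P : Sylow p B)
    (hQnormal : (Q : Subgroup A).Normal) (hPnormal : (P : Subgroup B).Normal)
    (hQnonab : ¬ IsMulCommutative (Q : Subgroup A))
    (hPnonab : ¬ IsMulCommutative (P : Subgroup B))
    -- `ZQ = Z(Q)` has order `q` and `ZP = Z(P)` has order `p`
    (ZQ : Subgroup A)
    (hZQ : ZQ = (Q : Subgroup A) ⊓ Subgroup.centralizer ((Q : Subgroup A) : Set A))
    (hZQcard : Nat.card ZQ = q)
    (ZP : Subgroup B)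
    (hZP : ZP = (P : Subgroup B) ⊓ Subgroup.centralizer ((P : Subgroup B) : Set B))
    (hZPcard : Nat.card ZP = p)
    -- `C` is cyclic of order `p * q`, embedded in `A` and `B`
    (hC : IsCyclic C) (hCcard : Nat.card C = p * q)
    (ιA : C →* A) (ιB : C →* B)
    (hιA : Function.Injective ιA) (hιB : Function.Injective ιB)
    -- `ιA(C)` is self-normalizing in `A`, contains `Z(Q)` as its unique subgroup of
    -- order `q`, and `A = Q * ιA(C)`
    (hCA_selfnorm : Subgroup.normalizer (ιA.range : Set A) = ιA.range)
    (hZQle : ZQ ≤ ιA.range)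
    (hZQuniq : ∀ D : Subgroup A, D ≤ ιA.range → Nat.card D = q → D = ZQ)
    (hAfact : ∀ a : A, ∃ u ∈ (Q : Subgroup A), ∃ c : C, a = u * ιA c)
    -- `ιB(C)` is self-normalizing in `B`, contains `Z(P)` as its unique subgroup of
    -- order `p`, and `B = P * ιB(C)`
    (hCB_selfnorm : Subgroup.normalizer (ιB.range : Set B) = ιB.range)
    (hZPle : ZP ≤ ιB.range)
    (hZPuniq : ∀ D : Subgroup B, D ≤ ιB.range → Nat.card D = p → D = ZP)
    (hBfact : ∀ b : B, ∃ u ∈ (P : Subgroup B), ∃ c : C, b = u * ιB c)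
    -- `SpA` is the unique subgroup of order `p` of `ιA(C)`, and
    -- `SqB` is the unique subgroup of order `q` of `ιB(C)`
    (SpA : Subgroup A) (hSpA_le : SpA ≤ ιA.range) (hSpA_card : Nat.card SpA = p)
    (hSpA_uniq : ∀ D : Subgroup A, D ≤ ιA.range → Nat.card D = p → D = SpA)
    (SqB : Subgroup B) (hSqB_le : SqB ≤ ιB.range) (hSqB_card : Nat.card SqB = q)
    (hSqB_uniq : ∀ D : Subgroup B, D ≤ ιB.range → Nat.card D = q → D = SqB)
    -- the normalizer conditions `N_B(S_q) = ιB(C)` and `N_A(S_p) = ιA(C)`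
    (hSqB_norm : Subgroup.normalizer (SqB : Set B) = ιB.range)
    (hSpA_norm : Subgroup.normalizer (SpA : Set A) = ιA.range)
    -- the commutator conditions `[Q, S_p] = Q` and `[P, S_q] = P`
    (hQcommutator : ⁅(Q : Subgroup A), SpA⁆ = (Q : Subgroup A))
    (hPcommutator : ⁅(P : Subgroup B), SqB⁆ = (P : Subgroup B))
    :
    (∀ x : Amalgam ιA ιB, x ∉ (Amalgam.inA ιA ιB).range →
      ∀ g : Amalgam ιA ιB, g ∈ (Amalgam.inA ιA ιB).range →
        x⁻¹ * g * x ∈ (Amalgam.inA ιA ιB).range → orderOf g ≠ q) ∧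
    (∀ y : Amalgam ιA ιB, y ∉ (Amalgam.inB ιA ιB).range →
      ∀ g : Amalgam ιA ιB, g ∈ (Amalgam.inB ιA ιB).range →
        y⁻¹ * g * y ∈ (Amalgam.inB ιA ιB).range → orderOf g ≠ p) := by
  have hφ : ∀ b : Bool, Function.Injective ⇑(amalgamMaps ιA ιB b) := by
    intro b
    cases b
    · exact hιB
    · exact hιA
  have hinA : Amalgam.inA ιA ιB = Monoid.PushoutI.of (φ := amalgamMaps ιA ιB) true := rfl
  have hinB : Amalgam.inB ιA ιB = Monoid.PushoutI.of (φ := amalgamMaps ιA ιB) false := rfl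
  constructor
  · intro x hx g hg hconj hordq
    obtain ⟨a, rfl⟩ := hg
    have horda : orderOf a = q := by
      rw [← hordq, hinA]
      exact (orderOf_injective (Monoid.PushoutI.of (φ := amalgamMaps ιA ιB) true)
        (Monoid.PushoutI.of_injective hφ true) a).symm
    refine AmalgamAux.core hφ (i := true) (j := false) (by simp)
      (fun k => by cases k <;> simp) (r := q) ?_ x ?_ a horda ?_
    · intro b hb hordb g hgnot
      exact AmalgamAux.conj_step hSqB_uniq hSqB_norm hb hordb hgnot
    · rw [← hinA]
      exact hx
    · rw [← hinA]
      exact hconj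
  · intro x hx g hg hconj hordp
    obtain ⟨a, rfl⟩ := hg
    have horda : orderOf a = p := by
      rw [← hordp, hinB]
      exact (orderOf_injective (Monoid.PushoutI.of (φ := amalgamMaps ιA ιB) false)
        (Monoid.PushoutI.of_injective hφ false) a).symm
    refine AmalgamAux.core hφ (i := false) (j := true) (by simp)
      (fun k => by cases k <;> simp) (r := p) ?_ x ?_ a horda ?_
    · intro b hb hordb g hgnot
      exact AmalgamAux.conj_step hSpA_uniq hSpA_norm hb hordb hgnot
    · rw [← hinB]
      exact hx
    · rw [← hinB]
      exact hconj
end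

section
/- For every nonidentity element z of Z(Q), the centralizer of z in X equals A: C_X(z) = A. Symmetrically, for every nonidentity element w of Z(P), C_X(w) = B. -/
open Monoid PushoutI

namespace AmalgamAux

variable {ι : Type*} {G : ι → Type*} [∀ i, Group (G i)] {H : Type*} [Group H]
  {φ : ∀ i, H →* G i}

/-- Product in the pushout of a list of letters. -/
def listProd (φ : ∀ i, H →* G i) (l : List (Σ i, G i)) : Monoid.PushoutI φ :=
  (l.map fun g => Monoid.PushoutI.of (φ := φ) g.1 g.2).prod

lemma listProd_nil : listProd φ [] = 1 := rfl

lemma listProd_append (l₁ l₂ : List (Σ i, G i)) :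
    listProd φ (l₁ ++ l₂) = listProd φ l₁ * listProd φ l₂ := by
  simp [listProd]

lemma listProd_singleton (g : Σ i, G i) :
    listProd φ [g] = Monoid.PushoutI.of (φ := φ) g.1 g.2 := by
  simp [listProd]

lemma listProd_revInv (l : List (Σ i, G i)) :
    listProd φ (l.reverse.map fun s => ⟨s.1, s.2⁻¹⟩) = (listProd φ l)⁻¹ := by
  induction l with
  | nil => simp [listProd]
  | cons a l ih =>
    rw [List.reverse_cons, List.map_append, listProd_append, ih]
    have h1 : listProd φ (a :: l) = Monoid.PushoutI.of (φ := φ) a.1 a.2 * listProd φ l := by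
      simp [listProd]
    have h2 : listProd φ ([⟨a.1, a.2⁻¹⟩] : List (Σ i, G i))
        = (Monoid.PushoutI.of (φ := φ) a.1 a.2)⁻¹ := by
      rw [listProd_singleton]; simp
    simp only [List.map_cons, List.map_nil]
    rw [h2, h1, mul_inv_rev]

lemma ofCoprodI_word_prod (w : Monoid.CoprodI.Word G) :
    Monoid.PushoutI.ofCoprodI (φ := φ) w.prod = listProd φ w.toList := by
  rw [Monoid.CoprodI.Word.prod, listProd, map_list_prod, List.map_map]
  rfl

lemma core_s6 (hinj : ∀ i, Function.Injective (φ i)) (i : ι) (c₀ : H)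
    (hcomm : ∀ g : G i, g * φ i c₀ = φ i c₀ * g)
    (hother : ∀ j, j ≠ i → ∀ g : G j, g * φ j c₀ * g⁻¹ ∈ (φ j).range → g ∈ (φ j).range)
    (l : List (Σ i, G i)) :
    l.Chain' (fun a b => a.1 ≠ b.1) →
    (∀ g ∈ l, g.2 ∉ (φ g.1).range) →
    listProd φ l * Monoid.PushoutI.base φ c₀ * (listProd φ l)⁻¹ = Monoid.PushoutI.base φ c₀ →
    listProd φ l ∈ (Monoid.PushoutI.of (φ := φ) i).range := by
  induction l using List.reverseRecOn with
  | nil =>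
    intro _ _ _
    rw [listProd_nil]; exact one_mem _
  | append_singleton l' g ih =>
    intro hchain hred hconj
    obtain ⟨j, gg⟩ := g
    have hg2 : gg ∉ (φ j).range := hred ⟨j, gg⟩ (by simp)
    obtain ⟨hch1, hch2, hch3⟩ := List.isChain_append.mp hchain
    have hlast : ∀ x ∈ l'.getLast?, x.1 ≠ j := by
      intro x hx
      exact hch3 x hx ⟨j, gg⟩ rfl
    rw [listProd_append, listProd_singleton] at hconj ⊢
    dsimp only at hconj ⊢
    set W := listProd φ l' with hW
    by_cases hji : j = i
    · subst hji
      have hcz : Monoid.PushoutI.of (φ := φ) j gg * Monoid.PushoutI.base φ c₀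
          = Monoid.PushoutI.base φ c₀ * Monoid.PushoutI.of (φ := φ) j gg := by
        rw [← Monoid.PushoutI.of_apply_eq_base φ j c₀, ← map_mul, ← map_mul, hcomm]
      have hconj' : W * Monoid.PushoutI.base φ c₀ * W⁻¹ = Monoid.PushoutI.base φ c₀ := by
        have hx : Monoid.PushoutI.of (φ := φ) j gg * Monoid.PushoutI.base φ c₀ *
            (Monoid.PushoutI.of (φ := φ) j gg)⁻¹ = Monoid.PushoutI.base φ c₀ := by
          rw [hcz, mul_inv_cancel_right]
        have h2 : (W * Monoid.PushoutI.of (φ := φ) j gg) * Monoid.PushoutI.base φ c₀ *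
            (W * Monoid.PushoutI.of (φ := φ) j gg)⁻¹
            = W * (Monoid.PushoutI.of (φ := φ) j gg * Monoid.PushoutI.base φ c₀ *
              (Monoid.PushoutI.of (φ := φ) j gg)⁻¹) * W⁻¹ := by group
        rw [hx] at h2
        rw [← h2]
        exact hconj
      have hmem := ih hch1 (fun x hx => hred x (List.mem_append_left _ hx)) hconj'
      exact mul_mem hmem ⟨gg, rfl⟩
    · exfalso
      set b := gg * φ j c₀ * gg⁻¹ with hb_def
      by_cases hb : b ∈ (φ j).range
      · exact hg2 (hother j hji gg hb)
      · have hkey : W * Monoid.PushoutI.of (φ := φ) j b * W⁻¹ = Monoid.PushoutI.base φ c₀ := by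
          have hofb : Monoid.PushoutI.of (φ := φ) j b
              = Monoid.PushoutI.of (φ := φ) j gg * Monoid.PushoutI.base φ c₀ *
                (Monoid.PushoutI.of (φ := φ) j gg)⁻¹ := by
            rw [← Monoid.PushoutI.of_apply_eq_base φ j c₀, ← map_mul, ← map_inv, ← map_mul]
          have h2 : (W * Monoid.PushoutI.of (φ := φ) j gg) * Monoid.PushoutI.base φ c₀ *
              (W * Monoid.PushoutI.of (φ := φ) j gg)⁻¹
              = W * (Monoid.PushoutI.of (φ := φ) j gg * Monoid.PushoutI.base φ c₀ *
                (Monoid.PushoutI.of (φ := φ) j gg)⁻¹) * W⁻¹ := by group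
          rw [hofb, ← h2]
          exact hconj
        -- Build the reduced word
        set rev : List (Σ i, G i) := l'.reverse.map fun s => ⟨s.1, s.2⁻¹⟩ with hrev
        set L : List (Σ i, G i) := l' ++ ⟨j, b⟩ :: rev with hL
        have hredL : ∀ x ∈ L, x.2 ∉ (φ x.1).range := by
          intro x hx
          rw [hL, List.mem_append, List.mem_cons] at hx
          rcases hx with hx | hx | hx
          · exact hred x (List.mem_append_left _ hx)
          · subst hx; exact hb
          · rw [hrev, List.mem_map] at hx
            obtain ⟨s, hs, rfl⟩ := hx
            rw [List.mem_reverse] at hs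
            intro hmem
            exact hred s (List.mem_append_left _ hs) ((inv_mem_iff).mp hmem)
        have hchainrev : rev.Chain' (fun a b => a.1 ≠ b.1) := by
          unfold List.Chain'
          rw [hrev]
          rw [List.isChain_map]
          rw [List.isChain_reverse]
          exact hch1.imp fun a b h => Ne.symm h
        have hchainL : L.Chain' (fun a b => a.1 ≠ b.1) := by
          unfold List.Chain'
          rw [hL, List.isChain_append]
          refine ⟨hch1, ?_, ?_⟩
          · rw [List.isChain_cons]
            refine ⟨?_, hchainrev⟩
            intro y hy
            rw [hrev, List.head?_map, List.head?_reverse] at hy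
            obtain ⟨x, hx, rfl⟩ := Option.map_eq_some_iff.mp hy
            exact (hlast x hx).symm
          · intro x hx y hy
            simp only [List.head?_cons, Option.mem_some_iff] at hy
            subst hy
            exact hlast x hx
        set w : Monoid.CoprodI.Word G :=
          ⟨L, fun x hx h1 => hredL x hx (by rw [h1]; exact one_mem _), hchainL⟩ with hw
        have hwred : Monoid.PushoutI.Reduced φ w := fun x hx => hredL x hx
        have hprod : Monoid.PushoutI.ofCoprodI (φ := φ) w.prod = Monoid.PushoutI.base φ c₀ := by
          rw [ofCoprodI_word_prod]
          show listProd φ L = _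
          have hLeq : L = (l' ++ [⟨j, b⟩]) ++ rev := by rw [hL]; simp
          rw [hLeq, listProd_append, listProd_append, listProd_singleton, hrev, listProd_revInv]
          exact hkey
        have hempty := hwred.eq_empty_of_mem_range hinj ⟨c₀, hprod.symm⟩
        have hLnil : L = [] := congrArg Monoid.CoprodI.Word.toList hempty
        rw [hL] at hLnil
        simp at hLnil

lemma exists_decomp (hinj : ∀ i, Function.Injective (φ i)) (x : Monoid.PushoutI φ) :
    ∃ (h : H) (l : List (Σ i, G i)), l.Chain' (fun a b => a.1 ≠ b.1) ∧
      (∀ g ∈ l, g.2 ∉ (φ g.1).range) ∧ x = Monoid.PushoutI.base φ h * listProd φ l := by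
  classical
  obtain ⟨d⟩ := Monoid.PushoutI.NormalWord.transversal_nonempty φ hinj
  set w := Monoid.PushoutI.NormalWord.equiv (d := d) x with hwdef
  have hx : w.prod = x := (Monoid.PushoutI.NormalWord.equiv (d := d)).symm_apply_apply x
  refine ⟨w.head, w.toList, w.toWord.chain_ne, ?_, ?_⟩
  · rintro ⟨i, g⟩ hg hrange
    have hset : g ∈ d.set i := w.normalized i g hg
    have hne1 : g ≠ 1 := w.toWord.ne_one ⟨i, g⟩ hg
    have huniq := ((d.compl i).existsUnique g).unique
      (y₁ := (⟨⟨g, hrange⟩, ⟨1, d.one_mem i⟩⟩ : ((φ i).range : Set (G i)) × (d.set i)))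
      (y₂ := (⟨⟨1, one_mem _⟩, ⟨g, hset⟩⟩ : ((φ i).range : Set (G i)) × (d.set i)))
      (by simp) (by simp)
    apply hne1
    have := congrArg (fun p => (p.1 : G i)) huniq
    simpa using this
  · rw [← hx]
    rw [Monoid.PushoutI.NormalWord.prod, ofCoprodI_word_prod]

lemma centralizer_base (hinj : ∀ i, Function.Injective (φ i)) (i : ι) (c₀ : H)
    (hHc : ∀ h : H, h * c₀ = c₀ * h)
    (hcomm : ∀ g : G i, g * φ i c₀ = φ i c₀ * g)
    (hother : ∀ j, j ≠ i → ∀ g : G j, g * φ j c₀ * g⁻¹ ∈ (φ j).range → g ∈ (φ j).range) :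
    Subgroup.centralizer {Monoid.PushoutI.base (φ := φ) c₀}
      = (Monoid.PushoutI.of (φ := φ) i).range := by
  apply le_antisymm
  · intro x hx
    rw [Subgroup.mem_centralizer_iff] at hx
    have hx' : Monoid.PushoutI.base (φ := φ) c₀ * x = x * Monoid.PushoutI.base (φ := φ) c₀ :=
      hx _ rfl
    obtain ⟨h, l, hchain, hred, rfl⟩ := exists_decomp hinj x
    have hbc : Monoid.PushoutI.base (φ := φ) c₀ * Monoid.PushoutI.base (φ := φ) h
        = Monoid.PushoutI.base (φ := φ) h * Monoid.PushoutI.base (φ := φ) c₀ := by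
      rw [← map_mul, ← map_mul, hHc]
    have h1 : Monoid.PushoutI.base (φ := φ) c₀ * listProd φ l
        = listProd φ l * Monoid.PushoutI.base (φ := φ) c₀ := by
      have h2 := hx'
      rw [← mul_assoc, hbc, mul_assoc, mul_assoc] at h2
      exact mul_left_cancel h2
    have hWζ : listProd φ l * Monoid.PushoutI.base φ c₀ * (listProd φ l)⁻¹
        = Monoid.PushoutI.base φ c₀ := by
      rw [← h1, mul_assoc, mul_inv_cancel, mul_one]
    obtain ⟨a, ha⟩ := core_s6 hinj i c₀ hcomm hother l hchain hred hWζ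
    exact ⟨φ i h * a, by rw [map_mul, ha, Monoid.PushoutI.of_apply_eq_base]⟩
  · rintro _ ⟨g, rfl⟩
    rw [Subgroup.mem_centralizer_iff]
    rintro y hy
    simp only [Set.mem_singleton_iff] at hy
    subst hy
    rw [← Monoid.PushoutI.of_apply_eq_base φ i c₀, ← map_mul, ← map_mul, hcomm]

end AmalgamAux

open AmalgamAux in
/-- For every nonidentity element `z` of `Z(Q)`, the centralizer of `z` in `X`
equals `A`; symmetrically, for every nonidentity element `w` of `Z(P)`, its
centralizer in `X` equals `B`. -/
theorem amalgam_centralizer_of_center_element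
    (p q : ℕ) (hp : p.Prime) (hq : q.Prime) (hpodd : Odd p) (hqodd : Odd q)
    (hpq : p ≠ q)
    {A B C : Type} [Group A] [Group B] [Group C] [Finite A] [Finite B]
    -- `Q` is a nonabelian normal Sylow `q`-subgroup of `A`,
    -- `P` is a nonabelian normal Sylow `p`-subgroup of `B`
    (Q : Sylow q A) (P : Sylow p B)
    (hQnormal : (Q : Subgroup A).Normal) (hPnormal : (P : Subgroup B).Normal)
    (hQnonab : ¬ IsMulCommutative (Q : Subgroup A))
    (hPnonab : ¬ IsMulCommutative (P : Subgroup B))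
    -- `ZQ = Z(Q)` has order `q` and `ZP = Z(P)` has order `p`
    (ZQ : Subgroup A)
    (hZQ : ZQ = (Q : Subgroup A) ⊓ Subgroup.centralizer ((Q : Subgroup A) : Set A))
    (hZQcard : Nat.card ZQ = q)
    (ZP : Subgroup B)
    (hZP : ZP = (P : Subgroup B) ⊓ Subgroup.centralizer ((P : Subgroup B) : Set B))
    (hZPcard : Nat.card ZP = p)
    -- `C` is cyclic of order `p * q`, embedded in `A` and `B`
    (hC : IsCyclic C) (hCcard : Nat.card C = p * q)
    (ιA : C →* A) (ιB : C →* B)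
    (hιA : Function.Injective ιA) (hιB : Function.Injective ιB)
    -- `ιA(C)` is self-normalizing in `A`, contains `Z(Q)` as its unique subgroup of
    -- order `q`, and `A = Q * ιA(C)`
    (hCA_selfnorm : Subgroup.normalizer (ιA.range : Set A) = ιA.range)
    (hZQle : ZQ ≤ ιA.range)
    (hZQuniq : ∀ D : Subgroup A, D ≤ ιA.range → Nat.card D = q → D = ZQ)
    (hAfact : ∀ a : A, ∃ u ∈ (Q : Subgroup A), ∃ c : C, a = u * ιA c)
    -- `ιB(C)` is self-normalizing in `B`, contains `Z(P)` as its unique subgroup of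
    -- order `p`, and `B = P * ιB(C)`
    (hCB_selfnorm : Subgroup.normalizer (ιB.range : Set B) = ιB.range)
    (hZPle : ZP ≤ ιB.range)
    (hZPuniq : ∀ D : Subgroup B, D ≤ ιB.range → Nat.card D = p → D = ZP)
    (hBfact : ∀ b : B, ∃ u ∈ (P : Subgroup B), ∃ c : C, b = u * ιB c)
    -- `SpA` is the unique subgroup of order `p` of `ιA(C)`, and
    -- `SqB` is the unique subgroup of order `q` of `ιB(C)`
    (SpA : Subgroup A) (hSpA_le : SpA ≤ ιA.range) (hSpA_card : Nat.card SpA = p)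
    (hSpA_uniq : ∀ D : Subgroup A, D ≤ ιA.range → Nat.card D = p → D = SpA)
    (SqB : Subgroup B) (hSqB_le : SqB ≤ ιB.range) (hSqB_card : Nat.card SqB = q)
    (hSqB_uniq : ∀ D : Subgroup B, D ≤ ιB.range → Nat.card D = q → D = SqB)
    -- the normalizer conditions `N_B(S_q) = ιB(C)` and `N_A(S_p) = ιA(C)`
    (hSqB_norm : Subgroup.normalizer (SqB : Set B) = ιB.range)
    (hSpA_norm : Subgroup.normalizer (SpA : Set A) = ιA.range)
    -- the commutator conditions `[Q, S_p] = Q` and `[P, S_q] = P`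
    (hQcommutator : ⁅(Q : Subgroup A), SpA⁆ = (Q : Subgroup A))
    (hPcommutator : ⁅(P : Subgroup B), SqB⁆ = (P : Subgroup B))
    :
    (∀ z : Amalgam ιA ιB, z ∈ ZQ.map (Amalgam.inA ιA ιB) → z ≠ 1 →
      Subgroup.centralizer {z} = (Amalgam.inA ιA ιB).range) ∧
    (∀ w : Amalgam ιA ιB, w ∈ ZP.map (Amalgam.inB ιA ιB) → w ≠ 1 →
      Subgroup.centralizer {w} = (Amalgam.inB ιA ιB).range) := by
  have hinjBool : ∀ i : Bool, Function.Injective ((amalgamMaps ιA ιB) i) := by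
    intro i
    cases i
    · exact hιB
    · exact hιA
  have hCmul : ∀ a b : C, a * b = b * a := by
    obtain ⟨g, hg⟩ := hC.exists_generator
    intro a b
    obtain ⟨m, hm⟩ := Subgroup.mem_zpowers_iff.mp (hg a)
    obtain ⟨n, hn⟩ := Subgroup.mem_zpowers_iff.mp (hg b)
    rw [← hm, ← hn, ← zpow_add, ← zpow_add, add_comm]
  constructor
  · rintro zX hzX hzX1
    obtain ⟨z, hzZQ, rfl⟩ := hzX
    obtain ⟨c₀, hc₀⟩ := hZQle hzZQ
    have hz1 : z ≠ 1 := by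
      rintro rfl
      exact hzX1 (map_one _)
    have hordz : orderOf z = q := by
      have h1 : orderOf z ∣ q := hZQcard ▸ Subgroup.orderOf_dvd_natCard ZQ hzZQ
      rcases (hq.eq_one_or_self_of_dvd _ h1) with h | h
      · exact absurd (orderOf_eq_one_iff.mp h) hz1
      · exact h
    have hordc : orderOf c₀ = q := by
      rw [← hordz, ← hc₀, orderOf_injective ιA hιA]
    have hzQmem : z ∈ (Q : Subgroup A) ⊓ Subgroup.centralizer ((Q : Subgroup A) : Set A) :=
      hZQ ▸ hzZQ
    have hzcent : ∀ u ∈ (Q : Subgroup A), u * z = z * u := fun u hu =>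
      Subgroup.mem_centralizer_iff.mp hzQmem.2 u hu
    have hcommA : ∀ a : A, a * ιA c₀ = ιA c₀ * a := by
      intro a
      obtain ⟨u, hu, c, rfl⟩ := hAfact a
      have h1 : u * ιA c₀ = ιA c₀ * u := by rw [hc₀]; exact hzcent u hu
      have h2 : ιA c * ιA c₀ = ιA c₀ * ιA c := by rw [← map_mul, ← map_mul, hCmul]
      rw [mul_assoc, h2, ← mul_assoc, h1, mul_assoc]
    have hotherB : ∀ b : B, b * ιB c₀ * b⁻¹ ∈ ιB.range → b ∈ ιB.range := by
      intro b hb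
      have hords : orderOf (ιB c₀) = q := by rw [orderOf_injective ιB hιB, hordc]
      have hT : Subgroup.zpowers (ιB c₀) = SqB :=
        hSqB_uniq _ (Subgroup.zpowers_le.mpr ⟨c₀, rfl⟩) (by rw [Nat.card_zpowers, hords])
      have hordconj : orderOf (b * ιB c₀ * b⁻¹) = q := by
        have h3 := orderOf_injective (MulAut.conj b).toMonoidHom
          (MulEquiv.injective (MulAut.conj b)) (ιB c₀)
        have h4 : (MulAut.conj b).toMonoidHom (ιB c₀) = b * ιB c₀ * b⁻¹ := rfl
        rw [h4] at h3
        rw [h3, hords]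
      have hT' : Subgroup.zpowers (b * ιB c₀ * b⁻¹) = SqB :=
        hSqB_uniq _ (Subgroup.zpowers_le.mpr hb) (by rw [Nat.card_zpowers, hordconj])
      have hbn : b ∈ Subgroup.normalizer (SqB : Set B) := by
        rw [Subgroup.mem_normalizer_iff]
        intro h
        constructor
        · intro hh
          rw [← hT] at hh
          obtain ⟨n, rfl⟩ := Subgroup.mem_zpowers_iff.mp hh
          rw [← hT']
          exact Subgroup.mem_zpowers_iff.mpr ⟨n, conj_zpow⟩
        · intro hh
          rw [← hT'] at hh
          obtain ⟨n, hn⟩ := Subgroup.mem_zpowers_iff.mp hh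
          rw [conj_zpow] at hn
          have h5 : (ιB c₀) ^ n = h := mul_left_cancel (mul_right_cancel hn)
          rw [← hT]
          exact Subgroup.mem_zpowers_iff.mpr ⟨n, h5⟩
      rw [hSqB_norm] at hbn
      exact hbn
    have key := AmalgamAux.centralizer_base (φ := amalgamMaps ιA ιB) hinjBool true c₀
      (fun h => hCmul h c₀) hcommA
      (by
        intro j hj
        cases j
        · exact hotherB
        · exact absurd rfl hj)
    have hzbase : (Amalgam.inA ιA ιB) z
        = Monoid.PushoutI.base (φ := amalgamMaps ιA ιB) c₀ := by
      rw [← hc₀]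
      exact Monoid.PushoutI.of_apply_eq_base (amalgamMaps ιA ιB) true c₀
    rw [hzbase]
    exact key
  · rintro wX hwX hwX1
    obtain ⟨w, hwZP, rfl⟩ := hwX
    obtain ⟨c₀, hc₀⟩ := hZPle hwZP
    have hw1 : w ≠ 1 := by
      rintro rfl
      exact hwX1 (map_one _)
    have hordw : orderOf w = p := by
      have h1 : orderOf w ∣ p := hZPcard ▸ Subgroup.orderOf_dvd_natCard ZP hwZP
      rcases (hp.eq_one_or_self_of_dvd _ h1) with h | h
      · exact absurd (orderOf_eq_one_iff.mp h) hw1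
      · exact h
    have hordc : orderOf c₀ = p := by
      rw [← hordw, ← hc₀, orderOf_injective ιB hιB]
    have hwPmem : w ∈ (P : Subgroup B) ⊓ Subgroup.centralizer ((P : Subgroup B) : Set B) :=
      hZP ▸ hwZP
    have hwcent : ∀ u ∈ (P : Subgroup B), u * w = w * u := fun u hu =>
      Subgroup.mem_centralizer_iff.mp hwPmem.2 u hu
    have hcommB : ∀ b : B, b * ιB c₀ = ιB c₀ * b := by
      intro b
      obtain ⟨u, hu, c, rfl⟩ := hBfact b
      have h1 : u * ιB c₀ = ιB c₀ * u := by rw [hc₀]; exact hwcent u hu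
      have h2 : ιB c * ιB c₀ = ιB c₀ * ιB c := by rw [← map_mul, ← map_mul, hCmul]
      rw [mul_assoc, h2, ← mul_assoc, h1, mul_assoc]
    have hotherA : ∀ a : A, a * ιA c₀ * a⁻¹ ∈ ιA.range → a ∈ ιA.range := by
      intro a ha
      have hords : orderOf (ιA c₀) = p := by rw [orderOf_injective ιA hιA, hordc]
      have hT : Subgroup.zpowers (ιA c₀) = SpA :=
        hSpA_uniq _ (Subgroup.zpowers_le.mpr ⟨c₀, rfl⟩) (by rw [Nat.card_zpowers, hords])
      have hordconj : orderOf (a * ιA c₀ * a⁻¹) = p := by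
        have h3 := orderOf_injective (MulAut.conj a).toMonoidHom
          (MulEquiv.injective (MulAut.conj a)) (ιA c₀)
        have h4 : (MulAut.conj a).toMonoidHom (ιA c₀) = a * ιA c₀ * a⁻¹ := rfl
        rw [h4] at h3
        rw [h3, hords]
      have hT' : Subgroup.zpowers (a * ιA c₀ * a⁻¹) = SpA :=
        hSpA_uniq _ (Subgroup.zpowers_le.mpr ha) (by rw [Nat.card_zpowers, hordconj])
      have han : a ∈ Subgroup.normalizer (SpA : Set A) := by
        rw [Subgroup.mem_normalizer_iff]
        intro h
        constructor
        · intro hh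
          rw [← hT] at hh
          obtain ⟨n, rfl⟩ := Subgroup.mem_zpowers_iff.mp hh
          rw [← hT']
          exact Subgroup.mem_zpowers_iff.mpr ⟨n, conj_zpow⟩
        · intro hh
          rw [← hT'] at hh
          obtain ⟨n, hn⟩ := Subgroup.mem_zpowers_iff.mp hh
          rw [conj_zpow] at hn
          have h5 : (ιA c₀) ^ n = h := mul_left_cancel (mul_right_cancel hn)
          rw [← hT]
          exact Subgroup.mem_zpowers_iff.mpr ⟨n, h5⟩
      rw [hSpA_norm] at han
      exact han
    have key := AmalgamAux.centralizer_base (φ := amalgamMaps ιA ιB) hinjBool false c₀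
      (fun h => hCmul h c₀) hcommB
      (by
        intro j hj
        cases j
        · exact absurd rfl hj
        · exact hotherA)
    have hwbase : (Amalgam.inB ιA ιB) w
        = Monoid.PushoutI.base (φ := amalgamMaps ιA ιB) c₀ := by
      rw [← hc₀]
      exact Monoid.PushoutI.of_apply_eq_base (amalgamMaps ιA ιB) false c₀
    rw [hwbase]
    exact key
end

section
/- Every nonidentity element z of Z(Q) is isolated in X: for every x ∈ X, if z commutes with x z x⁻¹ then x z x⁻¹ = z. Symmetrically, every nonidentity element of Z(P) is isolated in X. -/
section AuxIsolated
open Function Monoid.PushoutI Monoid.PushoutI.NormalWord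
open Monoid (PushoutI)
open Monoid.CoprodI (Word)

variable {H : Type} [Group H] {G : Bool → Type} [∀ i, Group (G i)] {φ : ∀ i, H →* G i}

/-- Lemma L: a reduced word whose product lies in the range of `of i` has index list `[]` or `[i]`. -/
theorem lemL (hφ : ∀ i, Injective (φ i)) {w : Word G} (hw : Reduced φ w) (i : Bool)
    (h : ofCoprodI w.prod ∈ (of (φ := φ) i).range) :
    w.toList.map Sigma.fst = [] ∨ w.toList.map Sigma.fst = [i] := by
  obtain ⟨g, hg⟩ := h
  by_cases hgr : g ∈ (φ i).range
  · left
    obtain ⟨c, rfl⟩ := hgr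
    have h2 : ofCoprodI w.prod ∈ (base φ).range := by
      rw [← hg, of_apply_eq_base]
      exact ⟨c, rfl⟩
    have := hw.eq_empty_of_mem_range hφ h2
    simp [this, Monoid.CoprodI.Word.empty]
  · right
    rcases transversal_nonempty φ hφ with ⟨d⟩
    have hg1 : g ≠ 1 := by rintro rfl; exact hgr (one_mem _)
    let u : Word G := ⟨[⟨i, g⟩], by simpa using hg1, List.isChain_singleton _⟩
    have hu : Reduced φ u := by
      intro l hl
      simp only [u, List.mem_singleton] at hl
      subst hl; exact hgr
    obtain ⟨w₁, hw₁, hw₁l⟩ := hw.exists_normalWord_prod_eq d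
    obtain ⟨w₂, hw₂, hw₂l⟩ := hu.exists_normalWord_prod_eq d
    have hup : ofCoprodI u.prod = of (φ := φ) i g := by
      simp [u, Monoid.CoprodI.Word.prod]
    have h12 : w₁ = w₂ := NormalWord.prod_injective (by rw [hw₁, hw₂, hup, hg])
    rw [← hw₁l, h12, hw₂l]
    rfl

/-- If all letters of a word have index `i`, its product lies in the range of `of i`. -/
theorem mem_of_range_of_all (w : Word G) (i : Bool)
    (h : ∀ l ∈ w.toList, Sigma.fst l = i) :
    ofCoprodI w.prod ∈ (of (φ := φ) i).range := by
  rw [Monoid.CoprodI.Word.prod, map_list_prod]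
  apply Subgroup.list_prod_mem
  intro x hx
  simp only [List.map_map, List.mem_map] at hx
  obtain ⟨l, hl, rfl⟩ := hx
  obtain rfl := h l hl
  simp only [comp_apply, ofCoprodI_of]
  exact ⟨l.2, rfl⟩

/-- Every element of the pushout is `base h` times the product of a reduced word. -/
theorem exists_base_mul_reduced (hφ : ∀ i, Injective (φ i)) (x : PushoutI φ) :
    ∃ (h : H) (w : Word G), Reduced φ w ∧ x = base φ h * ofCoprodI w.prod := by
  rcases transversal_nonempty φ hφ with ⟨d⟩
  classical
  let n : NormalWord d := x • NormalWord.empty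
  refine ⟨n.head, n.toWord, ?_, ?_⟩
  · intro l hl hrange
    have hset : l.2 ∈ d.set l.1 := n.normalized l.1 l.2 hl
    have hne : l.2 ≠ 1 := n.ne_one l hl
    obtain ⟨c, hc⟩ := hrange
    -- uniqueness in the complement forces l.2 = 1
    have hcompl := d.compl l.1
    have := hcompl.existsUnique l.2
    obtain ⟨p, _, huniq⟩ := this
    have h1 : ((⟨⟨l.2, ⟨c, hc⟩⟩, ⟨1, d.one_mem l.1⟩⟩ : ((φ l.1).range : Set (G l.1)) × d.set l.1)) ∈
        {p : ((φ l.1).range : Set (G l.1)) × d.set l.1 | p.1.1 * p.2.1 = l.2} := by exact mul_one _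
    have h2 : ((⟨⟨1, one_mem _⟩, ⟨l.2, hset⟩⟩ : ((φ l.1).range : Set (G l.1)) × d.set l.1)) ∈
        {p : ((φ l.1).range : Set (G l.1)) × d.set l.1 | p.1.1 * p.2.1 = l.2} := by exact one_mul _
    have := (huniq _ h1).trans (huniq _ h2).symm
    apply hne
    have := congrArg (fun p => (p.1.1 : G l.1)) this
    simpa using this
  · have : n.prod = x := by
      simp only [n, NormalWord.prod_smul, NormalWord.prod_empty, mul_one]
    rw [← this]
    rfl

/-- Conjugation of `base φ cz` by `of i a` fixes it, given centrality in `G i`. -/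
theorem of_conj_base {i : Bool} {cz : H}
    (hA : ∀ a : G i, a * φ i cz * a⁻¹ = φ i cz) (a : G i) :
    of (φ := φ) i a * base φ cz * (of (φ := φ) i a)⁻¹ = base φ cz := by
  rw [← of_apply_eq_base (φ := φ) i cz, ← map_inv, ← map_mul, ← map_mul, hA]

/-- Key induction: conjugating `base φ cz` by the product of a reduced word either fixes it
(when all letters have index `i`), or yields the product of a nonempty reduced word whose first
and last indices agree with the first index of `w`, and which is "long or a single foreign
letter". -/
theorem keyK (i : Bool) (cz : H) (hcz : cz ≠ 1)
    (hA : ∀ a : G i, a * φ i cz * a⁻¹ = φ i cz)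
    (hB : ∀ j, j ≠ i → ∀ b : G j, b * φ j cz * b⁻¹ ∈ (φ j).range → b ∈ (φ j).range)
    (w : Word G) (hw : Reduced φ w) :
    ((∀ l ∈ w.toList, Sigma.fst l = i) ∧
      ofCoprodI w.prod * base φ cz * (ofCoprodI w.prod)⁻¹ = base φ cz) ∨
    (∃ v : Word G, Reduced φ v ∧
      ofCoprodI w.prod * base φ cz * (ofCoprodI w.prod)⁻¹ = ofCoprodI v.prod ∧
      v.toList.head?.map Sigma.fst = w.toList.head?.map Sigma.fst ∧
      v.toList.getLast?.map Sigma.fst = w.toList.head?.map Sigma.fst ∧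
      (2 ≤ v.toList.length ∨ ∃ j, j ≠ i ∧ v.toList.map Sigma.fst = [j])) := by
  induction w using Monoid.CoprodI.Word.consRecOn with
  | empty =>
    left
    constructor
    · intro l hl; simp [Monoid.CoprodI.Word.empty] at hl
    · simp
  | cons j m w' hmw h1 ih =>
    have hwred : Reduced φ w' := fun l hl => hw l (List.mem_cons_of_mem _ hl)
    have hmr : m ∉ (φ j).range := hw ⟨j, m⟩ List.mem_cons_self
    have hprod : ofCoprodI (Monoid.CoprodI.Word.cons m w' hmw h1).prod
        = of (φ := φ) j m * ofCoprodI w'.prod := by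
      rw [Monoid.CoprodI.Word.prod_cons, map_mul, ofCoprodI_of]
    have hconj : ofCoprodI (Monoid.CoprodI.Word.cons m w' hmw h1).prod * base φ cz *
        (ofCoprodI (Monoid.CoprodI.Word.cons m w' hmw h1).prod)⁻¹
        = of (φ := φ) j m * (ofCoprodI w'.prod * base φ cz * (ofCoprodI w'.prod)⁻¹) *
          (of (φ := φ) j m)⁻¹ := by
      rw [hprod]; group
    rcases ih hwred with ⟨hall, hfix⟩ | ⟨v, hvred, hveq, hvhead, hvlast, hvlen⟩
    · -- the tail fixes `z`
      by_cases hj : j = i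
      · subst hj
        left
        refine ⟨?_, ?_⟩
        · intro l hl
          rcases List.mem_cons.1 hl with rfl | hl
          · rfl
          · exact hall l hl
        · rw [hconj, hfix, of_conj_base hA]
      · -- a single foreign letter appears
        right
        have hb' : m * φ j cz * m⁻¹ ∉ (φ j).range := fun hmem => hmr (hB j hj m hmem)
        have hb1 : m * φ j cz * m⁻¹ ≠ 1 := by
          intro h0
          exact hb' (by rw [h0]; exact one_mem _)
        refine ⟨⟨[⟨j, m * φ j cz * m⁻¹⟩], by simpa using hb1, List.isChain_singleton _⟩,
          ?_, ?_, ?_, ?_, ?_⟩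
        · intro l hl
          simp only [List.mem_singleton] at hl
          subst hl; exact hb'
        · rw [hconj, hfix, ← of_apply_eq_base (φ := φ) j cz, ← map_inv, ← map_mul, ← map_mul]
          simp [Monoid.CoprodI.Word.prod]
        · simp [Monoid.CoprodI.Word.cons]
        · simp [Monoid.CoprodI.Word.cons]
        · exact Or.inr ⟨j, hj, rfl⟩
    · -- the tail conjugates `z` to a nonempty reduced word `v`
      right
      have hvne : v.toList ≠ [] := by
        rcases hvlen with h2 | ⟨j', _, hj'⟩
        · intro h0; rw [h0] at h2; simp at h2
        · intro h0; rw [h0] at hj'; simp at hj'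
      have hwne : w'.toList ≠ [] := by
        intro h0
        rw [h0] at hvhead
        simp only [List.head?_nil, Option.map_none] at hvhead
        exact hvne (by simpa using (List.head?_eq_none_iff).1 (Option.map_eq_none_iff.1 hvhead))
      -- the head index of `w'` (= head and last index of `v`) is different from `j`
      obtain ⟨l₀, hl₀⟩ : ∃ l₀, w'.toList.head? = some l₀ := ⟨_, List.head?_eq_head hwne⟩
      have hj₀ : l₀.1 ≠ j := by
        intro h0
        apply hmw
        simp [Monoid.CoprodI.Word.fstIdx, hl₀, h0]
      have hvhead' : v.toList.head?.map Sigma.fst = some l₀.1 := by rw [hvhead, hl₀]; rfl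
      have hvlast' : v.toList.getLast?.map Sigma.fst = some l₀.1 := by rw [hvlast, hl₀]; rfl
      have hm1 : m ≠ 1 := h1
      have hminv : m⁻¹ ≠ 1 := by simpa using hm1
      -- build the new word  ⟨j,m⟩ :: v ++ [⟨j, m⁻¹⟩]
      have hchain : (⟨j, m⟩ :: v.toList ++ [⟨j, m⁻¹⟩] :
          List (Σ k, G k)).IsChain (fun a b => a.1 ≠ b.1) := by
        rw [List.isChain_append]
        refine ⟨?_, List.isChain_singleton _, ?_⟩
        · rw [List.isChain_cons]
          refine ⟨?_, v.chain_ne⟩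
          intro y hy
          have : (some y).map Sigma.fst = some l₀.1 := by rw [← hy]; exact hvhead'
          simp only [Option.map_some, Option.some.injEq] at this
          simp [this, Ne.symm hj₀]
        · intro x hx y hy
          have hy2 : y = ⟨j, m⁻¹⟩ := by have := hy; simpa using this.symm
          have hx' : v.toList.getLast? = some x := by
            rcases List.exists_cons_of_ne_nil hvne with ⟨a, t, hat⟩
            simpa [hat] using hx
          have hxl : (some x).map Sigma.fst = some l₀.1 := by rw [← hx']; exact hvlast'
          simp only [Option.map_some, Option.some.injEq] at hxl
          rw [hy2]
          simp [hxl, hj₀]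
      refine ⟨⟨⟨j, m⟩ :: v.toList ++ [⟨j, m⁻¹⟩], ?_, hchain⟩, ?_, ?_, ?_, ?_, ?_⟩
      · intro l hl
        rcases List.mem_cons.1 hl with rfl | hl
        · exact hm1
        · rcases List.mem_append.1 hl with hl | hl
          · exact v.ne_one l hl
          · simp only [List.mem_singleton] at hl; subst hl; exact hminv
      · intro l hl
        rcases List.mem_cons.1 hl with rfl | hl
        · exact hmr
        · rcases List.mem_append.1 hl with hl | hl
          · exact hvred l hl
          · simp only [List.mem_singleton] at hl; subst hl
            simpa using hmr
      · rw [hconj, hveq]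
        show _ = ofCoprodI (List.prod (((⟨j, m⟩ :: v.toList ++ [⟨j, m⁻¹⟩] : List (Σ k, G k))).map
          fun l => Monoid.CoprodI.of l.2))
        simp only [List.map_cons, List.map_append, List.prod_cons, List.prod_append,
          List.map_singleton, List.prod_singleton, map_mul, ofCoprodI_of]
        rw [Monoid.CoprodI.Word.prod]
        simp [mul_assoc]
      · simp [Monoid.CoprodI.Word.cons]
      · show ((⟨j, m⟩ :: v.toList ++ [⟨j, m⁻¹⟩] :
          List (Σ k, G k)).getLast?).map Sigma.fst = _
        rw [show (⟨j, m⟩ :: v.toList ++ [⟨j, m⁻¹⟩] : List (Σ k, G k))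
            = (⟨j, m⟩ :: v.toList) ++ [⟨j, m⁻¹⟩] by simp, List.getLast?_concat]
        simp [Monoid.CoprodI.Word.cons]
      · left
        simp only [List.length_cons, List.length_append, List.length_singleton]
        omega

/-- If a conjugate of `base φ cz` lies in the range of `of i`, so does the conjugator. -/
theorem conj_mem_range (hφ : ∀ i, Injective (φ i)) (i : Bool) (cz : H) (hcz : cz ≠ 1)
    (hA : ∀ a : G i, a * φ i cz * a⁻¹ = φ i cz)
    (hB : ∀ j, j ≠ i → ∀ b : G j, b * φ j cz * b⁻¹ ∈ (φ j).range → b ∈ (φ j).range)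
    (x : PushoutI φ) (hx : x * base φ cz * x⁻¹ ∈ (of (φ := φ) i).range) :
    x ∈ (of (φ := φ) i).range := by
  obtain ⟨h, w, hwred, rfl⟩ := exists_base_mul_reduced hφ x
  have hbase : base φ h ∈ (of (φ := φ) i).range := ⟨φ i h, of_apply_eq_base φ i h⟩
  have hy : ofCoprodI w.prod * base φ cz * (ofCoprodI w.prod)⁻¹ ∈ (of (φ := φ) i).range := by
    have : ofCoprodI w.prod * base φ cz * (ofCoprodI w.prod)⁻¹
        = (base φ h)⁻¹ * (base φ h * ofCoprodI w.prod * base φ cz *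
          (base φ h * ofCoprodI w.prod)⁻¹) * base φ h := by group
    rw [this]
    exact Subgroup.mul_mem _ (Subgroup.mul_mem _ (Subgroup.inv_mem _ hbase) hx) hbase
  rcases keyK i cz hcz hA hB w hwred with ⟨hall, _⟩ | ⟨v, hvred, hveq, _, _, hvlen⟩
  · exact Subgroup.mul_mem _ hbase (mem_of_range_of_all w i hall)
  · exfalso
    rw [hveq] at hy
    rcases lemL hφ hvred i hy with h0 | h0 <;>
    rcases hvlen with h2 | ⟨j, hj, hjl⟩
    · rw [← List.length_map Sigma.fst, h0] at h2; simp at h2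
    · rw [h0] at hjl; simp at hjl
    · rw [← List.length_map Sigma.fst, h0] at h2; simp at h2
    · rw [h0] at hjl
      simp only [List.cons.injEq] at hjl
      exact hj hjl.1.symm

/-- Core isolation theorem in the pushout of two groups. -/
theorem core_isolated (hφ : ∀ i, Injective (φ i)) (i : Bool) (cz : H) (hcz : cz ≠ 1)
    (hA : ∀ a : G i, a * φ i cz * a⁻¹ = φ i cz)
    (hB : ∀ j, j ≠ i → ∀ b : G j, b * φ j cz * b⁻¹ ∈ (φ j).range → b ∈ (φ j).range)
    (x : PushoutI φ) (hx : Commute (base φ cz) (x * base φ cz * x⁻¹)) :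
    x * base φ cz * x⁻¹ = base φ cz := by
  set z := base φ cz with hz
  set y := x * z * x⁻¹ with hyd
  have hzr : z ∈ (of (φ := φ) i).range := ⟨φ i cz, of_apply_eq_base φ i cz⟩
  have h1 : y * z * y⁻¹ = z := by
    rw [← hx.eq]; group
  have h2 : y ∈ (of (φ := φ) i).range :=
    conj_mem_range hφ i cz hcz hA hB y (h1.symm ▸ hzr)
  have h3 : x ∈ (of (φ := φ) i).range :=
    conj_mem_range hφ i cz hcz hA hB x h2
  obtain ⟨a, rfl⟩ := h3
  rw [hz]
  exact of_conj_base hA a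

section Ingredients

/-- Centrality ingredient: if `ιA cz` centralizes `Q` and `A = Q * ιA(C)` with `C` cyclic,
then `ιA cz` is central in `A`. -/
theorem central_ingredient {A C : Type} [Group A] [Group C] (hC : IsCyclic C)
    (ιA : C →* A) (Q : Subgroup A) (cz : C)
    (hz : ιA cz ∈ Subgroup.centralizer (Q : Set A))
    (hAfact : ∀ a : A, ∃ u ∈ Q, ∃ c : C, a = u * ιA c) :
    ∀ a : A, a * ιA cz * a⁻¹ = ιA cz := by
  intro a
  obtain ⟨u, hu, c, rfl⟩ := hAfact a
  obtain ⟨g, hg⟩ := hC.exists_generator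
  obtain ⟨n, rfl⟩ := hg c
  obtain ⟨m, rfl⟩ := hg cz
  have hcomm : (g ^ n) * (g ^ m) = (g ^ m) * (g ^ n) := by
    rw [← zpow_add, ← zpow_add, add_comm]
  have h1 : ιA (g ^ n) * ιA (g ^ m) * (ιA (g ^ n))⁻¹ = ιA (g ^ m) := by
    rw [← map_inv, ← map_mul, ← map_mul, hcomm]
    simp [mul_assoc]
  have h2 : u * ιA (g ^ m) * u⁻¹ = ιA (g ^ m) := by
    have := (Subgroup.mem_centralizer_iff.1 hz) u hu
    rw [this]; group
  calc u * ιA (g ^ n) * ιA (g ^ m) * (u * ιA (g ^ n))⁻¹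
      = u * (ιA (g ^ n) * ιA (g ^ m) * (ιA (g ^ n))⁻¹) * u⁻¹ := by group
    _ = u * ιA (g ^ m) * u⁻¹ := by rw [h1]
    _ = ιA (g ^ m) := h2

/-- Normalizer ingredient: if `⟨ιB cz⟩` is the unique subgroup of order `q` of `ιB.range` and
its normalizer is `ιB.range`, then conjugating `ιB cz` into `ιB.range` forces the conjugator
into `ιB.range`. -/
theorem normalizer_ingredient {B C : Type} [Group B] [Group C]
    (ιB : C →* B) (hιB : Function.Injective ιB)
    (q : ℕ) (S : Subgroup B)
    (hSuniq : ∀ D : Subgroup B, D ≤ ιB.range → Nat.card D = q → D = S)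
    (hSnorm : Subgroup.normalizer (S : Set B) = ιB.range)
    (cz : C) (hord : orderOf cz = q) :
    ∀ b : B, b * ιB cz * b⁻¹ ∈ ιB.range → b ∈ ιB.range := by
  intro b hb
  set zB := ιB cz with hzB
  have hozB : orderOf zB = q := by rw [hzB, orderOf_injective ιB hιB, hord]
  have hD : Subgroup.zpowers zB = S :=
    hSuniq _ (Subgroup.zpowers_le.2 ⟨cz, rfl⟩) (by rw [Nat.card_zpowers, hozB])
  have hoy : orderOf (b * zB * b⁻¹) = q := by
    have := orderOf_injective (MulAut.conj b).toMonoidHom (MulEquiv.injective _) zB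
    simpa [MulAut.conj_apply, hozB] using this
  have hE : Subgroup.zpowers (b * zB * b⁻¹) = S :=
    hSuniq _ (Subgroup.zpowers_le.2 hb) (by rw [Nat.card_zpowers, hoy])
  have hmap : Subgroup.map (MulAut.conj b).toMonoidHom S = S := by
    conv_lhs => rw [← hD]
    rw [MonoidHom.map_zpowers]
    simpa [MulAut.conj_apply] using hE
  have hbn : b ∈ Subgroup.normalizer (S : Set B) := by
    rw [Subgroup.mem_normalizer_iff]
    intro h
    constructor
    · intro hh
      have : (MulAut.conj b).toMonoidHom h ∈ Subgroup.map (MulAut.conj b).toMonoidHom S :=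
        Subgroup.mem_map_of_mem _ hh
      rw [hmap] at this
      simpa [MulAut.conj_apply] using this
    · intro hh
      rw [← hmap] at hh
      obtain ⟨h', hh', heq⟩ := hh
      have : h' = h := by
        have : (MulAut.conj b) h' = (MulAut.conj b) h := by
          simpa [MulAut.conj_apply] using heq
        exact (MulAut.conj b).injective this
      rwa [← this]
  rwa [hSnorm] at hbn

end Ingredients

end AuxIsolated

/-- Every nonidentity element `z` of `Z(Q)` is isolated in `X`: if `z` commutes with
a conjugate `x * z * x⁻¹`, then `x * z * x⁻¹ = z`. Symmetrically, every nonidentity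
element of `Z(P)` is isolated in `X`. -/
theorem amalgam_center_elements_isolated
    (p q : ℕ) (hp : p.Prime) (hq : q.Prime) (hpodd : Odd p) (hqodd : Odd q)
    (hpq : p ≠ q)
    {A B C : Type} [Group A] [Group B] [Group C] [Finite A] [Finite B]
    -- `Q` is a nonabelian normal Sylow `q`-subgroup of `A`,
    -- `P` is a nonabelian normal Sylow `p`-subgroup of `B`
    (Q : Sylow q A) (P : Sylow p B)
    (hQnormal : (Q : Subgroup A).Normal) (hPnormal : (P : Subgroup B).Normal)
    (hQnonab : ¬ IsMulCommutative ↥(Q : Subgroup A))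
    (hPnonab : ¬ IsMulCommutative ↥(P : Subgroup B))
    -- `ZQ = Z(Q)` has order `q` and `ZP = Z(P)` has order `p`
    (ZQ : Subgroup A)
    (hZQ : ZQ = (Q : Subgroup A) ⊓ Subgroup.centralizer ((Q : Subgroup A) : Set A))
    (hZQcard : Nat.card ZQ = q)
    (ZP : Subgroup B)
    (hZP : ZP = (P : Subgroup B) ⊓ Subgroup.centralizer ((P : Subgroup B) : Set B))
    (hZPcard : Nat.card ZP = p)
    -- `C` is cyclic of order `p * q`, embedded in `A` and `B`
    (hC : IsCyclic C) (hCcard : Nat.card C = p * q)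
    (ιA : C →* A) (ιB : C →* B)
    (hιA : Function.Injective ιA) (hιB : Function.Injective ιB)
    -- `ιA(C)` is self-normalizing in `A`, contains `Z(Q)` as its unique subgroup of
    -- order `q`, and `A = Q * ιA(C)`
    (hCA_selfnorm : Subgroup.normalizer (ιA.range : Set A) = ιA.range)
    (hZQle : ZQ ≤ ιA.range)
    (hZQuniq : ∀ D : Subgroup A, D ≤ ιA.range → Nat.card D = q → D = ZQ)
    (hAfact : ∀ a : A, ∃ u ∈ (Q : Subgroup A), ∃ c : C, a = u * ιA c)
    -- `ιB(C)` is self-normalizing in `B`, contains `Z(P)` as its unique subgroup of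
    -- order `p`, and `B = P * ιB(C)`
    (hCB_selfnorm : Subgroup.normalizer (ιB.range : Set B) = ιB.range)
    (hZPle : ZP ≤ ιB.range)
    (hZPuniq : ∀ D : Subgroup B, D ≤ ιB.range → Nat.card D = p → D = ZP)
    (hBfact : ∀ b : B, ∃ u ∈ (P : Subgroup B), ∃ c : C, b = u * ιB c)
    -- `SpA` is the unique subgroup of order `p` of `ιA(C)`, and
    -- `SqB` is the unique subgroup of order `q` of `ιB(C)`
    (SpA : Subgroup A) (hSpA_le : SpA ≤ ιA.range) (hSpA_card : Nat.card SpA = p)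
    (hSpA_uniq : ∀ D : Subgroup A, D ≤ ιA.range → Nat.card D = p → D = SpA)
    (SqB : Subgroup B) (hSqB_le : SqB ≤ ιB.range) (hSqB_card : Nat.card SqB = q)
    (hSqB_uniq : ∀ D : Subgroup B, D ≤ ιB.range → Nat.card D = q → D = SqB)
    -- the normalizer conditions `N_B(S_q) = ιB(C)` and `N_A(S_p) = ιA(C)`
    (hSqB_norm : Subgroup.normalizer (SqB : Set B) = ιB.range)
    (hSpA_norm : Subgroup.normalizer (SpA : Set A) = ιA.range)
    -- the commutator conditions `[Q, S_p] = Q` and `[P, S_q] = P`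
    (hQcommutator : ⁅(Q : Subgroup A), SpA⁆ = (Q : Subgroup A))
    (hPcommutator : ⁅(P : Subgroup B), SqB⁆ = (P : Subgroup B))
    :
    (∀ z : Amalgam ιA ιB, z ∈ ZQ.map (Amalgam.inA ιA ιB) → z ≠ 1 →
      ∀ x : Amalgam ιA ιB, Commute z (x * z * x⁻¹) → x * z * x⁻¹ = z) ∧
    (∀ w : Amalgam ιA ιB, w ∈ ZP.map (Amalgam.inB ιA ιB) → w ≠ 1 →
      ∀ x : Amalgam ιA ιB, Commute w (x * w * x⁻¹) → x * w * x⁻¹ = w) := by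
  classical
  set φ := amalgamMaps ιA ιB with hφdef
  have hφ : ∀ i, Function.Injective (φ i) := by
    intro i
    cases i
    · exact hιB
    · exact hιA
  constructor
  · -- the `Z(Q)` part, `i = true`
    intro z hz hz1 x hx
    obtain ⟨zA, hzA, rfl⟩ := Subgroup.mem_map.1 hz
    obtain ⟨cz, hcz⟩ := hZQle hzA
    have hzA1 : zA ≠ 1 := by
      rintro rfl
      exact hz1 (map_one _)
    have hcz1 : cz ≠ 1 := by
      rintro rfl
      exact hzA1 (by rw [← hcz, map_one])
    have hzeq : Amalgam.inA ιA ιB zA = Monoid.PushoutI.base φ cz := by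
      rw [← hcz]
      exact Monoid.PushoutI.of_apply_eq_base φ true cz
    have hordzA : orderOf zA = q := by
      have hdvd : orderOf zA ∣ q := hZQcard ▸ Subgroup.orderOf_dvd_natCard ZQ hzA
      rcases (Nat.Prime.eq_one_or_self_of_dvd hq _ hdvd) with h | h
      · exact absurd (orderOf_eq_one_iff.1 h) hzA1
      · exact h
    have hordcz : orderOf cz = q := by
      rw [← hordzA, ← hcz, orderOf_injective ιA hιA]
    have hcent : ιA cz ∈ Subgroup.centralizer ((Q : Subgroup A) : Set A) := by
      rw [hcz]
      exact (hZQ ▸ hzA).2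
    have hA' : ∀ a : AmalgamFam A B true, a * φ true cz * a⁻¹ = φ true cz :=
      central_ingredient hC ιA Q cz hcent hAfact
    have hB' : ∀ j, j ≠ true → ∀ b : AmalgamFam A B j,
        b * φ j cz * b⁻¹ ∈ (φ j).range → b ∈ (φ j).range := by
      intro j hj
      cases j
      · exact normalizer_ingredient ιB hιB q SqB hSqB_uniq hSqB_norm cz hordcz
      · exact absurd rfl hj
    rw [hzeq] at hx ⊢
    exact core_isolated hφ true cz hcz1 hA' hB' x hx
  · -- the `Z(P)` part, `i = false`
    intro w hw hw1 x hx
    obtain ⟨zB, hzB, rfl⟩ := Subgroup.mem_map.1 hw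
    obtain ⟨cw, hcw⟩ := hZPle hzB
    have hzB1 : zB ≠ 1 := by
      rintro rfl
      exact hw1 (map_one _)
    have hcw1 : cw ≠ 1 := by
      rintro rfl
      exact hzB1 (by rw [← hcw, map_one])
    have hzeq : Amalgam.inB ιA ιB zB = Monoid.PushoutI.base φ cw := by
      rw [← hcw]
      exact Monoid.PushoutI.of_apply_eq_base φ false cw
    have hordzB : orderOf zB = p := by
      have hdvd : orderOf zB ∣ p := hZPcard ▸ Subgroup.orderOf_dvd_natCard ZP hzB
      rcases (Nat.Prime.eq_one_or_self_of_dvd hp _ hdvd) with h | h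
      · exact absurd (orderOf_eq_one_iff.1 h) hzB1
      · exact h
    have hordcw : orderOf cw = p := by
      rw [← hordzB, ← hcw, orderOf_injective ιB hιB]
    have hcent : ιB cw ∈ Subgroup.centralizer ((P : Subgroup B) : Set B) := by
      rw [hcw]
      exact (hZP ▸ hzB).2
    have hA' : ∀ a : AmalgamFam A B false, a * φ false cw * a⁻¹ = φ false cw :=
      central_ingredient hC ιB P cw hcent hBfact
    have hB' : ∀ j, j ≠ false → ∀ b : AmalgamFam A B j,
        b * φ j cw * b⁻¹ ∈ (φ j).range → b ∈ (φ j).range := by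
      intro j hj
      cases j
      · exact absurd rfl hj
      · exact normalizer_ingredient ιA hιA p SpA hSpA_uniq hSpA_norm cw hordcw
    rw [hzeq] at hx ⊢
    exact core_isolated hφ false cw hcw1 hA' hB' x hx
end

section
/- Every nonidentity element of X has infinitely many conjugates in X, i.e. every nontrivial conjugacy class of X is infinite. -/
section AmalgamMachinery
open Monoid Monoid.PushoutI Monoid.PushoutI.NormalWord Function

variable {H : Type} [Group H] {G : Bool → Type} [∀ i, Group (G i)] (φ : ∀ i, H →* G i)

/-- product of a list of letters in the pushout -/
def gp (l : List (Σ i, G i)) : PushoutI φ :=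
  (l.map fun a => PushoutI.of (φ := φ) a.1 a.2).prod

def GoodL (l : List (Σ i, G i)) : Prop :=
  (∀ a ∈ l, a.2 ∉ (φ a.1).range) ∧ (l.map Sigma.fst).IsChain (· ≠ ·)

theorem gp_nil : gp φ ([] : List (Σ i, G i)) = 1 := rfl

theorem gp_cons (a : Σ i, G i) (l : List (Σ i, G i)) :
    gp φ (a :: l) = PushoutI.of (φ := φ) a.1 a.2 * gp φ l := by
  simp [gp]

theorem gp_append (l₁ l₂ : List (Σ i, G i)) : gp φ (l₁ ++ l₂) = gp φ l₁ * gp φ l₂ := by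
  simp [gp]

theorem gp_fst_eq (hφ : ∀ i, Injective (φ i)) {l₁ l₂ : List (Σ i, G i)}
    (h₁ : GoodL φ l₁) (h₂ : GoodL φ l₂) (h : gp φ l₁ = gp φ l₂) :
    l₁.map Sigma.fst = l₂.map Sigma.fst := by
  classical
  obtain ⟨d⟩ := transversal_nonempty φ hφ
  have mk : ∀ l : List (Σ i, G i), GoodL φ l → ∃ w : CoprodI.Word G,
      w.toList = l ∧ Reduced φ w := by
    intro l hl
    refine ⟨⟨l, ?_, ?_⟩, rfl, ?_⟩
    · intro a ha e
      exact hl.1 a ha (e ▸ (φ a.1).range.one_mem)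
    · exact (List.isChain_map Sigma.fst).mp hl.2
    · intro g hg
      exact hl.1 g hg
  obtain ⟨w₁, hw₁, hr₁⟩ := mk l₁ h₁
  obtain ⟨w₂, hw₂, hr₂⟩ := mk l₂ h₂
  have hprod : ∀ (w : CoprodI.Word G), ofCoprodI (φ := φ) w.prod = gp φ w.toList := by
    intro w
    simp [CoprodI.Word.prod, gp, map_list_prod, List.map_map, Function.comp_def]
  obtain ⟨w₁', hp₁, hm₁⟩ := hr₁.exists_normalWord_prod_eq d
  obtain ⟨w₂', hp₂, hm₂⟩ := hr₂.exists_normalWord_prod_eq d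
  have : w₁' = w₂' := by
    apply NormalWord.prod_injective
    rw [hp₁, hp₂, hprod, hprod, hw₁, hw₂, h]
  rw [← hw₁, ← hw₂, ← hm₁, ← hm₂, this]


/-- wrap step -/
theorem wrap_step {l : List (Σ i, G i)} {i : Bool} (hl : GoodL φ l)
    (hhead : (l.map Sigma.fst).head? = some i) (hlast : (l.map Sigma.fst).getLast? = some i)
    (c : G (!i)) (hc : c ∉ (φ (!i)).range) :
    ∃ l' : List (Σ i, G i), GoodL φ l' ∧ (l'.map Sigma.fst).head? = some (!i) ∧
      (l'.map Sigma.fst).getLast? = some (!i) ∧ l'.length = l.length + 2 ∧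
      IsConj (gp φ l) (gp φ l') := by
  have hlne : l ≠ [] := by rintro rfl; simp at hhead
  refine ⟨(⟨!i, c⟩ :: l) ++ [⟨!i, c⁻¹⟩], ⟨?_, ?_⟩, ?_, ?_, ?_, ?_⟩
  · intro a ha
    rcases List.mem_append.mp ha with ha | ha
    · rcases List.mem_cons.mp ha with rfl | ha
      · exact hc
      · exact hl.1 a ha
    · rcases List.mem_singleton.mp ha with rfl
      simpa using hc
  · rw [List.map_append, List.isChain_append]
    refine ⟨?_, List.isChain_singleton _, ?_⟩
    · rw [List.map_cons, List.isChain_cons]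
      refine ⟨?_, hl.2⟩
      intro y hy
      rw [hhead, Option.mem_some_iff] at hy
      subst hy
      simp
    · intro x hx y hy
      rw [List.map_cons, List.getLast?_cons, hlast] at hx
      simp only [Option.getD_some, Option.mem_some_iff] at hx
      subst hx
      simp only [List.map_singleton, List.head?_cons, Option.mem_some_iff] at hy
      subst hy
      simp
  · simp
  · rw [List.map_append, List.map_cons]
    rw [show (!i : Bool) :: List.map Sigma.fst l ++ List.map Sigma.fst [(⟨!i, c⁻¹⟩ : Σ i, G i)]
        = ((!i : Bool) :: List.map Sigma.fst l) ++ [!i] by simp]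
    exact List.getLast?_concat
  · simp
  · rw [gp_append, gp_cons]
    refine isConj_iff.mpr ⟨PushoutI.of (φ := φ) (!i) c, ?_⟩
    simp [gp, mul_assoc]


/-- merge step for mixed-type words -/
theorem merge_step {l : List (Σ i, G i)} {i j : Bool} (hl : GoodL φ l)
    (hhead : (l.map Sigma.fst).head? = some i) (hlast : (l.map Sigma.fst).getLast? = some j)
    (hij : i ≠ j)
    (h3 : ∀ g : G j, ∃ g' : G j, g' ∉ (φ j).range ∧ g * g'⁻¹ ∉ (φ j).range) :
    ∃ l' : List (Σ i, G i), GoodL φ l' ∧ (l'.map Sigma.fst).head? = some j ∧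
      (l'.map Sigma.fst).getLast? = some j ∧ l'.length = l.length + 1 ∧
      IsConj (gp φ l) (gp φ l') := by
  have hlne : l ≠ [] := by rintro rfl; simp at hhead
  obtain ⟨m, e, rfl⟩ : ∃ m e, l = m ++ [e] :=
    ⟨l.dropLast, l.getLast hlne, (List.dropLast_append_getLast hlne).symm⟩
  obtain ⟨j', e2⟩ := e
  have hj' : j = j' := by
    rw [List.map_append] at hlast
    simp at hlast
    exact hlast.symm
  subst hj'
  obtain ⟨b, hb, hb2⟩ := h3 e2
  refine ⟨(⟨j, b⟩ :: m) ++ [⟨j, e2 * b⁻¹⟩], ⟨?_, ?_⟩, ?_, ?_, ?_, ?_⟩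
  · intro a ha
    rcases List.mem_append.mp ha with ha | ha
    · rcases List.mem_cons.mp ha with rfl | ha
      · exact hb
      · exact hl.1 a (List.mem_append.mpr (Or.inl ha))
    · rcases List.mem_singleton.mp ha with rfl
      exact hb2
  · have h2 : List.map Sigma.fst ((⟨j, b⟩ :: m) ++ [(⟨j, e2 * b⁻¹⟩ : Σ i, G i)])
        = j :: List.map Sigma.fst (m ++ [(⟨j, e2⟩ : Σ i, G i)]) := by simp
    rw [h2, List.isChain_cons]
    refine ⟨?_, hl.2⟩
    intro y hy
    rw [hhead, Option.mem_some_iff] at hy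
    subst hy
    exact hij.symm
  · simp
  · rw [List.map_append]
    rw [show List.map Sigma.fst (⟨j, b⟩ :: m) ++ List.map Sigma.fst [(⟨j, e2 * b⁻¹⟩ : Σ i, G i)]
        = (j :: List.map Sigma.fst m) ++ [j] by simp]
    exact List.getLast?_concat
  · simp
  · rw [gp_append, gp_append, gp_cons]
    refine isConj_iff.mpr ⟨PushoutI.of (φ := φ) j b, ?_⟩
    simp only [gp, List.map_singleton, List.prod_singleton, map_mul, map_inv,
      List.map_cons, List.prod_cons, List.map_nil, List.prod_nil, mul_one]
    group

/-- iterated growth -/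
theorem grow (hesc : ∀ i : Bool, ∃ g : G i, g ∉ (φ i).range) :
    ∀ (k : ℕ) (l : List (Σ i, G i)) (i : Bool), GoodL φ l →
      (l.map Sigma.fst).head? = some i → (l.map Sigma.fst).getLast? = some i →
      ∃ (l' : List (Σ i, G i)) (i' : Bool), GoodL φ l' ∧
        (l'.map Sigma.fst).head? = some i' ∧ (l'.map Sigma.fst).getLast? = some i' ∧
        l'.length = l.length + 2 * k ∧ IsConj (gp φ l) (gp φ l') := by
  intro k
  induction k with
  | zero => exact fun l i hl hh hl' => ⟨l, i, hl, hh, hl', by simp, IsConj.refl _⟩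
  | succ k ih =>
    intro l i hl hh hla
    obtain ⟨c, hc⟩ := hesc (!i)
    obtain ⟨l₁, hl₁, hh₁, hla₁, hlen₁, hconj₁⟩ := wrap_step φ hl hh hla c hc
    obtain ⟨l', i', hl', hh', hla', hlen', hconj'⟩ := ih l₁ (!i) hl₁ hh₁ hla₁
    exact ⟨l', i', hl', hh', hla', by omega, hconj₁.trans hconj'⟩

/-- the conjugacy class of the product of a good nonempty word is infinite -/
theorem goodL_conj_infinite (hφ : ∀ i, Injective (φ i))
    (hesc : ∀ i : Bool, ∃ g : G i, g ∉ (φ i).range)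
    (h3 : ∀ (j : Bool) (g : G j), ∃ g' : G j, g' ∉ (φ j).range ∧ g * g'⁻¹ ∉ (φ j).range)
    {l : List (Σ i, G i)} (hl : GoodL φ l) (hlne : l ≠ []) :
    {y : PushoutI φ | IsConj (gp φ l) y}.Infinite := by
  -- first, uniformize the type
  obtain ⟨i, hh⟩ : ∃ i, (l.map Sigma.fst).head? = some i := by
    cases l with
    | nil => exact absurd rfl hlne
    | cons a t => exact ⟨a.1, rfl⟩
  obtain ⟨j, hla⟩ : ∃ j, (l.map Sigma.fst).getLast? = some j := by
    have : l.map Sigma.fst ≠ [] := by simpa using hlne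
    exact ⟨(l.map Sigma.fst).getLast this, List.getLast?_eq_getLast this⟩
  obtain ⟨l₀, i₀, hl₀, hh₀, hla₀, hconj₀⟩ :
      ∃ (l₀ : List (Σ i, G i)) (i₀ : Bool), GoodL φ l₀ ∧
        (l₀.map Sigma.fst).head? = some i₀ ∧ (l₀.map Sigma.fst).getLast? = some i₀ ∧
        IsConj (gp φ l) (gp φ l₀) := by
    by_cases hij : i = j
    · exact ⟨l, i, hl, hh, hij ▸ hla, IsConj.refl _⟩
    · obtain ⟨l', hl', hh', hla', _, hconj⟩ := merge_step φ hl hh hla hij (h3 j)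
      exact ⟨l', j, hl', hh', hla', hconj⟩
  have key : ∀ k : ℕ, ∃ y : PushoutI φ, IsConj (gp φ l) y ∧
      ∃ l' : List (Σ i, G i), GoodL φ l' ∧ y = gp φ l' ∧ l'.length = l₀.length + 2 * k := by
    intro k
    obtain ⟨l', i', hl', _, _, hlen', hconj'⟩ := grow φ hesc k l₀ i₀ hl₀ hh₀ hla₀
    exact ⟨gp φ l', hconj₀.trans hconj', l', hl', rfl, hlen'⟩
  have hinj : Function.Injective (fun k : ℕ => (key k).choose) := by
    intro k₁ k₂ he
    dsimp only at he
    obtain ⟨-, l₁, hl₁, hy₁, hlen₁⟩ := (key k₁).choose_spec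
    obtain ⟨-, l₂, hl₂, hy₂, hlen₂⟩ := (key k₂).choose_spec
    have : l₁.map Sigma.fst = l₂.map Sigma.fst :=
      gp_fst_eq φ hφ hl₁ hl₂ (by rw [← hy₁, ← hy₂, he])
    have : l₁.length = l₂.length := by
      rw [← List.length_map (as := l₁) Sigma.fst, this, List.length_map]
    omega
  exact Set.infinite_of_injective_forall_mem hinj (fun k => (key k).choose_spec.1)

/-- every element not in the image of the base group is the product of a good
nonempty word -/
theorem exists_goodL (hφ : ∀ i, Injective (φ i)) {x : PushoutI φ}
    (hx : x ∉ (Monoid.PushoutI.base φ).range) :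
    ∃ l : List (Σ i, G i), GoodL φ l ∧ l ≠ [] ∧ gp φ l = x := by
  classical
  obtain ⟨d⟩ := transversal_nonempty φ hφ
  set w : NormalWord d := NormalWord.equiv x with hw
  have hxw : w.prod = x := by
    rw [hw]
    exact congrArg (fun e => e) (NormalWord.equiv.symm_apply_apply x)
  have hlet : ∀ a ∈ w.toList, a.2 ∉ (φ a.1).range := by
    rintro ⟨i, g⟩ hmem hrange
    have hset : g ∈ d.set i := w.normalized i g hmem
    have hne1 : g ≠ 1 := w.ne_one ⟨i, g⟩ hmem
    obtain ⟨u, -, huniq⟩ := (d.compl i).existsUnique g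
    have e1 := huniq (⟨g, hrange⟩, ⟨1, d.one_mem i⟩) (mul_one g)
    have e2 := huniq (⟨1, (φ i).range.one_mem⟩, ⟨g, hset⟩) (one_mul g)
    have e3 := e1.trans e2.symm
    have e4 : g = 1 := congrArg (fun z => (z.1 : G i)) e3
    exact hne1 e4
  have hpw : w.prod = Monoid.PushoutI.base φ w.head * gp φ w.toList := by
    rw [NormalWord.prod]
    congr 1
    simp [CoprodI.Word.prod, gp, map_list_prod, List.map_map, Function.comp_def]
  rcases hlist : w.toList with _ | ⟨a, t⟩
  · exfalso
    apply hx
    rw [← hxw, hpw, hlist]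
    simp [gp]
  · refine ⟨⟨a.1, φ a.1 w.head * a.2⟩ :: t, ⟨?_, ?_⟩, by simp, ?_⟩
    · rintro b hb
      rcases List.mem_cons.mp hb with rfl | hb
      · intro hr
        have : a.2 ∈ (φ a.1).range := by
          have h2 : (φ a.1 w.head)⁻¹ * (φ a.1 w.head * a.2) ∈ (φ a.1).range :=
            mul_mem (inv_mem ⟨w.head, rfl⟩) hr
          simpa using h2
        exact hlet a (hlist ▸ List.mem_cons_self) this
      · exact hlet b (hlist ▸ List.mem_cons_of_mem a hb)
    · have := w.chain_ne
      rw [hlist] at this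
      have h2 := (List.isChain_map Sigma.fst).mpr this
      simpa using h2
    · rw [gp_cons, ← hxw, hpw, hlist, gp_cons]
      simp only [map_mul, ← mul_assoc]
      congr 1
      congr 1
      exact (Monoid.PushoutI.of_apply_eq_base φ a.1 w.head)


end AmalgamMachinery

/-- If the range is everything, the big group is abelian, so `P` is commutative. -/
theorem side_range_ne_top {B C : Type} [Group B] [Group C]
    (hCcomm : ∀ x y : C, x * y = y * x) (ι : C →* B)
    (P : Subgroup B) (hPnonab : ¬ IsMulCommutative P) : ι.range ≠ ⊤ := by
  intro h
  apply hPnonab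
  constructor
  constructor
  intro x y
  apply Subtype.ext
  obtain ⟨c1, h1⟩ : (x : B) ∈ ι.range := h ▸ Subgroup.mem_top _
  obtain ⟨c2, h2⟩ : (y : B) ∈ ι.range := h ▸ Subgroup.mem_top _
  show (x : B) * y = y * x
  rw [← h1, ← h2, ← map_mul, ← map_mul, hCcomm]

/-- self-normalizing proper subgroups of a finite group have index at least 3 -/
theorem side_index_ge_three {B : Type} [Group B] [Finite B] (R : Subgroup B)
    (hself : Subgroup.normalizer (R : Set B) = R) (hne : R ≠ ⊤) : 3 ≤ R.index := by
  have hnn : ¬ R.Normal := by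
    intro h
    exact hne (hself.symm.trans (Subgroup.normalizer_eq_top_iff.mpr h))
  have h0 : R.index ≠ 0 := Subgroup.index_ne_zero_of_finite
  have h1 : R.index ≠ 1 := fun h => hne (Subgroup.index_eq_one.mp h)
  have h2 : R.index ≠ 2 := by
    intro h2
    apply hnn
    constructor
    intro n hn g
    have key := Subgroup.mul_mem_iff_of_index_two h2 (a := g * n) (b := g⁻¹)
    have kg : g * n ∈ R ↔ (g ∈ R ↔ n ∈ R) := Subgroup.mul_mem_iff_of_index_two h2
    rw [key, kg]
    simp [hn, Subgroup.inv_mem_iff]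
  omega

/-- three cosets: we can find an element avoiding two given cosets -/
theorem side_third_coset {B : Type} [Group B] [Finite B] (R : Subgroup B)
    (h3 : 3 ≤ R.index) (g : B) : ∃ b : B, b ∉ R ∧ g * b⁻¹ ∉ R := by
  by_contra hcon
  push_neg at hcon
  have cover : (Set.univ : Set B) ⊆ (R : Set B) ∪ (fun r => r⁻¹ * g) '' (R : Set B) := by
    intro b _
    by_cases hb : b ∈ R
    · exact Or.inl hb
    · exact Or.inr ⟨g * b⁻¹, hcon b hb, by group⟩
  have hcardR : (R : Set B).ncard = Nat.card R := (Nat.card_coe_set_eq _).symm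
  have hle : Nat.card B ≤ Nat.card R + Nat.card R := by
    calc Nat.card B = (Set.univ : Set B).ncard := (Set.ncard_univ B).symm
    _ ≤ ((R : Set B) ∪ (fun r => r⁻¹ * g) '' (R : Set B)).ncard :=
        Set.ncard_le_ncard cover (Set.toFinite _)
    _ ≤ (R : Set B).ncard + ((fun r => r⁻¹ * g) '' (R : Set B)).ncard :=
        Set.ncard_union_le _ _
    _ ≤ Nat.card R + Nat.card R := by
        rw [hcardR]
        gcongr
        calc ((fun r => r⁻¹ * g) '' (R : Set B)).ncard ≤ (R : Set B).ncard :=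
              Set.ncard_image_le (Set.toFinite _)
        _ = Nat.card R := hcardR
  have hmul : R.index * Nat.card R = Nat.card B := R.index_mul_card
  have hpos : 0 < Nat.card R := Nat.card_pos
  nlinarith [hmul, hpos, hle, h3]

/-- escape lemma for base elements whose order is divisible by `q` -/
theorem side_base_escape {B C : Type} [Group B] [Finite B] [Group C]
    (q : ℕ) (ι : C →* B) (S : Subgroup B)
    (hSuniq : ∀ D : Subgroup B, D ≤ ι.range → Nat.card D = q → D = S)
    (hSnorm : Subgroup.normalizer (S : Set B) = ι.range) (hnetop : ι.range ≠ ⊤)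
    (c : C) (hdvd : q ∣ orderOf (ι c)) (hq0 : q ≠ 0) :
    ∃ b : B, b * ι c * b⁻¹ ∉ ι.range := by
  by_contra hcon
  push_neg at hcon
  set x := ι c with hxdef
  have hx : x ∈ ι.range := ⟨c, rfl⟩
  set n := orderOf x with hndef
  have hn0 : n ≠ 0 := by
    have : 0 < orderOf x := orderOf_pos x
    omega
  have hdd : n / q ∣ n := Nat.div_dvd_of_dvd hdvd
  have hordpow : ∀ y : B, orderOf y = n → orderOf (y ^ (n / q)) = q := by
    intro y hy
    rw [orderOf_pow, hy, Nat.gcd_eq_right hdd, Nat.div_div_self hdvd hn0]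
  have hzpow : ∀ y : B, y ∈ ι.range → orderOf y = n →
      Subgroup.zpowers (y ^ (n / q)) = S := by
    intro y hy hyo
    refine hSuniq _ (Subgroup.zpowers_le.mpr (pow_mem hy _)) ?_
    rw [Nat.card_zpowers, hordpow y hyo]
  have hz₀ : Subgroup.zpowers (x ^ (n / q)) = S := hzpow x hx rfl
  have hconj : ∀ b : B, b * x ^ (n / q) * b⁻¹ ∈ S := by
    intro b
    have h1 : orderOf (b * x * b⁻¹) = n := by
      have := orderOf_injective (MulAut.conj b).toMonoidHom (MulAut.conj b).injective x
      simpa [MulAut.conj_apply] using this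
    have h2 : Subgroup.zpowers ((b * x * b⁻¹) ^ (n / q)) = S := hzpow _ (hcon b) h1
    have h3 : (b * x * b⁻¹) ^ (n / q) = b * x ^ (n / q) * b⁻¹ := conj_pow
    rw [← h3]
    rw [← h2]
    exact Subgroup.mem_zpowers _
  have hnormal : S.Normal := by
    constructor
    intro s hs g
    rw [← hz₀] at hs
    obtain ⟨k, rfl⟩ := Subgroup.mem_zpowers_iff.mp hs
    have : g * (x ^ (n / q)) ^ k * g⁻¹ = (g * x ^ (n / q) * g⁻¹) ^ k := conj_zpow.symm
    rw [this]
    exact Subgroup.zpow_mem S (hconj g) k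
  apply hnetop
  rw [← hSnorm]
  exact Subgroup.normalizer_eq_top_iff.mpr hnormal


theorem amalgam_aux_main
    (p q : ℕ) (hp : p.Prime) (hq : q.Prime) (hpodd : Odd p) (hqodd : Odd q)
    (hpq : p ≠ q)
    {A B C : Type} [Group A] [Group B] [Group C] [Finite A] [Finite B]
    -- `Q` is a nonabelian normal Sylow `q`-subgroup of `A`,
    -- `P` is a nonabelian normal Sylow `p`-subgroup of `B`
    (Q : Sylow q A) (P : Sylow p B)
    (hQnormal : (Q : Subgroup A).Normal) (hPnormal : (P : Subgroup B).Normal)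
    (hQnonab : ¬ IsMulCommutative (Q : Subgroup A))
    (hPnonab : ¬ IsMulCommutative (P : Subgroup B))
    -- `ZQ = Z(Q)` has order `q` and `ZP = Z(P)` has order `p`
    (ZQ : Subgroup A)
    (hZQ : ZQ = (Q : Subgroup A) ⊓ Subgroup.centralizer ((Q : Subgroup A) : Set A))
    (hZQcard : Nat.card ZQ = q)
    (ZP : Subgroup B)
    (hZP : ZP = (P : Subgroup B) ⊓ Subgroup.centralizer ((P : Subgroup B) : Set B))
    (hZPcard : Nat.card ZP = p)
    -- `C` is cyclic of order `p * q`, embedded in `A` and `B`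
    (hC : IsCyclic C) (hCcard : Nat.card C = p * q)
    (ιA : C →* A) (ιB : C →* B)
    (hιA : Function.Injective ιA) (hιB : Function.Injective ιB)
    -- `ιA(C)` is self-normalizing in `A`, contains `Z(Q)` as its unique subgroup of
    -- order `q`, and `A = Q * ιA(C)`
    (hCA_selfnorm : Subgroup.normalizer (ιA.range : Set A) = ιA.range)
    (hZQle : ZQ ≤ ιA.range)
    (hZQuniq : ∀ D : Subgroup A, D ≤ ιA.range → Nat.card D = q → D = ZQ)
    (hAfact : ∀ a : A, ∃ u ∈ (Q : Subgroup A), ∃ c : C, a = u * ιA c)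
    -- `ιB(C)` is self-normalizing in `B`, contains `Z(P)` as its unique subgroup of
    -- order `p`, and `B = P * ιB(C)`
    (hCB_selfnorm : Subgroup.normalizer (ιB.range : Set B) = ιB.range)
    (hZPle : ZP ≤ ιB.range)
    (hZPuniq : ∀ D : Subgroup B, D ≤ ιB.range → Nat.card D = p → D = ZP)
    (hBfact : ∀ b : B, ∃ u ∈ (P : Subgroup B), ∃ c : C, b = u * ιB c)
    -- `SpA` is the unique subgroup of order `p` of `ιA(C)`, and
    -- `SqB` is the unique subgroup of order `q` of `ιB(C)`
    (SpA : Subgroup A) (hSpA_le : SpA ≤ ιA.range) (hSpA_card : Nat.card SpA = p)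
    (hSpA_uniq : ∀ D : Subgroup A, D ≤ ιA.range → Nat.card D = p → D = SpA)
    (SqB : Subgroup B) (hSqB_le : SqB ≤ ιB.range) (hSqB_card : Nat.card SqB = q)
    (hSqB_uniq : ∀ D : Subgroup B, D ≤ ιB.range → Nat.card D = q → D = SqB)
    -- the normalizer conditions `N_B(S_q) = ιB(C)` and `N_A(S_p) = ιA(C)`
    (hSqB_norm : Subgroup.normalizer (SqB : Set B) = ιB.range)
    (hSpA_norm : Subgroup.normalizer (SpA : Set A) = ιA.range)
    -- the commutator conditions `[Q, S_p] = Q` and `[P, S_q] = P`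
    (hQcommutator : ⁅(Q : Subgroup A), SpA⁆ = (Q : Subgroup A))
    (hPcommutator : ⁅(P : Subgroup B), SqB⁆ = (P : Subgroup B))
    :
    ∀ x : Monoid.PushoutI (amalgamMaps ιA ιB), x ≠ 1 →
      {y : Monoid.PushoutI (amalgamMaps ιA ιB) | IsConj x y}.Infinite := by
  classical
  intro x hx
  have hφ : ∀ i : Bool, Function.Injective ⇑(amalgamMaps ιA ιB i) := by
    intro i
    cases i
    · exact hιB
    · exact hιA
  haveI : Finite C := Nat.finite_of_card_ne_zero
    (by rw [hCcard]; exact Nat.mul_ne_zero hp.ne_zero hq.ne_zero)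
  have hCcomm : ∀ x y : C, x * y = y * x := by
    obtain ⟨gen, hgen⟩ := hC.exists_generator
    intro a b
    obtain ⟨m, rfl⟩ := hgen a
    obtain ⟨n, rfl⟩ := hgen b
    rw [← zpow_add, ← zpow_add, add_comm]
  have hAne : ιA.range ≠ ⊤ := side_range_ne_top hCcomm ιA (Q : Subgroup A) hQnonab
  have hBne : ιB.range ≠ ⊤ := side_range_ne_top hCcomm ιB (P : Subgroup B) hPnonab
  have hAidx : 3 ≤ ιA.range.index := side_index_ge_three _ hCA_selfnorm hAne
  have hBidx : 3 ≤ ιB.range.index := side_index_ge_three _ hCB_selfnorm hBne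
  have hAesc : ∃ g : A, g ∉ ιA.range := by
    by_contra hcon
    push_neg at hcon
    exact hAne (Subgroup.eq_top_iff' _ |>.mpr hcon)
  have hBesc : ∃ g : B, g ∉ ιB.range := by
    by_contra hcon
    push_neg at hcon
    exact hBne (Subgroup.eq_top_iff' _ |>.mpr hcon)
  have hesc : ∀ i : Bool, ∃ g : AmalgamFam A B i, g ∉ ((amalgamMaps ιA ιB) i).range := by
    intro i
    cases i
    · exact hBesc
    · exact hAesc
  have h3 : ∀ (j : Bool) (g : AmalgamFam A B j), ∃ g' : AmalgamFam A B j,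
      g' ∉ ((amalgamMaps ιA ιB) j).range ∧ g * g'⁻¹ ∉ ((amalgamMaps ιA ιB) j).range := by
    intro j
    cases j
    · exact fun g => side_third_coset ιB.range hBidx g
    · exact fun g => side_third_coset ιA.range hAidx g
  by_cases hxr : x ∈ (Monoid.PushoutI.base (amalgamMaps ιA ιB)).range
  · -- x comes from the base group C
    obtain ⟨c, hc⟩ := hxr
    have hc1 : c ≠ 1 := by
      rintro rfl
      rw [(Monoid.PushoutI.base (amalgamMaps ιA ιB)).map_one] at hc
      exact hx hc.symm
    have hordne1 : orderOf c ≠ 1 := by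
      rw [Ne, orderOf_eq_one_iff]
      exact hc1
    have horddvd : orderOf c ∣ p * q := by
      rw [← hCcard]
      exact orderOf_dvd_natCard c
    have hpq' : p ∣ orderOf c ∨ q ∣ orderOf c := by
      obtain ⟨r, hrp, hrd⟩ := Nat.exists_prime_and_dvd hordne1
      rcases (Nat.Prime.dvd_mul hrp).mp (hrd.trans horddvd) with h | h
      · exact Or.inl (by rwa [← (Nat.prime_dvd_prime_iff_eq hrp hp).mp h])
      · exact Or.inr (by rwa [← (Nat.prime_dvd_prime_iff_eq hrp hq).mp h])
    have hescape : ∃ (i : Bool) (g : AmalgamFam A B i),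
        g * ((amalgamMaps ιA ιB) i c) * g⁻¹ ∉ ((amalgamMaps ιA ιB) i).range := by
      rcases hpq' with h | h
      · have hdvd : p ∣ orderOf (ιA c) := by rwa [orderOf_injective ιA hιA]
        obtain ⟨a, ha⟩ :=
          side_base_escape p ιA SpA hSpA_uniq hSpA_norm hAne c hdvd hp.ne_zero
        exact ⟨true, a, ha⟩
      · have hdvd : q ∣ orderOf (ιB c) := by rwa [orderOf_injective ιB hιB]
        obtain ⟨b, hb⟩ :=
          side_base_escape q ιB SqB hSqB_uniq hSqB_norm hBne c hdvd hq.ne_zero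
        exact ⟨false, b, hb⟩
    obtain ⟨i, g, hg⟩ := hescape
    have hgood : GoodL (amalgamMaps ιA ιB)
        [⟨i, g * ((amalgamMaps ιA ιB) i c) * g⁻¹⟩] := by
      constructor
      · rintro a ha
        rcases List.mem_singleton.mp ha with rfl
        exact hg
      · exact List.isChain_singleton _
    have hgpval : gp (amalgamMaps ιA ιB) [⟨i, g * ((amalgamMaps ιA ιB) i c) * g⁻¹⟩]
        = Monoid.PushoutI.of (φ := amalgamMaps ιA ιB) i g * x *
          (Monoid.PushoutI.of (φ := amalgamMaps ιA ιB) i g)⁻¹ := by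
      rw [← hc]
      simp [gp, map_mul, Monoid.PushoutI.of_apply_eq_base]
    have hconjx : IsConj x (gp (amalgamMaps ιA ιB)
        [⟨i, g * ((amalgamMaps ιA ιB) i c) * g⁻¹⟩]) := by
      rw [hgpval]
      exact isConj_iff.mpr ⟨_, rfl⟩
    have hinf := goodL_conj_infinite (amalgamMaps ιA ιB) hφ hesc h3 hgood (by simp)
    apply Set.Infinite.mono ?_ hinf
    intro y hy
    exact hconjx.trans hy
  · obtain ⟨l, hgood, hlne, hgl⟩ := exists_goodL (amalgamMaps ιA ιB) hφ hxr
    have hinf := goodL_conj_infinite (amalgamMaps ιA ιB) hφ hesc h3 hgood hlne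
    rw [hgl] at hinf
    exact hinf

/-- Every nonidentity element of `X = A *_C B` has infinitely many conjugates in `X`. -/
theorem amalgam_conjugacy_classes_infinite
    (p q : ℕ) (hp : p.Prime) (hq : q.Prime) (hpodd : Odd p) (hqodd : Odd q)
    (hpq : p ≠ q)
    {A B C : Type} [Group A] [Group B] [Group C] [Finite A] [Finite B]
    -- `Q` is a nonabelian normal Sylow `q`-subgroup of `A`,
    -- `P` is a nonabelian normal Sylow `p`-subgroup of `B`
    (Q : Sylow q A) (P : Sylow p B)
    (hQnormal : (Q : Subgroup A).Normal) (hPnormal : (P : Subgroup B).Normal)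
    (hQnonab : ¬ IsMulCommutative (Q : Subgroup A))
    (hPnonab : ¬ IsMulCommutative (P : Subgroup B))
    -- `ZQ = Z(Q)` has order `q` and `ZP = Z(P)` has order `p`
    (ZQ : Subgroup A)
    (hZQ : ZQ = (Q : Subgroup A) ⊓ Subgroup.centralizer ((Q : Subgroup A) : Set A))
    (hZQcard : Nat.card ZQ = q)
    (ZP : Subgroup B)
    (hZP : ZP = (P : Subgroup B) ⊓ Subgroup.centralizer ((P : Subgroup B) : Set B))
    (hZPcard : Nat.card ZP = p)
    -- `C` is cyclic of order `p * q`, embedded in `A` and `B`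
    (hC : IsCyclic C) (hCcard : Nat.card C = p * q)
    (ιA : C →* A) (ιB : C →* B)
    (hιA : Function.Injective ιA) (hιB : Function.Injective ιB)
    -- `ιA(C)` is self-normalizing in `A`, contains `Z(Q)` as its unique subgroup of
    -- order `q`, and `A = Q * ιA(C)`
    (hCA_selfnorm : Subgroup.normalizer (ιA.range : Set A) = ιA.range)
    (hZQle : ZQ ≤ ιA.range)
    (hZQuniq : ∀ D : Subgroup A, D ≤ ιA.range → Nat.card D = q → D = ZQ)
    (hAfact : ∀ a : A, ∃ u ∈ (Q : Subgroup A), ∃ c : C, a = u * ιA c)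
    -- `ιB(C)` is self-normalizing in `B`, contains `Z(P)` as its unique subgroup of
    -- order `p`, and `B = P * ιB(C)`
    (hCB_selfnorm : Subgroup.normalizer (ιB.range : Set B) = ιB.range)
    (hZPle : ZP ≤ ιB.range)
    (hZPuniq : ∀ D : Subgroup B, D ≤ ιB.range → Nat.card D = p → D = ZP)
    (hBfact : ∀ b : B, ∃ u ∈ (P : Subgroup B), ∃ c : C, b = u * ιB c)
    -- `SpA` is the unique subgroup of order `p` of `ιA(C)`, and
    -- `SqB` is the unique subgroup of order `q` of `ιB(C)`
    (SpA : Subgroup A) (hSpA_le : SpA ≤ ιA.range) (hSpA_card : Nat.card SpA = p)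
    (hSpA_uniq : ∀ D : Subgroup A, D ≤ ιA.range → Nat.card D = p → D = SpA)
    (SqB : Subgroup B) (hSqB_le : SqB ≤ ιB.range) (hSqB_card : Nat.card SqB = q)
    (hSqB_uniq : ∀ D : Subgroup B, D ≤ ιB.range → Nat.card D = q → D = SqB)
    -- the normalizer conditions `N_B(S_q) = ιB(C)` and `N_A(S_p) = ιA(C)`
    (hSqB_norm : Subgroup.normalizer (SqB : Set B) = ιB.range)
    (hSpA_norm : Subgroup.normalizer (SpA : Set A) = ιA.range)
    -- the commutator conditions `[Q, S_p] = Q` and `[P, S_q] = P`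
    (hQcommutator : ⁅(Q : Subgroup A), SpA⁆ = (Q : Subgroup A))
    (hPcommutator : ⁅(P : Subgroup B), SqB⁆ = (P : Subgroup B))
    :
    ∀ x : Amalgam ιA ιB, x ≠ 1 → {y : Amalgam ιA ιB | IsConj x y}.Infinite := by
  exact amalgam_aux_main p q hp hq hpodd hqodd hpq Q P hQnormal hPnormal hQnonab hPnonab ZQ hZQ hZQcard ZP hZP hZPcard hC hCcard ιA ιB hιA hιB hCA_selfnorm hZQle hZQuniq hAfact hCB_selfnorm hZPle hZPuniq hBfact SpA hSpA_le hSpA_card hSpA_uniq SqB hSqB_le hSqB_card hSqB_uniq hSqB_norm hSpA_norm hQcommutator hPcommutator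
end

section
/- Let G be a group in which every nonidentity element has an infinite conjugacy class, and let F be a field. Then the center of the group algebra FG is one-dimensional over F; that is, the center of FG consists exactly of the scalar multiples of the identity element. -/
/-- Let `G` be a group in which every nonidentity element has an infinite conjugacy
class, and let `F` be a field. Then the center of the group algebra `FG` is
one-dimensional over `F`: it consists exactly of the scalar multiples of the identity. -/
theorem center_monoidAlgebra_eq_scalars_of_infinite_conjClasses
    {G : Type} [Group G] (F : Type) [Field F]
    (hG : ∀ g : G, g ≠ 1 → {h : G | IsConj g h}.Infinite) :
    ∀ z : MonoidAlgebra F G,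
      z ∈ Subalgebra.center F (MonoidAlgebra F G) ↔ ∃ c : F, z = c • (1 : MonoidAlgebra F G) := by
  intro z
  constructor
  · intro hz
    have key : ∀ g h : G, z.coeff (h * g * h⁻¹) = z.coeff g := by
      intro g h
      have hcomm := (Subalgebra.mem_center_iff.mp hz) (MonoidAlgebra.of F G h)
      have h1 : (MonoidAlgebra.of F G h * z).coeff (h * g) = (z * MonoidAlgebra.of F G h).coeff (h * g) := by
        rw [hcomm]
      simpa [MonoidAlgebra.of_apply, MonoidAlgebra.coeff_single_mul_apply,
        MonoidAlgebra.coeff_mul_single_apply, mul_assoc] using h1.symm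
    have hsupp : z.coeff.support ⊆ {1} := by
      intro g hg
      simp only [Finset.mem_singleton]
      by_contra hne
      have hinf := hG g hne
      have hsub : {h : G | IsConj g h} ⊆ ↑z.coeff.support := by
        rintro x ⟨c, hc⟩
        have hx : x = (c : G) * g * (c : G)⁻¹ :=
          (mul_inv_eq_iff_eq_mul.mpr hc.eq).symm
        have hzx : z.coeff x = z.coeff g := by rw [hx]; exact key g c
        simp only [Finsupp.mem_support_iff] at hg ⊢
        simpa [hzx] using hg
      exact hinf (z.coeff.support.finite_toSet.subset hsub)
    refine ⟨z.coeff 1, ?_⟩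
    rw [MonoidAlgebra.one_def, MonoidAlgebra.smul_single, smul_eq_mul, mul_one]
    exact MonoidAlgebra.coeff_injective (Finsupp.support_subset_singleton.mp hsupp)
  · rintro ⟨c, rfl⟩
    exact Subalgebra.smul_mem _ (Subalgebra.one_mem _) c
end

section
/- Let q be a prime, Q a finite q-group whose center Z(Q) has order q, let p be a prime different from q, and let α be an automorphism of Q of order p that acts trivially on Z(Q) and satisfies C_Q(α) = Z(Q) (the fixed-point subgroup of α in Q is exactly Z(Q)). Form the semidirect product A = Q ⋊ ⟨α⟩. Then the subgroup of A generated by Z(Q) and α is cyclic of order p·q and is self-normalizing in A (hence is a Carter subgroup of A). -/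
/-- Let `q` be a prime, `Q` a finite `q`-group whose center has order `q`, `p` a prime
different from `q`, and `α` an automorphism of `Q` of order `p` acting trivially on
`Z(Q)` with fixed-point subgroup exactly `Z(Q)`. In the semidirect product
`A = Q ⋊ ⟨α⟩`, the subgroup generated by `Z(Q)` and `α` is cyclic of order `p * q`
and self-normalizing in `A` (hence a Carter subgroup of `A`). -/
theorem carter_subgroup_of_extraspecial_semidirect
    (q p : ℕ) (hq : q.Prime) (hp : p.Prime) (hpq : p ≠ q)
    (Q : Type) [Group Q] [Finite Q] (hQ : IsPGroup q Q)
    (hZQ : Nat.card (Subgroup.center Q) = q)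
    (α : MulAut Q) (hα : orderOf α = p)
    (hαZ : ∀ z ∈ Subgroup.center Q, α z = z)
    (hαfix : ∀ u : Q, α u = u ↔ u ∈ Subgroup.center Q)
    (H : Subgroup (Q ⋊[(Subgroup.zpowers α).subtype] ↥(Subgroup.zpowers α)))
    (hH : H = Subgroup.closure
      ({x | ∃ z ∈ Subgroup.center Q, x = SemidirectProduct.inl z} ∪
        {SemidirectProduct.inr ⟨α, Subgroup.mem_zpowers α⟩})) :
    IsCyclic H ∧ Nat.card H = p * q ∧ Subgroup.normalizer (H : Set _) = H := by
  subst hH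
  haveI : Fact q.Prime := ⟨hq⟩
  have hcyc : IsCyclic (Subgroup.center Q) := isCyclic_of_prime_card hZQ
  obtain ⟨z₀, hz₀⟩ := hcyc.exists_generator
  have htop : Subgroup.zpowers z₀ = ⊤ := by
    rw [eq_top_iff]; intro x _; exact hz₀ x
  have hz₀ord : orderOf z₀ = q := by
    rw [← Nat.card_zpowers, htop, Subgroup.card_top, hZQ]
  set G := ↥(Subgroup.zpowers α) with hG
  set a : G := ⟨α, Subgroup.mem_zpowers α⟩ with ha
  have haord : orderOf a = p := by rw [Subgroup.orderOf_mk, hα]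
  set A := Q ⋊[(Subgroup.zpowers α).subtype] G with hA
  haveI : Finite (MulAut Q) := Finite.of_injective (fun f => (f : Q → Q))
    (fun f g h => DFunLike.coe_injective h)
  haveI : Finite A := Finite.of_injective (fun x : A => (x.left, x.right))
    (by intro x y h; exact SemidirectProduct.ext (congrArg Prod.fst h) (congrArg Prod.snd h))
  -- every element of zpowers α fixes the center pointwise
  have hfix : ∀ (b : G) (z : Q), z ∈ Subgroup.center Q → (b : MulAut Q) z = z := by
    intro b
    obtain ⟨k, hk⟩ := b.2
    have hnat : ∀ (m : ℕ) (z : Q), z ∈ Subgroup.center Q → (α ^ m) z = z := by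
      intro m
      induction m with
      | zero => intro z _; rfl
      | succ m ih =>
        intro z hz
        rw [pow_succ, MulAut.mul_apply, hαZ z hz, ih z hz]
    intro z hz
    rw [← hk]
    rcases k with m | m
    · exact hnat m z hz
    · show ((α ^ (m + 1) : MulAut Q)⁻¹ : MulAut Q) z = z
      conv_lhs => rw [← hnat (m + 1) z hz]
      simp
  set g : A := ⟨(z₀ : Q), a⟩ with hg
  have hgpow : ∀ n : ℕ, g ^ n = ⟨(z₀ : Q) ^ n, a ^ n⟩ := by
    intro n
    induction n with
    | zero =>
      rw [pow_zero]
      exact SemidirectProduct.ext (by simp) (by simp)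
    | succ n ih =>
      rw [pow_succ, ih, SemidirectProduct.mul_def]
      refine SemidirectProduct.ext ?_ (by show a ^ n * a = a ^ (n + 1); rw [pow_succ])
      show (z₀ : Q) ^ n * ((a ^ n : G) : MulAut Q) (z₀ : Q) = (z₀ : Q) ^ (n + 1)
      rw [hfix (a ^ n) (z₀ : Q) z₀.2, pow_succ]
  have hcop : Nat.Coprime q p := (Nat.coprime_primes hq hp).mpr (Ne.symm hpq)
  have hz₀Q : orderOf ((z₀ : Q)) = q := by rw [Subgroup.orderOf_coe, hz₀ord]
  have hga : g = SemidirectProduct.inl (z₀ : Q) * SemidirectProduct.inr a := by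
    rw [SemidirectProduct.mul_def]
    exact SemidirectProduct.ext (by simp [hg]) (by simp [hg])
  have hcomm : Commute (SemidirectProduct.inl (z₀ : Q) : A) (SemidirectProduct.inr a) := by
    show _ * _ = _ * _
    rw [SemidirectProduct.mul_def, SemidirectProduct.mul_def]
    refine SemidirectProduct.ext ?_ (by simp [mul_comm])
    show (z₀ : Q) * _ = 1 * (((Subgroup.zpowers α).subtype a) (z₀ : Q))
    rw [show ((Subgroup.zpowers α).subtype a) (z₀ : Q) = (z₀ : Q) from hαZ _ z₀.2]
    simp
  have hords : orderOf (SemidirectProduct.inl (z₀ : Q) : A) = q ∧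
      orderOf (SemidirectProduct.inr a : A) = p := by
    constructor
    · rw [orderOf_injective _ SemidirectProduct.inl_injective, hz₀Q]
    · rw [orderOf_injective _ SemidirectProduct.inr_injective, haord]
  have hgord : orderOf g = q * p := by
    rw [hga, Commute.orderOf_mul_eq_mul_orderOf_of_coprime hcomm
      (by rw [hords.1, hords.2]; exact hcop), hords.1, hords.2]
  set S : Set A := ({x | ∃ z ∈ Subgroup.center Q, x = SemidirectProduct.inl z} ∪
        {SemidirectProduct.inr ⟨α, Subgroup.mem_zpowers α⟩}) with hS
  have hHg : Subgroup.closure S = Subgroup.zpowers g := by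
    apply le_antisymm
    · rw [Subgroup.closure_le]
      rintro x (⟨z, hz, rfl⟩ | rfl)
      · have hzz : (⟨z, hz⟩ : Subgroup.center Q) ∈ Submonoid.powers z₀ :=
          mem_powers_iff_mem_zpowers.mpr (hz₀ _)
        obtain ⟨m, hm⟩ := (Submonoid.mem_powers_iff _ _).mp hzz
        obtain ⟨n, hn1, hn2⟩ := Nat.chineseRemainder hcop m 0
        have hgn : g ^ n = SemidirectProduct.inl z := by
          rw [hgpow]
          refine SemidirectProduct.ext ?_ ?_
          · show (z₀ : Q) ^ n = z
            rw [pow_eq_pow_iff_modEq.mpr (hz₀Q ▸ hn1)]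
            simpa using congrArg Subtype.val hm
          · show a ^ n = 1
            exact orderOf_dvd_iff_pow_eq_one.mp
              (haord ▸ ((Nat.modEq_zero_iff_dvd).mp hn2))
        rw [← hgn]
        exact Subgroup.pow_mem _ (Subgroup.mem_zpowers g) n
      · obtain ⟨n, hn1, hn2⟩ := Nat.chineseRemainder hcop 0 1
        have hgn : g ^ n = SemidirectProduct.inr a := by
          rw [hgpow]
          refine SemidirectProduct.ext ?_ ?_
          · show (z₀ : Q) ^ n = 1
            exact orderOf_dvd_iff_pow_eq_one.mp
              (hz₀Q ▸ ((Nat.modEq_zero_iff_dvd).mp hn1))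
          · show a ^ n = a
            have h := pow_eq_pow_iff_modEq.mpr (haord ▸ hn2)
            rwa [pow_one] at h
        rw [← hgn]
        exact Subgroup.pow_mem _ (Subgroup.mem_zpowers g) n
    · rw [Subgroup.zpowers_le, hga]
      exact mul_mem (Subgroup.subset_closure (Or.inl ⟨z₀, z₀.2, rfl⟩))
        (Subgroup.subset_closure (Or.inr rfl))
  rw [hHg]
  refine ⟨?_, ?_, ?_⟩
  · exact ⟨⟨⟨g, Subgroup.mem_zpowers g⟩, by
      rintro ⟨x, hx⟩
      obtain ⟨k, rfl⟩ := hx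
      exact ⟨k, Subtype.ext (by rw [SubgroupClass.coe_zpow])⟩⟩⟩
  · rw [Nat.card_zpowers, hgord, mul_comm]
  · apply le_antisymm
    · intro x hx
      obtain ⟨u, b⟩ := x
      obtain ⟨k, hk⟩ := b.2
      have hb : b = a ^ k := Subtype.ext (by rw [SubgroupClass.coe_zpow]; exact hk.symm)
      subst hb
      have hmem : (⟨u, a ^ k⟩ : A) * g * (⟨u, a ^ k⟩ : A)⁻¹ ∈ Subgroup.zpowers g :=
        (Subgroup.mem_normalizer_iff.mp hx g).mp (Subgroup.mem_zpowers g)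
      have hcak : ((a ^ k : G) : MulAut Q) = α ^ k := by rw [SubgroupClass.coe_zpow]
      have hconj : (⟨u, a ^ k⟩ : A) * g * (⟨u, a ^ k⟩ : A)⁻¹ =
          ⟨u * (z₀ : Q) * α u⁻¹, a⟩ := by
        have hcommα : α ^ k * α * (α ^ k)⁻¹ = α := by
          rw [mul_inv_eq_iff_eq_mul]
          exact ((Commute.refl α).zpow_left k).eq
        refine SemidirectProduct.ext ?_ ?_
        · show (u * ((a ^ k : G) : MulAut Q) (z₀ : Q)) *
              ((a ^ k * a : G) : MulAut Q) ((((a ^ k : G)⁻¹ : G) : MulAut Q) u⁻¹) =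
              u * (z₀ : Q) * α u⁻¹
          rw [hfix (a ^ k) (z₀ : Q) z₀.2]
          congr 1
          have e1 : ((a ^ k * a : G) : MulAut Q) = α ^ k * α := by
            rw [Subgroup.coe_mul, hcak]
          have e2 : (((a ^ k : G)⁻¹ : G) : MulAut Q) = (α ^ k)⁻¹ := by
            rw [Subgroup.coe_inv, hcak]
          rw [e1, e2]
          calc (α ^ k * α) ((α ^ k)⁻¹ u⁻¹) = ((α ^ k * α) * (α ^ k)⁻¹) u⁻¹ := rfl
            _ = α u⁻¹ := by rw [hcommα]
        · show a ^ k * a * (a ^ k)⁻¹ = a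
          rw [mul_inv_eq_iff_eq_mul]
          exact ((Commute.refl a).zpow_left k).eq
      rw [hconj] at hmem
      obtain ⟨n, hn⟩ := (Submonoid.mem_powers_iff _ _).mp
        (mem_powers_iff_mem_zpowers.mpr hmem)
      rw [hgpow] at hn
      have hleft : (z₀ : Q) ^ n = u * (z₀ : Q) * α u⁻¹ :=
        congrArg SemidirectProduct.left hn
      set zc : Q := u * α u⁻¹ with hzc
      have h1 : u * (z₀ : Q) * α u⁻¹ = zc * (z₀ : Q) := by
        rw [hzc, mul_assoc u, ← Subgroup.mem_center_iff.mp z₀.2 (α u⁻¹), ← mul_assoc]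
      have hzcN : zc ∈ Subgroup.center Q := by
        have h2 : zc = (z₀ : Q) ^ n * ((z₀ : Q))⁻¹ := by
          rw [hleft, h1, mul_inv_cancel_right]
        rw [h2]
        exact mul_mem (Subgroup.pow_mem _ z₀.2 n) (inv_mem z₀.2)
      have hαu : α u = u * zc⁻¹ := by
        have h3 : zc = u * (α u)⁻¹ := by rw [hzc, map_inv]
        have h4 : α u = zc⁻¹ * u := by rw [h3]; group
        rw [h4]
        exact (Subgroup.mem_center_iff.mp (inv_mem hzcN) u).symm
      have hpowu : ∀ m : ℕ, (α ^ m) u = u * (zc⁻¹) ^ m := by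
        intro m
        induction m with
        | zero => simp
        | succ m ih =>
          rw [pow_succ', MulAut.mul_apply, ih, map_mul, hαu,
            hαZ _ (Subgroup.pow_mem _ (inv_mem hzcN) m), mul_assoc, ← pow_succ']
      have hzc1 : zc = 1 := by
        have hαp : (α ^ p) u = u := by
          rw [← hα, pow_orderOf_eq_one]; rfl
        rw [hpowu p] at hαp
        have hzp : zc ^ p = 1 := by
          have h5 : (zc⁻¹) ^ p = 1 := mul_eq_left.mp hαp
          rw [← inv_inv (zc ^ p), ← inv_pow, h5, inv_one]
        obtain ⟨j, hj⟩ := hQ zc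
        have hd1 : orderOf zc ∣ p := orderOf_dvd_iff_pow_eq_one.mpr hzp
        have hd2 : orderOf zc ∣ q ^ j := orderOf_dvd_iff_pow_eq_one.mpr hj
        have hco : Nat.Coprime p (q ^ j) := Nat.Coprime.pow_right j hcop.symm
        rw [← orderOf_eq_one_iff]
        exact Nat.dvd_one.mp (hco ▸ Nat.dvd_gcd hd1 hd2)
      have huN : u ∈ Subgroup.center Q := (hαfix u).mp (by rw [hαu, hzc1]; simp)
      rw [← hHg]
      have hdecomp : (⟨u, a ^ k⟩ : A) =
          SemidirectProduct.inl u * SemidirectProduct.inr (a ^ k) := by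
        rw [SemidirectProduct.mul_def]
        exact SemidirectProduct.ext
          (by show u = u * ((Subgroup.zpowers α).subtype 1) 1; simp)
          (by show a ^ k = 1 * a ^ k; rw [one_mul])
      rw [hdecomp, map_zpow]
      exact mul_mem (Subgroup.subset_closure (Or.inl ⟨u, huN, rfl⟩))
        ((Subgroup.closure S).zpow_mem (Subgroup.subset_closure (Or.inr rfl)) k)
    · exact Subgroup.le_normalizer
end
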